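/- arXiv:1512.06193 — 7 statements merged into one kernel-verified Lean document; each statement's English description precedes it below -/
import Mathlib

section
/- There are exactly 2^n equivalence classes of Ulrich partitions of type (1,n,1), for any n ≥ 1. Concretely, equivalence classes of Ulrich partitions of type (1,n,1) are in bijection with subsets of {1,...,n}. -/
/-- A list of integers is strictly decreasing. -/
def StrictDec (l : List ℤ) : Prop := l.Chain' (· > ·)

/-- Time evolution of a three-block partition `(A | B | C)`: subtract `t` from each entry of
the first block, keep the middle block fixed, add `t` to each entry of the last block. -/
def evolve3 (A B C : List ℤ) (t : ℤ) : List ℤ := A.map (· - t) ++ B ++ C.map (· + t)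

/-- A list has exactly one repeated entry: the number of distinct values is one less
than the length. -/
def OneRepeat (l : List ℤ) : Prop := l.toFinset.card + 1 = l.length

/-- The dimension of a three-block partition of type `(α, β, γ)` is `αβ + αγ + βγ`. -/
def dim3 (A B C : List ℤ) : ℕ := A.length * B.length + A.length * C.length + B.length * C.length

/-- A three-block partition is Ulrich: it is a strictly decreasing sequence (with nonempty
outer blocks), and for every time `t ∈ {1, ..., N}` (N the dimension) the evolved list `P(t)`
has exactly one repeated entry. -/
def IsUlrich3 (A B C : List ℤ) : Prop :=
  A ≠ [] ∧ C ≠ [] ∧ StrictDec (evolve3 A B C 0) ∧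
    ∀ t : ℕ, 1 ≤ t → t ≤ dim3 A B C → OneRepeat (evolve3 A B C (t : ℤ))
/-- An Ulrich partition of type `(1, n, 1)`. -/
structure UlrichP1 (n : ℕ) where
  a : ℤ
  b : List ℤ
  c : ℤ
  len : b.length = n
  ulrich : IsUlrich3 [a] b [c]

/-- Two Ulrich partitions of type `(1,n,1)` are equivalent if they differ by adding a common
constant to all entries. -/
def shiftRel (n : ℕ) (P Q : UlrichP1 n) : Prop :=
  ∃ k : ℤ, Q.a = P.a + k ∧ Q.b = P.b.map (· + k) ∧ Q.c = P.c + k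


namespace UlrichAux

/-- exactly one of three propositions holds -/
def X1 (p q r : Prop) : Prop := (p ∧ ¬q ∧ ¬r) ∨ (¬p ∧ q ∧ ¬r) ∨ (¬p ∧ ¬q ∧ r)

lemma X1_congr {p q r p' q' r' : Prop} (hp : p ↔ p') (hq : q ↔ q') (hr : r ↔ r') :
    X1 p q r ↔ X1 p' q' r' := by unfold X1; tauto

lemma card_insert_insert (Bf : Finset ℤ) (x y : ℤ) :
    (insert x (insert y Bf)).card = Bf.card + 1 ↔ X1 (x ∈ Bf) (y ∈ Bf) (x = y) := by
  by_cases hxy : x = y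
  · subst hxy
    by_cases hx : x ∈ Bf
    · rw [Finset.insert_idem, Finset.insert_eq_of_mem hx]
      simp [X1, hx]
    · rw [Finset.insert_idem, Finset.card_insert_of_notMem hx]
      simp [X1, hx]
  · by_cases hx : x ∈ Bf <;> by_cases hy : y ∈ Bf
    · rw [Finset.insert_eq_of_mem hy, Finset.insert_eq_of_mem hx]
      simp [X1, hx, hy, hxy]
      
    · rw [Finset.insert_eq_of_mem (Finset.mem_insert_of_mem hx),
        Finset.card_insert_of_notMem hy]
      simp [X1, hx, hy, hxy]
    · rw [Finset.insert_eq_of_mem hy,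
        Finset.card_insert_of_notMem hx]
      simp [X1, hx, hy, hxy]
    · rw [Finset.card_insert_of_notMem (by simp [hx, hxy]),
        Finset.card_insert_of_notMem hy]
      simp [X1, hx, hy, hxy]
      

/-- A transversal set of times. -/
def TransT (n : ℕ) (T : Finset ℤ) : Prop :=
  T ⊆ Finset.Icc 1 (2*(n:ℤ)+1) ∧ ((n:ℤ)+1) ∉ T ∧
    ∀ k : ℤ, 1 ≤ k → k ≤ (n:ℤ) → Xor' (k ∈ T) ((2*(n:ℤ)+2 - k) ∈ T)

lemma TransT.X1 {n : ℕ} {T : Finset ℤ} (h : TransT n T) :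
    ∀ t : ℤ, 1 ≤ t → t ≤ 2*(n:ℤ)+1 →
      X1 (t ∈ T) ((2*(n:ℤ)+2 - t) ∈ T) (t = (n:ℤ)+1) := by
  obtain ⟨hsub, hmid, hxor⟩ := h
  intro t h1 h2
  rcases lt_trichotomy t ((n:ℤ)+1) with h | h | h
  · have hx := hxor t h1 (by omega)
    have hne : ¬ (t = (n:ℤ)+1) := by omega
    rcases hx with ⟨hp, hq⟩ | ⟨hq, hp⟩
    · exact Or.inl ⟨hp, hq, hne⟩
    · exact Or.inr (Or.inl ⟨hp, hq, hne⟩)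
  · subst h
    have h2 : (2*(n:ℤ)+2 - ((n:ℤ)+1)) = (n:ℤ)+1 := by ring
    rw [h2]
    exact Or.inr (Or.inr ⟨hmid, hmid, rfl⟩)
  · have hx := hxor (2*(n:ℤ)+2 - t) (by omega) (by omega)
    have h2 : (2*(n:ℤ)+2 - (2*(n:ℤ)+2 - t)) = t := by ring
    rw [h2] at hx
    have hne : ¬ (t = (n:ℤ)+1) := by omega
    rcases hx with ⟨hp, hq⟩ | ⟨hq, hp⟩
    · exact Or.inr (Or.inl ⟨hq, hp, hne⟩)
    · exact Or.inl ⟨hq, hp, hne⟩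

lemma TransT.ext {n : ℕ} {T T' : Finset ℤ} (h : TransT n T) (h' : TransT n T')
    (hk : ∀ k : ℤ, 1 ≤ k → k ≤ (n:ℤ) → (k ∈ T ↔ k ∈ T')) : T = T' := by
  have main : ∀ (U U' : Finset ℤ), TransT n U → TransT n U' →
      (∀ k : ℤ, 1 ≤ k → k ≤ (n:ℤ) → (k ∈ U ↔ k ∈ U')) → U ⊆ U' := by
    intro U U' hU hU' hkk t ht
    obtain ⟨hsub, hmid, hxor⟩ := hU
    obtain ⟨hsub', hmid', hxor'⟩ := hU'
    have hI := hsub ht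
    rw [Finset.mem_Icc] at hI
    rcases lt_trichotomy t ((n:ℤ)+1) with hc | hc | hc
    · exact (hkk t hI.1 (by omega)).mp ht
    · exact absurd (hc ▸ ht) hmid
    · have h2 : (2*(n:ℤ)+2 - (2*(n:ℤ)+2 - t)) = t := by ring
      have hx := hxor (2*(n:ℤ)+2 - t) (by omega) (by omega)
      rw [h2] at hx
      have hknot : (2*(n:ℤ)+2 - t) ∉ U := by
        rcases hx with ⟨hp, hq⟩ | ⟨hq, hp⟩
        · exact absurd ht hq
        · exact hp
      have hknot' : (2*(n:ℤ)+2 - t) ∉ U' := by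
        rw [← hkk _ (by omega) (by omega)]; exact hknot
      have hx' := hxor' (2*(n:ℤ)+2 - t) (by omega) (by omega)
      rw [h2] at hx'
      rcases hx' with ⟨hp, hq⟩ | ⟨hq, hp⟩
      · exact absurd hp hknot'
      · exact hq
  exact Finset.Subset.antisymm (main T T' h h' hk)
    (main T' T h' h (fun k a b => (hk k a b).symm))

lemma evolve3_single (a c t : ℤ) (b : List ℤ) :
    evolve3 [a] b [c] t = (a - t) :: (b ++ [c + t]) := by
  simp [evolve3]

lemma toFinset_evolve (a c t : ℤ) (b : List ℤ) :
    (evolve3 [a] b [c] t).toFinset = insert (a - t) (insert (c + t) b.toFinset) := by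
  rw [evolve3_single]
  simp only [List.toFinset_cons, List.toFinset_append, List.toFinset_cons, List.toFinset_nil,
    LawfulSingleton.insert_empty_eq]
  congr 1
  rw [Finset.union_comm, ← Finset.insert_eq]

lemma dim3_single (a c : ℤ) (b : List ℤ) : dim3 [a] b [c] = 2 * b.length + 1 := by
  simp [dim3]; ring

lemma oneRepeat_iff {n : ℕ} {a c : ℤ} {b : List ℤ} (hlen : b.length = n) (hnd : b.Nodup)
    (t : ℤ) : OneRepeat (evolve3 [a] b [c] t) ↔
      X1 (a - t ∈ b.toFinset) (c + t ∈ b.toFinset) (a - t = c + t) := by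
  rw [OneRepeat, toFinset_evolve, evolve3_single]
  have hc : b.toFinset.card = n := by rw [List.toFinset_card_of_nodup hnd, hlen]
  have hl : ((a - t) :: (b ++ [c + t])).length = n + 2 := by simp [hlen]
  rw [hl, ← hc, ← card_insert_insert]
  omega

lemma chain'_parts {a c : ℤ} {b : List ℤ} (h : StrictDec (evolve3 [a] b [c] 0)) :
    b.Chain' (· > ·) ∧ (∀ x ∈ b, x < a ∧ c < x) ∧ c < a := by
  have h0 : evolve3 [a] b [c] 0 = a :: (b ++ [c]) := by
    rw [evolve3_single]; ring_nf
  rw [StrictDec, h0] at h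
  have hpw : (a :: (b ++ [c])).Pairwise (· > ·) := List.isChain_iff_pairwise.mp h
  rw [List.pairwise_cons] at hpw
  obtain ⟨ha, hpw⟩ := hpw
  rw [List.pairwise_append] at hpw
  obtain ⟨hb, _, hbc⟩ := hpw
  refine ⟨List.isChain_iff_pairwise.mpr hb, fun x hx => ⟨ha x (by simp [hx]),
    by simpa using hbc x hx c (by simp)⟩, by simpa using ha c (by simp)⟩

lemma chain'_sandwich {a c : ℤ} {l : List ℤ} (hl : l.Chain' (· > ·))
    (h : ∀ x ∈ l, x < a ∧ c < x) (hac : c < a) : StrictDec (evolve3 [a] l [c] 0) := by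
  have h0 : evolve3 [a] l [c] 0 = a :: (l ++ [c]) := by
    rw [evolve3_single]; ring_nf
  rw [StrictDec, h0]
  show List.IsChain _ (a :: (l ++ [c]))
  rw [List.isChain_cons]
  constructor
  · intro y hy
    have hy' := List.mem_of_mem_head? hy
    rcases List.mem_append.mp hy' with h1 | h1
    · exact (h y h1).1
    · simp only [List.mem_singleton] at h1; omega
  · rw [List.isChain_append]
    refine ⟨hl, List.isChain_singleton c, ?_⟩
    intro x hx y hy
    simp only [List.head?_cons, Option.mem_some_iff] at hy
    subst hy
    exact (h x (List.mem_of_mem_getLast? hx)).2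

/-- Forward classification: an Ulrich partition of type (1,n,1) has `a - c = 2n+2` and
its set of collision times with `a` is a transversal. -/
lemma forward {n : ℕ} {a c : ℤ} {b : List ℤ} (hlen : b.length = n)
    (hU : IsUlrich3 [a] b [c]) :
    a - c = 2*(n:ℤ)+2 ∧ TransT n (b.toFinset.image (fun x => a - x)) := by
  obtain ⟨-, -, hsd, hrep⟩ := hU
  obtain ⟨hchain, hbd, hac⟩ := chain'_parts hsd
  have hnd : b.Nodup := by
    have := List.isChain_iff_pairwise.mp hchain
    exact this.imp (fun h => ne_of_gt h)
  set Bf := b.toFinset with hBf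
  have hmemBf : ∀ x, x ∈ Bf ↔ x ∈ b := fun x => List.mem_toFinset
  have hcard : Bf.card = n := by rw [hBf, List.toFinset_card_of_nodup hnd, hlen]
  -- the exactly-one property at each time
  have hX : ∀ t : ℤ, 1 ≤ t → t ≤ 2*(n:ℤ)+1 →
      X1 (a - t ∈ Bf) (c + t ∈ Bf) (a - t = c + t) := by
    intro t h1 h2
    have ht : ((t.toNat : ℤ)) = t := Int.toNat_of_nonneg (by omega)
    have := hrep t.toNat (by omega) (by rw [dim3_single, hlen]; omega)
    rw [ht] at this
    exact (oneRepeat_iff hlen hnd t).mp this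
  set T := Bf.image (fun x => a - x) with hT
  set Sf := Bf.image (fun x => x - c) with hSf
  have hmemT : ∀ t : ℤ, t ∈ T ↔ a - t ∈ Bf := by
    intro t
    rw [hT, Finset.mem_image]
    constructor
    · rintro ⟨x, hx, rfl⟩
      have : a - (a - x) = x := by ring
      rw [this]; exact hx
    · intro hx; exact ⟨a - t, hx, by ring⟩
  have hmemS : ∀ t : ℤ, t ∈ Sf ↔ c + t ∈ Bf := by
    intro t
    rw [hSf, Finset.mem_image]
    constructor
    · rintro ⟨x, hx, rfl⟩
      have : c + (x - c) = x := by ring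
      rw [this]; exact hx
    · intro hx; exact ⟨c + t, hx, by ring⟩
  set I : Finset ℤ := Finset.Icc 1 (2*(n:ℤ)+1) with hI
  have hIcard : I.card = 2*n+1 := by
    rw [hI, Int.card_Icc]; omega
  set T' := I.filter (fun t => t ∈ T) with hT'
  set S' := I.filter (fun t => t ∈ Sf) with hS'
  set M := I.filter (fun t => a - t = c + t) with hM
  have hcover : I = T' ∪ S' ∪ M := by
    ext t
    simp only [hT', hS', hM, Finset.mem_union, Finset.mem_filter]
    constructor
    · intro ht
      rw [hI, Finset.mem_Icc] at ht
      rcases hX t ht.1 ht.2 with ⟨h1, -, -⟩ | ⟨-, h1, -⟩ | ⟨-, -, h1⟩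
      · exact Or.inl (Or.inl ⟨by rwa [hI, Finset.mem_Icc], (hmemT t).mpr h1⟩)
      · exact Or.inl (Or.inr ⟨by rwa [hI, Finset.mem_Icc], (hmemS t).mpr h1⟩)
      · exact Or.inr ⟨by rwa [hI, Finset.mem_Icc], h1⟩
    · rintro ((⟨h, -⟩ | ⟨h, -⟩) | ⟨h, -⟩) <;> exact h
  have hd1 : Disjoint T' S' := by
    rw [Finset.disjoint_left]
    rintro t ht hts
    rw [hT', Finset.mem_filter] at ht
    rw [hS', Finset.mem_filter] at hts
    have hmem := ht.1
    rw [hI, Finset.mem_Icc] at hmem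
    rcases hX t hmem.1 hmem.2 with ⟨-, h2, -⟩ | ⟨h2, -, -⟩ | ⟨h2, -, -⟩
    · exact h2 ((hmemS t).mp hts.2)
    · exact h2 ((hmemT t).mp ht.2)
    · exact h2 ((hmemT t).mp ht.2)
  have hd2 : Disjoint (T' ∪ S') M := by
    rw [Finset.disjoint_left]
    rintro t ht htm
    rw [hM, Finset.mem_filter] at htm
    have hmem := htm.1
    rw [hI, Finset.mem_Icc] at hmem
    rcases hX t hmem.1 hmem.2 with ⟨-, -, h2⟩ | ⟨-, -, h2⟩ | ⟨h2, h3, -⟩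
    · exact h2 htm.2
    · exact h2 htm.2
    · rcases Finset.mem_union.mp ht with h | h
      · exact h2 ((hmemT t).mp (Finset.mem_filter.mp h).2)
      · exact h3 ((hmemS t).mp (Finset.mem_filter.mp h).2)
  have hcards : T'.card + S'.card + M.card = 2*n+1 := by
    rw [← Finset.card_union_of_disjoint hd1, ← Finset.card_union_of_disjoint hd2, ← hcover,
      hIcard]
  have hT'le : T'.card ≤ n := by
    calc T'.card ≤ T.card := Finset.card_le_card (fun t ht => (Finset.mem_filter.mp ht).2)
    _ ≤ Bf.card := Finset.card_image_le
    _ = n := hcard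
  have hS'le : S'.card ≤ n := by
    calc S'.card ≤ Sf.card := Finset.card_le_card (fun t ht => (Finset.mem_filter.mp ht).2)
    _ ≤ Bf.card := Finset.card_image_le
    _ = n := hcard
  have hMle : M.card ≤ 1 := by
    rw [Finset.card_le_one]
    intro s hs t ht
    rw [hM, Finset.mem_filter] at hs ht
    omega
  have hTn : T'.card = n := by omega
  have hTsub : T ⊆ I := by
    have : T' = T := by
      apply Finset.eq_of_subset_of_card_le (fun t ht => (Finset.mem_filter.mp ht).2)
      rw [hTn]
      calc T.card ≤ Bf.card := Finset.card_image_le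
      _ = n := hcard
    rw [← this]
    exact fun t ht => (Finset.mem_filter.mp ht).1
  have hSn : S'.card = n := by omega
  have hSsub : Sf ⊆ I := by
    have : S' = Sf := by
      apply Finset.eq_of_subset_of_card_le (fun t ht => (Finset.mem_filter.mp ht).2)
      rw [hSn]
      calc Sf.card ≤ Bf.card := Finset.card_image_le
      _ = n := hcard
    rw [← this]
    exact fun t ht => (Finset.mem_filter.mp ht).1
  -- key: reflection stays in I
  have hkey : ∀ t : ℤ, 1 ≤ t → t ≤ 2*(n:ℤ)+1 → 1 ≤ (a - c) - t ∧ (a - c) - t ≤ 2*(n:ℤ)+1 := by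
    intro t h1 h2
    rcases hX t h1 h2 with ⟨h3, -, -⟩ | ⟨-, h3, -⟩ | ⟨-, -, h3⟩
    · have : (a - c) - t ∈ Sf := by
        rw [hmemS]
        have : c + (a - c - t) = a - t := by ring
        rw [this]; exact h3
      have := hSsub this
      rw [hI, Finset.mem_Icc] at this
      exact this
    · have : (a - c) - t ∈ T := by
        rw [hmemT]
        have : a - (a - c - t) = c + t := by ring
        rw [this]; exact h3
      have := hTsub this
      rw [hI, Finset.mem_Icc] at this
      exact this
    · constructor <;> omega
  have hac2 : a - c = 2*(n:ℤ)+2 := by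
    have k1 := hkey 1 (le_refl 1) (by omega)
    have k2 := hkey (2*(n:ℤ)+1) (by omega) (le_refl _)
    omega
  refine ⟨hac2, fun t ht => hTsub ht, ?_, ?_⟩
  · -- (n+1) ∉ T
    intro hmem
    have hn1 : (1:ℤ) ≤ (n:ℤ)+1 := by omega
    rcases hX ((n:ℤ)+1) hn1 (by omega) with ⟨-, -, h3⟩ | ⟨h1, -, -⟩ | ⟨h1, -, -⟩
    · omega
    · exact h1 ((hmemT _).mp hmem)
    · exact h1 ((hmemT _).mp hmem)
  · -- Xor'
    intro k h1 h2
    have h2n : (2*(n:ℤ)+2 - k) ∈ T ↔ c + k ∈ Bf := by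
      rw [hmemT]
      have : a - (2*(n:ℤ)+2 - k) = c + k := by omega
      rw [this]
    rcases hX k h1 (by omega) with ⟨h3, h4, -⟩ | ⟨h3, h4, -⟩ | ⟨-, -, h3⟩
    · exact Or.inl ⟨(hmemT k).mpr h3, fun hc => h4 (h2n.mp hc)⟩
    · exact Or.inr ⟨h2n.mpr h4, fun hc => h3 ((hmemT k).mp hc)⟩
    · omega

lemma toFinset_map (l : List ℤ) (f : ℤ → ℤ) : (l.map f).toFinset = l.toFinset.image f := by
  induction l with
  | nil => simp
  | cons x xs ih => simp [ih]

/-- the strictly decreasing list with a given finset of values -/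
def sortDesc (s : Finset ℤ) : List ℤ := (s.sort (· ≤ ·)).reverse

lemma sortDesc_toFinset (s : Finset ℤ) : (sortDesc s).toFinset = s := by
  rw [sortDesc, List.toFinset_reverse, Finset.sort_toFinset]

lemma sortDesc_length (s : Finset ℤ) : (sortDesc s).length = s.card := by
  rw [sortDesc, List.length_reverse, Finset.length_sort]

lemma sortDesc_chain' (s : Finset ℤ) : (sortDesc s).Chain' (· > ·) := by
  rw [sortDesc]
  apply List.isChain_iff_pairwise.mpr
  rw [List.pairwise_reverse]
  exact (Finset.sortedLT_sort s).pairwise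

lemma sortDesc_mem (s : Finset ℤ) (x : ℤ) : x ∈ sortDesc s ↔ x ∈ s := by
  rw [sortDesc, List.mem_reverse, Finset.mem_sort]

/-- Any two strictly decreasing lists with equal value sets are equal. -/
lemma eq_of_chain'_toFinset {l₁ l₂ : List ℤ} (h₁ : l₁.Chain' (· > ·)) (h₂ : l₂.Chain' (· > ·))
    (h : l₁.toFinset = l₂.toFinset) : l₁ = l₂ := by
  have p₁ := List.isChain_iff_pairwise.mp h₁
  have p₂ := List.isChain_iff_pairwise.mp h₂
  have nd₁ : l₁.Nodup := p₁.imp (fun h => ne_of_gt h)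
  have nd₂ : l₂.Nodup := p₂.imp (fun h => ne_of_gt h)
  haveI : IsAntisymm ℤ (· > ·) := ⟨fun a b h h' => absurd h' (by omega)⟩
  exact List.Perm.eq_of_pairwise' p₁ p₂ (List.perm_of_nodup_nodup_toFinset_eq nd₁ nd₂ h)

/-- Construction of an Ulrich partition from a transversal of times. -/
lemma construct {n : ℕ} {T : Finset ℤ} (hT : TransT n T) (hcardT : T.card = n) :
    IsUlrich3 [(2*(n:ℤ)+2)] (sortDesc (T.image (fun t => 2*(n:ℤ)+2 - t))) [0] ∧
      (sortDesc (T.image (fun t => 2*(n:ℤ)+2 - t))).length = n := by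
  set B := T.image (fun t => 2*(n:ℤ)+2 - t) with hB
  have hmemB : ∀ x : ℤ, x ∈ B ↔ 2*(n:ℤ)+2 - x ∈ T := by
    intro x
    rw [hB, Finset.mem_image]
    constructor
    · rintro ⟨t, ht, rfl⟩
      have : 2*(n:ℤ)+2 - (2*(n:ℤ)+2 - t) = t := by ring
      rw [this]; exact ht
    · intro hx
      exact ⟨2*(n:ℤ)+2 - x, hx, by ring⟩
  set l := sortDesc B with hl
  have hlen : l.length = n := by
    rw [hl, sortDesc_length, hB, Finset.card_image_of_injective _ sub_right_injective, hcardT]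
  have hrange : ∀ x ∈ l, 1 ≤ x ∧ x ≤ 2*(n:ℤ)+1 := by
    intro x hx
    rw [hl, sortDesc_mem, hmemB] at hx
    have := hT.1 hx
    rw [Finset.mem_Icc] at this
    omega
  refine ⟨⟨by simp, by simp, ?_, ?_⟩, hlen⟩
  · exact chain'_sandwich (sortDesc_chain' B)
      (fun x hx => ⟨by have := hrange x hx; omega, by have := hrange x hx; omega⟩) (by omega)
  · intro t h1 h2
    rw [dim3_single, hlen] at h2
    have hnd : l.Nodup := (List.isChain_iff_pairwise.mp (sortDesc_chain' B)).imp
      (fun h => ne_of_gt h)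
    rw [oneRepeat_iff hlen hnd]
    have hlf : l.toFinset = B := sortDesc_toFinset B
    rw [hlf]
    have hX := hT.X1 (t : ℤ) (by omega) (by omega)
    refine (X1_congr ?_ ?_ ?_).mpr hX
    · rw [hmemB]
      have : 2*(n:ℤ)+2 - (2*(n:ℤ)+2 - (t:ℤ)) = (t:ℤ) := by ring
      rw [this]
    · rw [hmemB]
      have : (0:ℤ) + (t:ℤ) = (t:ℤ) := by ring
      rw [this]
    · constructor <;> intro h <;> omega

variable (n : ℕ)

/-- natural numbers in a subset of `{1,...,n}` -/
def Sn (S : Finset (Finset.Icc 1 n)) : Finset ℕ := S.image Subtype.val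

lemma mem_Sn {S : Finset (Finset.Icc 1 n)} (k : (Finset.Icc 1 n)) :
    (k : ℕ) ∈ Sn n S ↔ k ∈ S := by
  rw [Sn, Finset.mem_image]
  constructor
  · rintro ⟨x, hx, h⟩
    rwa [← Subtype.ext h]
  · intro h; exact ⟨k, h, rfl⟩

lemma Sn_subset {S : Finset (Finset.Icc 1 n)} : Sn n S ⊆ Finset.Icc 1 n := by
  intro m hm
  rw [Sn, Finset.mem_image] at hm
  obtain ⟨x, -, rfl⟩ := hm
  exact x.2

/-- transversal of times determined by a subset of `{1,...,n}` -/
def Tset (S : Finset (Finset.Icc 1 n)) : Finset ℤ :=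
  (Sn n S).image (fun k : ℕ => (k : ℤ)) ∪
    ((Finset.Icc 1 n) \ Sn n S).image (fun k : ℕ => 2*(n:ℤ)+2 - (k : ℤ))

lemma mem_Tset_low {S : Finset (Finset.Icc 1 n)} {k : ℤ} (h1 : 1 ≤ k) (h2 : k ≤ (n:ℤ)) :
    k ∈ Tset n S ↔ k.toNat ∈ Sn n S := by
  rw [Tset, Finset.mem_union, Finset.mem_image, Finset.mem_image]
  constructor
  · rintro (⟨m, hm, rfl⟩ | ⟨m, hm, rfl⟩)
    · rwa [Int.toNat_natCast]
    · rw [Finset.mem_sdiff, Finset.mem_Icc] at hm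
      omega
  · intro h
    exact Or.inl ⟨k.toNat, h, by omega⟩

lemma mem_Tset_high {S : Finset (Finset.Icc 1 n)} {k : ℤ} (h1 : 1 ≤ k) (h2 : k ≤ (n:ℤ)) :
    (2*(n:ℤ)+2 - k) ∈ Tset n S ↔ (k.toNat ∈ Finset.Icc 1 n ∧ k.toNat ∉ Sn n S) := by
  rw [Tset, Finset.mem_union, Finset.mem_image, Finset.mem_image]
  constructor
  · rintro (⟨m, hm, hh⟩ | ⟨m, hm, hh⟩)
    · have := Finset.mem_Icc.mp (Sn_subset n hm)
      omega
    · rw [Finset.mem_sdiff] at hm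
      have : m = k.toNat := by omega
      rwa [← this]
  · rintro ⟨hk1, hk2⟩
    exact Or.inr ⟨k.toNat, Finset.mem_sdiff.mpr ⟨hk1, hk2⟩, by omega⟩

lemma transT_Tset (S : Finset (Finset.Icc 1 n)) : TransT n (Tset n S) := by
  refine ⟨?_, ?_, ?_⟩
  · intro t ht
    rw [Tset, Finset.mem_union, Finset.mem_image, Finset.mem_image] at ht
    rw [Finset.mem_Icc]
    rcases ht with ⟨m, hm, rfl⟩ | ⟨m, hm, rfl⟩
    · have := Finset.mem_Icc.mp (Sn_subset n hm)
      omega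
    · rw [Finset.mem_sdiff, Finset.mem_Icc] at hm
      omega
  · intro hmem
    rw [Tset, Finset.mem_union, Finset.mem_image, Finset.mem_image] at hmem
    rcases hmem with ⟨m, hm, hh⟩ | ⟨m, hm, hh⟩
    · have := Finset.mem_Icc.mp (Sn_subset n hm)
      omega
    · rw [Finset.mem_sdiff, Finset.mem_Icc] at hm
      omega
  · intro k h1 h2
    rw [mem_Tset_low n h1 h2, mem_Tset_high n h1 h2]
    have hk : k.toNat ∈ Finset.Icc 1 n := by
      rw [Finset.mem_Icc]; omega
    by_cases h : k.toNat ∈ Sn n S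
    · exact Or.inl ⟨h, by tauto⟩
    · exact Or.inr ⟨⟨hk, h⟩, h⟩

lemma card_Tset (S : Finset (Finset.Icc 1 n)) : (Tset n S).card = n := by
  rw [Tset]
  rw [Finset.card_union_of_disjoint]
  · rw [Finset.card_image_of_injective _ Nat.cast_injective,
      Finset.card_image_of_injOn (fun x _ y _ h => by omega),
      Finset.card_sdiff_of_subset (Sn_subset n), Nat.card_Icc]
    have := Finset.card_le_card (Sn_subset n (S := S))
    rw [Nat.card_Icc] at this
    omega
  · rw [Finset.disjoint_left]
    rintro t ht hts
    rw [Finset.mem_image] at ht hts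
    obtain ⟨m, hm, rfl⟩ := ht
    obtain ⟨m', hm', hh⟩ := hts
    have h1 := Finset.mem_Icc.mp (Sn_subset n hm)
    have h2 := Finset.mem_Icc.mp (Finset.mem_sdiff.mp hm').1
    omega

/-- The Ulrich partition associated to a subset of `{1,...,n}`. -/
def G (S : Finset (Finset.Icc 1 n)) : UlrichP1 n where
  a := 2*(n:ℤ)+2
  b := sortDesc ((Tset n S).image (fun t => 2*(n:ℤ)+2 - t))
  c := 0
  len := (construct (transT_Tset n S) (card_Tset n S)).2
  ulrich := (construct (transT_Tset n S) (card_Tset n S)).1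

/-- The subset of `{1,...,n}` associated to an Ulrich partition. -/
def F (P : UlrichP1 n) : Finset (Finset.Icc 1 n) :=
  Finset.univ.filter (fun k => (P.a - ((k : ℕ) : ℤ)) ∈ P.b)

lemma F_invariant {P Q : UlrichP1 n} (h : shiftRel n P Q) : F n P = F n Q := by
  obtain ⟨j, ha, hb, hc⟩ := h
  ext k
  rw [F, F, Finset.mem_filter, Finset.mem_filter]
  rw [ha, hb]
  have : P.a + j - ((k : ℕ) : ℤ) = (P.a - ((k : ℕ) : ℤ)) + j := by ring
  rw [this]
  constructor
  · rintro ⟨h1, h2⟩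
    exact ⟨h1, List.mem_map.mpr ⟨_, h2, rfl⟩⟩
  · rintro ⟨h1, h2⟩
    obtain ⟨x, hx, hxe⟩ := List.mem_map.mp h2
    have : x = P.a - ((k : ℕ) : ℤ) := by
      have : x + j = P.a - ((k : ℕ) : ℤ) + j := hxe
      omega
    exact ⟨h1, this ▸ hx⟩

lemma F_G (S : Finset (Finset.Icc 1 n)) : F n (G n S) = S := by
  ext k
  have hk : 1 ≤ ((k : ℕ) : ℤ) ∧ ((k : ℕ) : ℤ) ≤ (n : ℤ) := by
    have := Finset.mem_Icc.mp k.2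
    omega
  rw [F, Finset.mem_filter]
  simp only [Finset.mem_univ, true_and]
  show (2*(n:ℤ)+2 - ((k : ℕ) : ℤ)) ∈ sortDesc ((Tset n S).image (fun t => 2*(n:ℤ)+2 - t)) ↔ _
  rw [sortDesc_mem, Finset.mem_image]
  constructor
  · rintro ⟨t, ht, hte⟩
    have : t = ((k : ℕ) : ℤ) := by omega
    subst this
    rw [mem_Tset_low n hk.1 hk.2, Int.toNat_natCast, mem_Sn] at ht
    exact ht
  · intro hS
    refine ⟨((k : ℕ) : ℤ), ?_, rfl⟩
    rw [mem_Tset_low n hk.1 hk.2, Int.toNat_natCast, mem_Sn]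
    exact hS

lemma G_F (P : UlrichP1 n) : shiftRel n (G n (F n P)) P := by
  obtain ⟨hac, hTrans⟩ := forward P.len P.ulrich
  obtain ⟨hchain, hbd, -⟩ := chain'_parts P.ulrich.2.2.1
  set TP := P.b.toFinset.image (fun x => P.a - x) with hTP
  have hTeq : Tset n (F n P) = TP := by
    apply TransT.ext (transT_Tset n (F n P)) hTrans
    intro k h1 h2
    rw [mem_Tset_low n h1 h2]
    have hkI : k.toNat ∈ Finset.Icc 1 n := by rw [Finset.mem_Icc]; omega
    have : (k.toNat ∈ Sn n (F n P)) ↔ (⟨k.toNat, hkI⟩ : (Finset.Icc 1 n)) ∈ F n P := by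
      exact mem_Sn n ⟨k.toNat, hkI⟩
    rw [this, F, Finset.mem_filter]
    simp only [Finset.mem_univ, true_and]
    have hcast : ((k.toNat : ℕ) : ℤ) = k := by omega
    rw [hTP, Finset.mem_image]
    constructor
    · intro h
      exact ⟨P.a - k, by rw [hcast] at h; exact List.mem_toFinset.mpr h, by ring⟩
    · rintro ⟨x, hx, hxe⟩
      have : x = P.a - k := by omega
      subst this
      rw [hcast]
      exact List.mem_toFinset.mp hx
  refine ⟨P.c, ?_, ?_, ?_⟩
  · show P.a = 2*(n:ℤ)+2 + P.c
    omega
  · show P.b = (sortDesc ((Tset n (F n P)).image (fun t => 2*(n:ℤ)+2 - t))).map (· + P.c)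
    apply eq_of_chain'_toFinset hchain
    · show List.IsChain _ _
      rw [List.isChain_map]
      exact (sortDesc_chain' _).imp (fun h => by omega)
    · rw [toFinset_map, sortDesc_toFinset, hTeq, hTP, Finset.image_image, Finset.image_image]
      ext x
      simp only [Finset.mem_image, Function.comp_apply, List.mem_toFinset]
      constructor
      · intro hx
        exact ⟨x, hx, by omega⟩
      · rintro ⟨y, hy, rfl⟩
        have : 2*(n:ℤ)+2 - (P.a - y) + P.c = y := by omega
        rw [this]
        exact hy
  · show P.c = 0 + P.c
    omega

/-- The classifying equivalence. -/
noncomputable def classEquiv : Quot (shiftRel n) ≃ Finset (Finset.Icc 1 n) where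
  toFun := Quot.lift (F n) (fun P Q h => F_invariant n h)
  invFun := fun S => Quot.mk _ (G n S)
  left_inv := by
    intro q
    induction q using Quot.ind with
    | _ P => exact Quot.sound (G_F n P)
  right_inv := fun S => F_G n S

end UlrichAux

/-- There are exactly `2 ^ n` equivalence classes of Ulrich partitions of type `(1, n, 1)`;
concretely they are in bijection with the subsets of `{1, ..., n}`. -/
theorem stmt0 (n : ℕ) (hn : 1 ≤ n) :
    Nat.card (Quot (shiftRel n)) = 2 ^ n ∧
      Nonempty (Quot (shiftRel n) ≃ Finset (Finset.Icc 1 n)) := by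
  refine ⟨?_, ⟨UlrichAux.classEquiv n⟩⟩
  rw [Nat.card_congr (UlrichAux.classEquiv n), Nat.card_eq_fintype_card,
    Fintype.card_finset, Fintype.card_coe, Nat.card_Icc]
  simp
end

section
/- If (a | b_1,...,b_n | c) is an Ulrich partition of type (1,n,1) normalized with b-entries viewed relative to a and c, then a and c have the same parity, and after normalizing a = n+1, c = -(n+1), for every p ∈ {1,...,n} exactly one of p or -p lies in {b_1,...,b_n}. -/
/-- Key counting lemma for a two-element insertion into a finset. -/
lemma key_insert (S : Finset ℤ) (x y : ℤ)
    (h : (insert x (insert y S)).card + 1 = S.card + 2) :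
    (x = y ∧ x ∉ S) ∨ (x ≠ y ∧ (x ∈ S ↔ y ∉ S)) := by
  by_cases hxy : x = y
  · subst hxy
    by_cases hx : x ∈ S
    · rw [Finset.insert_eq_self.mpr hx, Finset.insert_eq_self.mpr hx] at h
      omega
    · exact Or.inl ⟨rfl, hx⟩
  · by_cases hx : x ∈ S <;> by_cases hy : y ∈ S
    · rw [Finset.insert_eq_self.mpr hy, Finset.insert_eq_self.mpr hx] at h
      omega
    · exact Or.inr ⟨hxy, by tauto⟩
    · exact Or.inr ⟨hxy, by tauto⟩
    · rw [Finset.card_insert_of_notMem (by simp [hxy, hx]),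
        Finset.card_insert_of_notMem hy] at h
      omega

/-- In an Ulrich partition `(a | b₁, ..., bₙ | c)` of type `(1, n, 1)`, the entries `a` and `c`
have the same parity, and after normalizing `a = n + 1`, `c = -(n+1)`, for every
`p ∈ {1, ..., n}` exactly one of `p`, `-p` lies among the `b`'s. -/
theorem stmt1 (n : ℕ) (a c : ℤ) (b : List ℤ) (hlen : b.length = n)
    (hU : IsUlrich3 [a] b [c]) :
    a % 2 = c % 2 ∧
      (a = (n : ℤ) + 1 → c = -((n : ℤ) + 1) →
        ∀ p : ℤ, 1 ≤ p → p ≤ (n : ℤ) → (p ∈ b ↔ ¬ (-p ∈ b))) := by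
  -- Basic facts from strict decrease: b has no duplicates
  have hchain : ([a] ++ b ++ [c]).Chain' (· > ·) := by
    simpa [evolve3, StrictDec] using hU.2.2.1
  have hpw : ([a] ++ b ++ [c]).Pairwise (· > ·) := List.isChain_iff_pairwise.mp hchain
  have hsub : List.Sublist b ([a] ++ b ++ [c]) := by
    rw [List.append_assoc]
    exact (List.sublist_append_left _ _).trans (List.sublist_append_right _ _)
  have hnodup : b.Nodup := (hpw.sublist hsub).imp ne_of_gt
  have hcard : b.toFinset.card = n := by
    rw [List.toFinset_card_of_nodup hnodup, hlen]
  have hdim : dim3 [a] b [c] = 2 * n + 1 := by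
    simp [dim3, hlen]; omega
  have hset : ∀ t : ℤ, (evolve3 [a] b [c] t).toFinset
      = insert (a - t) (insert (c + t) b.toFinset) := by
    intro t
    ext z
    simp [evolve3]
  have hlength : ∀ t : ℤ, (evolve3 [a] b [c] t).length = n + 2 := by
    intro t
    simp [evolve3, hlen]
  have H : ∀ t : ℤ, 1 ≤ t → t ≤ 2 * n + 1 →
      (a - t = c + t ∧ a - t ∉ b.toFinset) ∨
        (a - t ≠ c + t ∧ (a - t ∈ b.toFinset ↔ c + t ∉ b.toFinset)) := by
    intro t h1 h2
    have h3 := hU.2.2.2 t.toNat (by omega) (by rw [hdim]; omega)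
    rw [Int.toNat_of_nonneg (by omega)] at h3
    unfold OneRepeat at h3
    rw [hset t, hlength t] at h3
    exact key_insert _ _ _ (by rw [hcard]; omega)
  constructor
  · -- parity
    by_contra hne
    have H2 : ∀ t ∈ Finset.Icc (1 : ℤ) (2 * n + 1),
        (a - t ∈ b.toFinset ↔ c + t ∉ b.toFinset) := by
      intro t ht
      rw [Finset.mem_Icc] at ht
      rcases H t ht.1 ht.2 with ⟨he, _⟩ | ⟨_, hiff⟩
      · omega
      · exact hiff
    set f : ℤ → ℤ := fun t => if a - t ∈ b.toFinset then a - t else c + t with hf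
    have hmaps : ∀ t ∈ Finset.Icc (1 : ℤ) (2 * n + 1), f t ∈ b.toFinset := by
      intro t ht
      have h2 := H2 t ht
      by_cases h : a - t ∈ b.toFinset
      · simp only [hf, if_pos h]; exact h
      · simp only [hf, if_neg h]
        exact not_not.mp (fun hc2 => h (h2.mpr hc2))
    have hfib : ∀ x ∈ b.toFinset,
        ((Finset.Icc (1 : ℤ) (2 * n + 1)).filter fun t => f t = x).card ≤ 2 := by
      intro x _
      have hsub2 : ((Finset.Icc (1 : ℤ) (2 * n + 1)).filter fun t => f t = x)
          ⊆ {a - x, x - c} := by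
        intro t ht
        rw [Finset.mem_filter] at ht
        simp only [Finset.mem_insert, Finset.mem_singleton]
        rcases ht with ⟨_, hft⟩
        by_cases h : a - t ∈ b.toFinset
        · simp only [hf, if_pos h] at hft; omega
        · simp only [hf, if_neg h] at hft; omega
      calc ((Finset.Icc (1 : ℤ) (2 * n + 1)).filter fun t => f t = x).card
          ≤ ({a - x, x - c} : Finset ℤ).card := Finset.card_le_card hsub2
        _ ≤ 2 := (Finset.card_insert_le _ _).trans (by simp)
    have hle := Finset.card_le_mul_card_image_of_maps_to hmaps 2 hfib
    rw [Int.card_Icc, hcard] at hle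
    omega
  · -- exactly one of p, -p in b
    intro ha hc p hp1 hpn
    subst ha hc
    rcases H ((n : ℤ) + 1 - p) (by omega) (by omega) with ⟨he, _⟩ | ⟨_, hiff⟩
    · omega
    · rw [show ((n : ℤ) + 1) - ((n : ℤ) + 1 - p) = p from by ring,
        show -((n : ℤ) + 1) + ((n : ℤ) + 1 - p) = -p from by ring] at hiff
      simpa [List.mem_toFinset] using hiff
end

section
/- There are no Ulrich partitions with 6 or more blocks. That is, for any r+1 ≥ 6 blocks, there is no strictly decreasing integer sequence in r+1 nonempty blocks satisfying the Ulrich condition. -/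
/-- Time evolution of a partition in several blocks: with `s` blocks, every entry of the
`i`-th block (0-indexed) has `t * (s - 1 - i)` subtracted from it. -/
def evolveGen (B : List (List ℤ)) (t : ℤ) : List ℤ :=
  ((B.zipIdx.map Prod.swap).map (fun p => p.2.map (fun x => x - t * ((B.length - 1 - p.1 : ℕ) : ℤ)))).flatten

/-- The dimension `N = Σ_{i<j} lᵢ lⱼ` of a partition with blocks of sizes `l₁, ..., lₛ`. -/
def dimGen (B : List (List ℤ)) : ℕ :=
  ((B.map List.length).sum ^ 2 - ((B.map List.length).map (· ^ 2)).sum) / 2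

/-- A partition with several nonempty blocks is Ulrich: the concatenated sequence is strictly
decreasing, and for each `t ∈ {1, ..., N}` the evolved list has exactly one repeated entry. -/
def IsUlrichGen (B : List (List ℤ)) : Prop :=
  (∀ l ∈ B, l ≠ []) ∧ StrictDec (evolveGen B 0) ∧
    ∀ t : ℕ, 1 ≤ t → t ≤ dimGen B → OneRepeat (evolveGen B (t : ℤ))

namespace UlrichAux
open List Finset

/-! ### counting lemmas -/

lemma sum_counts (l : List ℤ) : ∑ a ∈ l.toFinset, l.count a = l.length := by
  simpa using Multiset.toFinset_sum_count_eq (l : Multiset ℤ)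

lemma count_ge_one {l : List ℤ} {v : ℤ} (h : v ∈ l.toFinset) : 1 ≤ l.count v := by
  rw [List.mem_toFinset] at h
  exact List.count_pos_iff.mpr h

lemma exists_two_le_count {l : List ℤ} (h : OneRepeat l) : ∃ v, 2 ≤ l.count v := by
  by_contra hc
  push_neg at hc
  have hnd : l.Nodup := List.nodup_iff_count_le_one.mpr (fun a => by
    have := hc a; omega)
  have := List.toFinset_card_of_nodup hnd
  unfold OneRepeat at h
  omega

lemma not_two_counts {l : List ℤ} (h : OneRepeat l) {v w : ℤ} (hvw : v ≠ w)
    (hv : 2 ≤ l.count v) (hw : 2 ≤ l.count w) : False := by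
  have hvm : v ∈ l.toFinset := by
    rw [List.mem_toFinset]; exact List.count_pos_iff.mp (by omega)
  have hwm : w ∈ l.toFinset.erase v := by
    refine Finset.mem_erase.mpr ⟨hvw.symm, ?_⟩
    rw [List.mem_toFinset]; exact List.count_pos_iff.mp (by omega)
  have h1 : ∑ a ∈ l.toFinset, l.count a = l.length := sum_counts l
  rw [← Finset.add_sum_erase _ _ hvm, ← Finset.add_sum_erase _ _ hwm] at h1
  have h2 : ∀ a ∈ (l.toFinset.erase v).erase w, 1 ≤ l.count a := by
    intro a ha
    exact count_ge_one (Finset.mem_of_mem_erase (Finset.mem_of_mem_erase ha))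
  have h3 : ((l.toFinset.erase v).erase w).card ≤ ∑ a ∈ (l.toFinset.erase v).erase w, l.count a := by
    calc ((l.toFinset.erase v).erase w).card = ∑ _a ∈ (l.toFinset.erase v).erase w, 1 := by simp
    _ ≤ _ := Finset.sum_le_sum h2
  have hcv : ((l.toFinset.erase v).erase w).card = l.toFinset.card - 2 := by
    rw [Finset.card_erase_of_mem hwm, Finset.card_erase_of_mem hvm]
    omega
  have hcard2 : 2 ≤ l.toFinset.card := by
    have := Finset.card_erase_of_mem hvm
    have : 0 < (l.toFinset.erase v).card := Finset.card_pos.mpr ⟨w, hwm⟩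
    have := Finset.card_erase_of_mem hvm
    omega
  unfold OneRepeat at h
  omega

lemma not_three_count {l : List ℤ} (h : OneRepeat l) {v : ℤ} (hv : 3 ≤ l.count v) : False := by
  have hvm : v ∈ l.toFinset := by
    rw [List.mem_toFinset]; exact List.count_pos_iff.mp (by omega)
  have h1 : ∑ a ∈ l.toFinset, l.count a = l.length := sum_counts l
  rw [← Finset.add_sum_erase _ _ hvm] at h1
  have h3 : (l.toFinset.erase v).card ≤ ∑ a ∈ l.toFinset.erase v, l.count a := by
    calc (l.toFinset.erase v).card = ∑ _a ∈ l.toFinset.erase v, 1 := by simp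
    _ ≤ _ := Finset.sum_le_sum (fun a ha => count_ge_one (Finset.mem_of_mem_erase ha))
  have hcv : (l.toFinset.erase v).card = l.toFinset.card - 1 := Finset.card_erase_of_mem hvm
  have hcard1 : 1 ≤ l.toFinset.card := Finset.card_pos.mpr ⟨v, hvm⟩
  unfold OneRepeat at h
  omega

end UlrichAux

namespace Layer2
open List Finset UlrichAux

variable (B : List (List ℤ))

def blk (i : ℕ) : List ℤ := B.getD i []
def wt (i : ℕ) : ℤ := ((B.length - 1 - i : ℕ) : ℤ)
def eblk (t : ℤ) (i : ℕ) : List ℤ := (blk B i).map (fun x => x - t * wt B i)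

lemma blk_eq {i : ℕ} (hi : i < B.length) : blk B i = B[i] := List.getD_eq_getElem B [] hi

lemma evolve_eq (t : ℤ) :
    evolveGen B t = ((List.range B.length).map (eblk B t)).flatten := by
  unfold evolveGen
  congr 1
  apply List.ext_getElem (by simp)
  intro i h1 h2
  simp only [List.getElem_map, List.getElem_zipIdx, Prod.fst_swap, Prod.snd_swap, zero_add, List.getElem_range, eblk, wt]
  rw [blk_eq B (by simpa using h1)]

lemma flatten_count (F : ℕ → List ℤ) (n : ℕ) (v : ℤ) :
    (((List.range n).map F).flatten.count v) = ∑ i ∈ Finset.range n, (F i).count v := by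
  induction n with
  | zero => simp
  | succ n ih => simp [List.range_succ, Finset.sum_range_succ, ih]

lemma evolve_count (t : ℤ) (v : ℤ) :
    (evolveGen B t).count v = ∑ i ∈ Finset.range B.length, ((eblk B t i).count v) := by
  rw [evolve_eq, flatten_count]

lemma evolve0 : evolveGen B 0 = B.flatten := by
  rw [evolve_eq]
  congr 1
  have : eblk B 0 = blk B := by
    funext i; unfold eblk; simp
  rw [this]
  apply List.ext_getElem (by simp)
  intro i h1 h2
  simp only [List.getElem_map, List.getElem_range]
  exact blk_eq B (by simpa using h1)

/-! ### order facts from strict decrease -/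

def hd (i : ℕ) : ℤ := (blk B i).headI
def lst (i : ℕ) : ℤ := ((blk B i).reverse).headI
def gp (i : ℕ) : ℤ := lst B i - hd B (i+1)
def sp (i : ℕ) : ℤ := hd B i - lst B i

variable {B}

lemma headI_mem {l : List ℤ} (h : l ≠ []) : l.headI ∈ l := by
  cases l with
  | nil => simp at h
  | cons a t => simp

lemma tele (B : List (List ℤ)) : ∀ j i : ℕ, i < j →
    lst B i - hd B j = (∑ m ∈ Finset.Ico i j, gp B m) + ∑ m ∈ Finset.Ico (i+1) j, sp B m := by
  intro j
  induction j with
  | zero => omega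
  | succ j ih =>
    intro i hij
    rcases Nat.lt_or_ge i j with h | h
    · have h1 := ih i h
      rw [Finset.sum_Ico_succ_top (by omega), Finset.sum_Ico_succ_top (by omega)]
      unfold gp sp at *
      omega
    · have : i = j := by omega
      subst this
      rw [Finset.Ico_self, Finset.sum_empty, Nat.Ico_succ_singleton, Finset.sum_singleton]
      unfold gp; ring

lemma headI_le_of_pw {l : List ℤ} (hl : l.Pairwise (· > ·)) {x : ℤ} (hx : x ∈ l) :
    x ≤ l.headI := by
  cases l with
  | nil => simp at hx
  | cons a t =>
    simp only [List.headI_cons]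
    rcases List.mem_cons.mp hx with h | h
    · omega
    · exact le_of_lt (List.rel_of_pairwise_cons hl h)

section PW
variable (hPW : B.flatten.Pairwise (· > ·)) (hne : ∀ l ∈ B, l ≠ [])

include hPW

lemma blk_pw {i : ℕ} (hi : i < B.length) : (blk B i).Pairwise (· > ·) := by
  rw [blk_eq B hi]
  exact (List.pairwise_flatten.1 hPW).1 _ (List.getElem_mem hi)

lemma blk_nodup {i : ℕ} (hi : i < B.length) : (blk B i).Nodup :=
  (blk_pw hPW hi).imp (fun h => ne_of_gt h)

lemma cross_gt {i j : ℕ} (hij : i < j) (hj : j < B.length) {x y : ℤ}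
    (hx : x ∈ blk B i) (hy : y ∈ blk B j) : y < x := by
  have h2 := (List.pairwise_flatten.1 hPW).2
  rw [List.pairwise_iff_getElem] at h2
  have := h2 i j (by omega) hj hij
  rw [blk_eq B (by omega)] at hx
  rw [blk_eq B hj] at hy
  exact this x hx y hy

include hne

omit hPW in
lemma blk_ne_nil {i : ℕ} (hi : i < B.length) : blk B i ≠ [] := by
  rw [blk_eq B hi]; exact hne _ (List.getElem_mem hi)

omit hPW in
lemma hd_mem {i : ℕ} (hi : i < B.length) : hd B i ∈ blk B i := by
  unfold hd
  exact headI_mem (blk_ne_nil hne hi)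

omit hPW in
lemma lst_mem {i : ℕ} (hi : i < B.length) : lst B i ∈ blk B i := by
  unfold lst
  have h : (blk B i).reverse ≠ [] := by
    simpa using blk_ne_nil hne hi
  have := headI_mem h
  simpa using this

omit hne in
lemma le_hd {i : ℕ} (hi : i < B.length) {x : ℤ} (hx : x ∈ blk B i) : x ≤ hd B i :=
  headI_le_of_pw (blk_pw hPW hi) hx

omit hne in
lemma lst_le {i : ℕ} (hi : i < B.length) {x : ℤ} (hx : x ∈ blk B i) : lst B i ≤ x := by
  unfold lst
  have hl : ((blk B i).reverse).Pairwise (· < ·) := by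
    rw [List.pairwise_reverse]
    exact blk_pw hPW hi
  have hx' : x ∈ (blk B i).reverse := by simpa using hx
  cases hrev : (blk B i).reverse with
  | nil => rw [hrev] at hx'; simp at hx'
  | cons a t =>
    rw [hrev] at hx' hl
    simp only [List.headI_cons]
    rcases List.mem_cons.mp hx' with h | h
    · omega
    · exact le_of_lt (List.rel_of_pairwise_cons hl h)

lemma gp_pos {i : ℕ} (hi : i + 1 < B.length) : 1 ≤ gp B i := by
  have := cross_gt hPW (by omega : i < i + 1) hi (lst_mem hne (by omega)) (hd_mem hne hi)
  unfold gp; omega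

lemma sp_nonneg {i : ℕ} (hi : i < B.length) : 0 ≤ sp B i := by
  have := le_hd hPW hi (lst_mem hne hi)
  unfold sp; omega

end PW

/-! ### collisions -/

variable (B) in
def Collide (t : ℕ) (i j : ℕ) (x y : ℤ) : Prop :=
  i < j ∧ j < B.length ∧ x ∈ blk B i ∧ y ∈ blk B j ∧
    x - y = (t : ℤ) * ((j : ℤ) - (i : ℤ))

lemma wt_sub {i j : ℕ} (hij : i < j) (hj : j < B.length) :
    wt B i - wt B j = (j : ℤ) - (i : ℤ) := by
  unfold wt; omega

lemma mem_eblk {t : ℤ} {i : ℕ} {v : ℤ} :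
    v ∈ eblk B t i ↔ ∃ x ∈ blk B i, x - t * wt B i = v := by
  unfold eblk
  simp [List.mem_map]

section PW2
variable (hPW : B.flatten.Pairwise (· > ·))
include hPW

lemma nodup_eblk {t : ℤ} {i : ℕ} (hi : i < B.length) : (eblk B t i).Nodup := by
  apply (blk_nodup hPW hi).map
  intro a b hab
  dsimp at hab
  omega

lemma count_eblk_le_one {t : ℤ} {i : ℕ} (hi : i < B.length) (v : ℤ) :
    (eblk B t i).count v ≤ 1 :=
  List.nodup_iff_count_le_one.mp (nodup_eblk hPW hi) v

lemma count_filter_eq (t : ℤ) (v : ℤ) :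
    (evolveGen B t).count v =
      ((Finset.range B.length).filter (fun i => v ∈ eblk B t i)).card := by
  rw [evolve_count]
  rw [← Finset.sum_filter_add_sum_filter_not (Finset.range B.length) (fun i => v ∈ eblk B t i)]
  have h0 : ∀ i ∈ (Finset.range B.length).filter (fun i => ¬ v ∈ eblk B t i),
      (eblk B t i).count v = 0 := by
    intro i hi
    exact List.count_eq_zero.mpr (Finset.mem_filter.mp hi).2
  rw [Finset.sum_congr rfl h0, Finset.sum_const, smul_zero, add_zero]
  have h1 : ∀ i ∈ (Finset.range B.length).filter (fun i => v ∈ eblk B t i),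
      (eblk B t i).count v = 1 := by
    intro i hi
    rcases Finset.mem_filter.mp hi with ⟨hir, him⟩
    have := count_eblk_le_one hPW (t := t) (Finset.mem_range.mp hir) v
    have := List.count_pos_iff.mpr him
    omega
  rw [Finset.sum_congr rfl h1, Finset.sum_const, smul_eq_mul, mul_one]

lemma exE {t : ℕ} (hOR : OneRepeat (evolveGen B t)) :
    ∃ i j x y, Collide B t i j x y := by
  obtain ⟨v, hv⟩ := exists_two_le_count hOR
  rw [count_filter_eq hPW] at hv
  have hv2 : 1 < ((Finset.range B.length).filter (fun i => v ∈ eblk B (t:ℤ) i)).card := by omega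
  obtain ⟨i, hi, j, hj, hij⟩ := Finset.one_lt_card.mp hv2
  rcases Finset.mem_filter.mp hi with ⟨hir, him⟩
  rcases Finset.mem_filter.mp hj with ⟨hjr, hjm⟩
  rw [Finset.mem_range] at hir hjr
  obtain ⟨x, hx, hxv⟩ := mem_eblk.mp him
  obtain ⟨y, hy, hyv⟩ := mem_eblk.mp hjm
  rcases lt_or_gt_of_ne hij with h | h
  · refine ⟨i, j, x, y, h, hjr, hx, hy, ?_⟩
    have hW := wt_sub h hjr
    linear_combination hxv - hyv + (t : ℤ) * hW
  · refine ⟨j, i, y, x, h, hir, hy, hx, ?_⟩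
    have hW := wt_sub h hir
    linear_combination hyv - hxv + (t : ℤ) * hW

lemma count_ge_two {t : ℕ} {i j : ℕ} {v : ℤ} (hij : i ≠ j)
    (hi : i < B.length) (hj : j < B.length)
    (hvi : v ∈ eblk B (t : ℤ) i) (hvj : v ∈ eblk B (t : ℤ) j) :
    2 ≤ (evolveGen B (t : ℤ)).count v := by
  rw [count_filter_eq hPW]
  have h1 : i ∈ (Finset.range B.length).filter (fun m => v ∈ eblk B (t:ℤ) m) :=
    Finset.mem_filter.mpr ⟨Finset.mem_range.mpr hi, hvi⟩
  have h2 : j ∈ (Finset.range B.length).filter (fun m => v ∈ eblk B (t:ℤ) m) :=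
    Finset.mem_filter.mpr ⟨Finset.mem_range.mpr hj, hvj⟩
  exact Finset.one_lt_card.mpr ⟨i, h1, j, h2, hij⟩

lemma count_ge_three {t : ℕ} {i j m : ℕ} {v : ℤ}
    (hij : i ≠ j) (him : i ≠ m) (hjm : j ≠ m)
    (hi : i < B.length) (hj : j < B.length) (hm : m < B.length)
    (hvi : v ∈ eblk B (t : ℤ) i) (hvj : v ∈ eblk B (t : ℤ) j)
    (hvm : v ∈ eblk B (t : ℤ) m) :
    3 ≤ (evolveGen B (t : ℤ)).count v := by
  rw [count_filter_eq hPW]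
  have h1 : i ∈ (Finset.range B.length).filter (fun a => v ∈ eblk B (t:ℤ) a) :=
    Finset.mem_filter.mpr ⟨Finset.mem_range.mpr hi, hvi⟩
  have h2 : j ∈ (Finset.range B.length).filter (fun a => v ∈ eblk B (t:ℤ) a) :=
    Finset.mem_filter.mpr ⟨Finset.mem_range.mpr hj, hvj⟩
  have h3 : m ∈ (Finset.range B.length).filter (fun a => v ∈ eblk B (t:ℤ) a) :=
    Finset.mem_filter.mpr ⟨Finset.mem_range.mpr hm, hvm⟩
  exact Finset.two_lt_card.mpr ⟨i, h1, j, h2, m, h3, hij, him, hjm⟩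

omit hPW in
lemma mem_eblk_of (t : ℕ) {i : ℕ} {x : ℤ} (hx : x ∈ blk B i) :
    x - (t : ℤ) * wt B i ∈ eblk B (t : ℤ) i :=
  mem_eblk.mpr ⟨x, hx, rfl⟩

lemma exU {t : ℕ} (hOR : OneRepeat (evolveGen B (t:ℤ))) {i j i' j' : ℕ} {x y x' y' : ℤ}
    (h1 : Collide B t i j x y) (h2 : Collide B t i' j' x' y')
    (hdiff : ¬ (i = i' ∧ j = j')) : False := by
  obtain ⟨hij, hj, hx, hy, heq⟩ := h1
  obtain ⟨hij', hj', hx', hy', heq'⟩ := h2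
  have hi : i < B.length := by omega
  have hi' : i' < B.length := by omega
  set v : ℤ := x - (t : ℤ) * wt B i with hv
  set v' : ℤ := x' - (t : ℤ) * wt B i' with hv'
  have hvj : v = y - (t : ℤ) * wt B j := by
    have hW := wt_sub hij hj
    rw [hv]
    linear_combination heq - (t : ℤ) * hW
  have hvj' : v' = y' - (t : ℤ) * wt B j' := by
    have hW := wt_sub hij' hj'
    rw [hv']
    linear_combination heq' - (t : ℤ) * hW
  have m1 : v ∈ eblk B (t:ℤ) i := mem_eblk_of t hx
  have m2 : v ∈ eblk B (t:ℤ) j := by rw [hvj]; exact mem_eblk_of t hy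
  have m3 : v' ∈ eblk B (t:ℤ) i' := mem_eblk_of t hx'
  have m4 : v' ∈ eblk B (t:ℤ) j' := by rw [hvj']; exact mem_eblk_of t hy'
  by_cases hvv : v = v'
  · -- some index among i',j' differs from both i,j
    rw [← hvv] at m3 m4
    have hm : ∃ m, m < B.length ∧ m ≠ i ∧ m ≠ j ∧ v ∈ eblk B (t:ℤ) m := by
      by_cases hii : i' = i
      · subst hii
        refine ⟨j', hj', ?_, ?_, m4⟩ <;> omega
      · by_cases hji : i' = j
        · -- then j' ∉ {i, j} since j' > i' = j
          refine ⟨j', hj', ?_, ?_, m4⟩ <;> omega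
        · exact ⟨i', hi', hii, hji, m3⟩
    obtain ⟨m, hmlt, hmi, hmj, hmm⟩ := hm
    exact not_three_count hOR
      (count_ge_three hPW (by omega : i ≠ j) (Ne.symm hmi) (Ne.symm hmj) hi hj hmlt m1 m2 hmm)
  · have c1 : 2 ≤ (evolveGen B (t:ℤ)).count v := count_ge_two hPW (by omega) hi hj m1 m2
    have c2 : 2 ≤ (evolveGen B (t:ℤ)).count v' := count_ge_two hPW (by omega) hi' hj' m3 m4
    exact not_two_counts hOR hvv c1 c2

end PW2

/-! ### the finset of cross pairs and surjectivity of collision times -/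

variable (B) in
def Ln (i : ℕ) : ℕ := (blk B i).length

variable (B) in
def PairsF : Finset ((_ : (_ : ℕ) × ℕ) × ℤ × ℤ) :=
  ((Finset.range B.length).sigma (fun j => Finset.range j)).sigma
    (fun p => (blk B p.2).toFinset ×ˢ (blk B p.1).toFinset)

lemma mem_PairsF {q : (_ : (_ : ℕ) × ℕ) × ℤ × ℤ} :
    q ∈ PairsF B ↔ q.1.1 < B.length ∧ q.1.2 < q.1.1 ∧
      q.2.1 ∈ blk B q.1.2 ∧ q.2.2 ∈ blk B q.1.1 := by
  unfold PairsF
  simp [Finset.mem_sigma, Finset.mem_product, List.mem_toFinset]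
  tauto

lemma sum_sq_identity (L : ℕ → ℕ) (n : ℕ) :
    2 * (∑ j ∈ Finset.range n, ∑ i ∈ Finset.range j, L i * L j)
      + ∑ i ∈ Finset.range n, (L i)^2 = (∑ i ∈ Finset.range n, L i)^2 := by
  induction n with
  | zero => simp
  | succ n ih =>
    rw [Finset.sum_range_succ, Finset.sum_range_succ, Finset.sum_range_succ (f := L),
      ← Finset.sum_mul, add_sq, mul_assoc]
    omega

lemma list_sum_eq (l : List ℕ) : l.sum = ∑ i ∈ Finset.range l.length, l.getD i 0 := by
  induction l with
  | nil => simp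
  | cons a tl ih =>
    rw [List.sum_cons, List.length_cons, Finset.sum_range_succ']
    simp only [List.getD_cons_succ, List.getD_cons_zero]
    omega

section PW3
variable (hPW : B.flatten.Pairwise (· > ·))
include hPW

lemma card_PairsF : (PairsF B).card =
    ∑ j ∈ Finset.range B.length, ∑ i ∈ Finset.range j, Ln B i * Ln B j := by
  unfold PairsF
  rw [Finset.card_sigma]
  rw [Finset.sum_sigma]
  apply Finset.sum_congr rfl
  intro j hj
  apply Finset.sum_congr rfl
  intro i hi
  rw [Finset.mem_range] at hj hi
  dsimp only
  rw [Finset.card_product]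
  rw [List.toFinset_card_of_nodup (blk_nodup hPW (by omega : i < B.length)),
    List.toFinset_card_of_nodup (blk_nodup hPW hj)]
  rfl

lemma dim_eq : dimGen B =
    ∑ j ∈ Finset.range B.length, ∑ i ∈ Finset.range j, Ln B i * Ln B j := by
  have hs : (B.map List.length).sum = ∑ i ∈ Finset.range B.length, Ln B i := by
    rw [list_sum_eq]
    rw [List.length_map]
    apply Finset.sum_congr rfl
    intro i hi
    rw [Finset.mem_range] at hi
    rw [List.getD_eq_getElem _ _ (by simpa using hi), List.getElem_map]
    unfold Ln
    rw [blk_eq B hi]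
  have hq : ((B.map List.length).map (· ^ 2)).sum = ∑ i ∈ Finset.range B.length, (Ln B i)^2 := by
    rw [list_sum_eq]
    rw [List.length_map, List.length_map]
    apply Finset.sum_congr rfl
    intro i hi
    rw [Finset.mem_range] at hi
    rw [List.getD_eq_getElem _ _ (by simpa using hi), List.getElem_map, List.getElem_map]
    unfold Ln
    rw [blk_eq B hi]
  have hid := sum_sq_identity (Ln B) B.length
  unfold dimGen
  rw [hs, hq]
  omega

lemma card_PairsF_dim : (PairsF B).card = dimGen B := by
  rw [card_PairsF hPW, dim_eq hPW]

end PW3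

section Ulrich
variable (hne : ∀ l ∈ B, l ≠ []) (hPW : B.flatten.Pairwise (· > ·))
  (hOR : ∀ t : ℕ, 1 ≤ t → t ≤ dimGen B → OneRepeat (evolveGen B (t : ℤ)))

include hne hPW in
lemma dim_ge (h6 : 6 ≤ B.length) : 5 ≤ dimGen B := by
  rw [dim_eq hPW]
  have h5 : 5 ∈ Finset.range B.length := Finset.mem_range.mpr (by omega)
  have hterm : 5 ≤ ∑ i ∈ Finset.range 5, Ln B i * Ln B 5 := by
    have : ∀ i ∈ Finset.range 5, 1 ≤ Ln B i * Ln B 5 := by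
      intro i hi
      rw [Finset.mem_range] at hi
      have h1 : Ln B i ≠ 0 := by
        unfold Ln
        simpa using blk_ne_nil hne (by omega : i < B.length)
      have h2 : Ln B 5 ≠ 0 := by
        unfold Ln
        simpa using blk_ne_nil hne (by omega : 5 < B.length)
      exact Nat.one_le_iff_ne_zero.mpr (Nat.mul_ne_zero h1 h2)
    calc (5 : ℕ) = ∑ _i ∈ Finset.range 5, 1 := by simp
    _ ≤ _ := Finset.sum_le_sum this
  calc (5:ℕ) ≤ ∑ i ∈ Finset.range 5, Ln B i * Ln B 5 := hterm
  _ ≤ _ := Finset.single_le_sum (f := fun j => ∑ i ∈ Finset.range j, Ln B i * Ln B j)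
      (fun j _ => Nat.zero_le _) h5

include hPW hOR in
lemma exE_q (t : ℕ) (h1 : 1 ≤ t) (h2 : t ≤ dimGen B) :
    ∃ q : (_ : (_ : ℕ) × ℕ) × ℤ × ℤ, Collide B t q.1.2 q.1.1 q.2.1 q.2.2 := by
  obtain ⟨i, j, x, y, hc⟩ := exE hPW (hOR t h1 h2)
  exact ⟨⟨⟨j, i⟩, (x, y)⟩, hc⟩

variable (B) in
noncomputable def pick (t : ℕ) : (_ : (_ : ℕ) × ℕ) × ℤ × ℤ :=
  @dite _ (∃ q : (_ : (_ : ℕ) × ℕ) × ℤ × ℤ, Collide B t q.1.2 q.1.1 q.2.1 q.2.2)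
    (Classical.propDecidable _) (fun h => h.choose) (fun _ => ⟨⟨0, 0⟩, (0, 0)⟩)

include hPW hOR in
lemma pick_spec (t : ℕ) (h1 : 1 ≤ t) (h2 : t ≤ dimGen B) :
    Collide B t (pick B t).1.2 (pick B t).1.1 (pick B t).2.1 (pick B t).2.2 := by
  have h := exE_q hPW hOR t h1 h2
  unfold pick
  split
  next hh => exact hh.choose_spec
  next hh => exact absurd h hh

include hPW hOR in
lemma allPairsCollide {i j : ℕ} {x y : ℤ} (hij : i < j) (hj : j < B.length)
    (hx : x ∈ blk B i) (hy : y ∈ blk B j) :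
    ∃ t : ℕ, 1 ≤ t ∧ t ≤ dimGen B ∧ x - y = (t : ℤ) * ((j : ℤ) - (i : ℤ)) := by
  classical
  set T := Finset.Icc 1 (dimGen B) with hT
  have hmaps : ∀ t ∈ T, pick B t ∈ PairsF B := by
    intro t ht
    rw [Finset.mem_Icc] at ht
    have hc := pick_spec hPW hOR t ht.1 ht.2
    obtain ⟨h1, h2, h3, h4, h5⟩ := hc
    exact mem_PairsF.mpr ⟨h2, h1, h3, h4⟩
  have hinj : Set.InjOn (pick B) T := by
    intro t1 ht1 t2 ht2 heq
    rw [Finset.coe_Icc, Set.mem_Icc] at ht1 ht2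
    have hc1 := pick_spec hPW hOR t1 ht1.1 ht1.2
    have hc2 := pick_spec hPW hOR t2 ht2.1 ht2.2
    rw [heq] at hc1
    obtain ⟨h1, h2, _, _, e1⟩ := hc1
    obtain ⟨_, _, _, _, e2⟩ := hc2
    have hne0 : ((pick B t2).1.1 : ℤ) - ((pick B t2).1.2 : ℤ) ≠ 0 := by
      have : (pick B t2).1.2 < (pick B t2).1.1 := h1
      omega
    have : (t1 : ℤ) = (t2 : ℤ) := by
      have := e1.symm.trans e2
      exact mul_right_cancel₀ hne0 this
    exact_mod_cast this
  have himg : T.image (pick B) = PairsF B := by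
    apply Finset.eq_of_subset_of_card_le
    · intro q hq
      obtain ⟨t, ht, rfl⟩ := Finset.mem_image.mp hq
      exact hmaps t ht
    · rw [Finset.card_image_of_injOn hinj, card_PairsF_dim hPW, hT, Nat.card_Icc]
      omega
  have hqmem : (⟨⟨j, i⟩, (x, y)⟩ : (_ : (_ : ℕ) × ℕ) × ℤ × ℤ) ∈ PairsF B :=
    mem_PairsF.mpr ⟨hj, hij, hx, hy⟩
  rw [← himg] at hqmem
  obtain ⟨t, ht, hpick⟩ := Finset.mem_image.mp hqmem
  rw [Finset.mem_Icc] at ht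
  have hc := pick_spec hPW hOR t ht.1 ht.2
  rw [hpick] at hc
  exact ⟨t, ht.1, ht.2, hc.2.2.2.2⟩

include hPW hOR in
lemma dvd_dist {i j : ℕ} (hij : i < j) (hj : j < B.length) {x y : ℤ}
    (hx : x ∈ blk B i) (hy : y ∈ blk B j) : ((j : ℤ) - (i : ℤ)) ∣ (x - y) := by
  obtain ⟨t, _, _, ht⟩ := allPairsCollide hPW hOR hij hj hx hy
  exact ⟨t, by rw [ht]; ring⟩

include hne hPW hOR in
lemma blk_mod6 (h6 : 6 ≤ B.length) {i : ℕ} (hi : i < B.length) {x x' : ℤ}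
    (hx : x ∈ blk B i) (hx' : x' ∈ blk B i) : (6 : ℤ) ∣ (x - x') := by
  have key : ∀ k : ℕ, k = 2 ∨ k = 3 → ((k : ℕ) : ℤ) ∣ (x - x') := by
    intro k hk
    rcases lt_or_ge (i + k) B.length with h | h
    · have hy := hd_mem hne (show i + k < B.length from h)
      have d1 := dvd_dist hPW hOR (show i < i + k by omega) h hx hy
      have d2 := dvd_dist hPW hOR (show i < i + k by omega) h hx' hy
      have hcast : ((i + k : ℕ) : ℤ) - (i : ℤ) = (k : ℤ) := by push_cast; ring
      rw [hcast] at d1 d2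
      have := dvd_sub d1 d2
      rw [sub_sub_sub_cancel_right] at this
      exact this
    · have hik : k ≤ i := by omega
      have hilt : i - k < B.length := by omega
      have hy := hd_mem hne hilt
      have d1 := dvd_dist hPW hOR (show i - k < i by omega) hi hy hx
      have d2 := dvd_dist hPW hOR (show i - k < i by omega) hi hy hx'
      have hcast : (i : ℤ) - ((i - k : ℕ) : ℤ) = (k : ℤ) := by omega
      rw [hcast] at d1 d2
      have := dvd_sub d2 d1
      rw [sub_sub_sub_cancel_left] at this
      exact this
  have h2 := key 2 (Or.inl rfl)
  have h3 := key 3 (Or.inr rfl)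
  push_cast at h2 h3
  omega

include hne hPW hOR in
lemma sp_mod6 (h6 : 6 ≤ B.length) {i : ℕ} (hi : i < B.length) : (6 : ℤ) ∣ sp B i :=
  blk_mod6 hne hPW hOR h6 hi (hd_mem hne hi) (lst_mem hne hi)

include hne hPW hOR in
lemma gap_time {i : ℕ} (hi : i + 1 < B.length) :
    ∃ t : ℕ, 1 ≤ t ∧ t ≤ dimGen B ∧ gp B i = (t : ℤ) := by
  obtain ⟨t, h1, h2, ht⟩ := allPairsCollide hPW hOR (show i < i + 1 by omega) hi
    (lst_mem hne (by omega)) (hd_mem hne hi)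
  refine ⟨t, h1, h2, ?_⟩
  have hc : ((i + 1 : ℕ) : ℤ) - (i : ℤ) = 1 := by push_cast; ring
  rw [hc, mul_one] at ht
  simpa [gp] using ht

include hne hPW hOR in
lemma collide_gap {i : ℕ} (hi : i + 1 < B.length) {t : ℕ} (ht : gp B i = (t : ℤ)) :
    Collide B t i (i + 1) (lst B i) (hd B (i + 1)) := by
  refine ⟨by omega, hi, lst_mem hne (by omega), hd_mem hne hi, ?_⟩
  have hc : ((i + 1 : ℕ) : ℤ) - (i : ℤ) = 1 := by push_cast; ring
  rw [hc, mul_one]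
  simpa [gp] using ht

include hne hPW hOR in
lemma gap_ne {i j : ℕ} (hi : i + 1 < B.length) (hj : j + 1 < B.length) (hij : i ≠ j) :
    gp B i ≠ gp B j := by
  intro heq
  obtain ⟨t, h1, h2, ht⟩ := gap_time hne hPW hOR hi
  have c1 := collide_gap hne hPW hOR hi ht
  have c2 := collide_gap hne hPW hOR hj (heq ▸ ht)
  exact exU hPW (hOR t h1 h2) c1 c2 (by omega)

end Ulrich
end Layer2

/-! ### general sum lower bound -/

lemma genLB (S : Finset ℕ) (g : ℕ → ℤ) (V : Finset ℤ) (b : ℤ)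
    (hVb : ∀ v ∈ V, 0 ≤ b - v)
    (h1 : ∀ m ∈ S, g m ∉ V → b ≤ g m)
    (hinj : ∀ m ∈ S, ∀ m' ∈ S, m ≠ m' → g m ≠ g m') :
    b * S.card - ∑ v ∈ V, (b - v) ≤ ∑ m ∈ S, g m := by
  classical
  have hsplit := Finset.sum_filter_add_sum_filter_not S (fun m => g m ∈ V) (fun m => b - g m)
  have hneg : ∑ m ∈ S.filter (fun m => ¬ g m ∈ V), (b - g m) ≤ 0 := by
    apply Finset.sum_nonpos
    intro m hm
    rcases Finset.mem_filter.mp hm with ⟨hmS, hmV⟩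
    have := h1 m hmS hmV
    omega
  have himg : ∑ m ∈ S.filter (fun m => g m ∈ V), (b - g m)
      = ∑ v ∈ (S.filter (fun m => g m ∈ V)).image g, (b - v) := by
    rw [Finset.sum_image]
    intro m hm m' hm' hgm
    by_contra hne
    exact hinj m (Finset.mem_filter.mp hm).1 m' (Finset.mem_filter.mp hm').1 hne hgm
  have hsub : (S.filter (fun m => g m ∈ V)).image g ⊆ V := by
    intro v hv
    obtain ⟨m, hm, rfl⟩ := Finset.mem_image.mp hv
    exact (Finset.mem_filter.mp hm).2
  have hle : ∑ v ∈ (S.filter (fun m => g m ∈ V)).image g, (b - v) ≤ ∑ v ∈ V, (b - v) :=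
    Finset.sum_le_sum_of_subset_of_nonneg hsub (fun v hv _ => hVb v hv)
  have htot : ∑ m ∈ S, (b - g m) = b * S.card - ∑ m ∈ S, g m := by
    rw [Finset.sum_sub_distrib]
    simp [mul_comm]
  omega

namespace Layer2
open UlrichAux
section Ulrich2
variable {B : List (List ℤ)}
variable (hne : ∀ l ∈ B, l ≠ []) (hPW : B.flatten.Pairwise (· > ·))
  (hOR : ∀ t : ℕ, 1 ≤ t → t ≤ dimGen B → OneRepeat (evolveGen B (t : ℤ)))

variable (B) in
def SG (i j : ℕ) : ℤ := ∑ m ∈ Finset.Ico i j, gp B m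

variable (B) in
def SPP (i j : ℕ) : ℤ := ∑ m ∈ Finset.Ico (i + 1) j, sp B m

lemma tele' {i j : ℕ} (hij : i < j) : lst B i - hd B j = SG B i j + SPP B i j :=
  tele B j i hij

include hne hPW in
lemma SPP_nonneg {i j : ℕ} (hj : j ≤ B.length) : 0 ≤ SPP B i j := by
  apply Finset.sum_nonneg
  intro m hm
  rw [Finset.mem_Ico] at hm
  exact sp_nonneg hPW hne (by omega)

include hne hPW hOR in
lemma SPP_mod6 (h6 : 6 ≤ B.length) {i j : ℕ} (hj : j ≤ B.length) : (6:ℤ) ∣ SPP B i j := by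
  apply Finset.dvd_sum
  intro m hm
  rw [Finset.mem_Ico] at hm
  exact sp_mod6 hne hPW hOR h6 (by omega)

include hne hPW hOR in
lemma SG_lb0 {i j : ℕ} (hj : j < B.length) : ((j : ℤ) - i) - 0 ≤ SG B i j := by
  rcases le_or_gt j i with h | h
  · have : SG B i j = 0 := by unfold SG; rw [Finset.Ico_eq_empty (by omega)]; simp
    omega
  have := genLB (Finset.Ico i j) (gp B) ∅ 1 (by simp) ?_ ?_
  · rw [Nat.card_Ico] at this
    simp at this
    unfold SG
    omega
  · intro m hm _
    rw [Finset.mem_Ico] at hm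
    exact gp_pos hPW hne (by omega)
  · intro m hm m' hm' hne'
    rw [Finset.mem_Ico] at hm hm'
    exact gap_ne hne hPW hOR (by omega) (by omega) hne'

include hne hPW hOR in
lemma SG_lb3 {i j : ℕ} (hj : j < B.length) (hij : i ≤ j) : 3 * ((j : ℤ) - i) - 3 ≤ SG B i j := by
  have := genLB (Finset.Ico i j) (gp B) {1, 2} 3 (by intro v hv; fin_cases hv <;> norm_num) ?_ ?_
  · rw [Nat.card_Ico] at this
    have hV : ∑ v ∈ ({1, 2} : Finset ℤ), ((3:ℤ) - v) = 3 := by decide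
    rw [hV] at this
    unfold SG
    have hc : ((j - i : ℕ) : ℤ) = (j:ℤ) - i := by omega
    rw [hc] at this
    omega
  · intro m hm hV
    rw [Finset.mem_Ico] at hm
    have := gp_pos hPW hne (show m + 1 < B.length by omega)
    simp only [Finset.mem_insert, Finset.mem_singleton] at hV
    omega
  · intro m hm m' hm' hne'
    rw [Finset.mem_Ico] at hm hm'
    exact gap_ne hne hPW hOR (by omega) (by omega) hne'

/-! ### explicit interval sums -/

lemma Ico_eq1 {a b : ℕ} (h : b = a + 1) : Finset.Ico a b = {a} := by
  subst h; ext m; simp only [Finset.mem_Ico, Finset.mem_singleton]; omega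

lemma Ico_eq2 {a b : ℕ} (h : b = a + 2) : Finset.Ico a b = {a, a + 1} := by
  subst h; ext m
  simp only [Finset.mem_Ico, Finset.mem_insert, Finset.mem_singleton]; omega

lemma Ico_eq3 {a b : ℕ} (h : b = a + 3) : Finset.Ico a b = {a, a + 1, a + 2} := by
  subst h; ext m
  simp only [Finset.mem_Ico, Finset.mem_insert, Finset.mem_singleton]; omega

lemma Ico_eq4 {a b : ℕ} (h : b = a + 4) : Finset.Ico a b = {a, a + 1, a + 2, a + 3} := by
  subst h; ext m
  simp only [Finset.mem_Ico, Finset.mem_insert, Finset.mem_singleton]; omega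

lemma SG_eq1 (i : ℕ) : SG B i (i + 1) = gp B i := by
  unfold SG; rw [Ico_eq1 rfl, Finset.sum_singleton]

lemma SG_eq2 (i : ℕ) : SG B i (i + 2) = gp B i + gp B (i + 1) := by
  unfold SG; rw [Ico_eq2 rfl, Finset.sum_pair (by omega)]

lemma SG_eq3 (i : ℕ) : SG B i (i + 3) = gp B i + gp B (i + 1) + gp B (i + 2) := by
  unfold SG
  rw [Ico_eq3 rfl, Finset.sum_insert (by simp only [Finset.mem_insert, Finset.mem_singleton]; omega), Finset.sum_pair (show i + 1 ≠ i + 2 by omega)]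
  ring

lemma SG_eq4 (i : ℕ) : SG B i (i + 4) = gp B i + gp B (i + 1) + gp B (i + 2) + gp B (i + 3) := by
  unfold SG
  rw [Ico_eq4 rfl, Finset.sum_insert (by simp only [Finset.mem_insert, Finset.mem_singleton]; omega), Finset.sum_insert (by simp only [Finset.mem_insert, Finset.mem_singleton]; omega), Finset.sum_pair (show i + 2 ≠ i + 3 by omega)]
  ring

lemma SPP_eq1 (i : ℕ) : SPP B i (i + 1) = 0 := by
  unfold SPP; rw [Finset.Ico_self, Finset.sum_empty]

lemma SPP_eq2 (i : ℕ) : SPP B i (i + 2) = sp B (i + 1) := by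
  unfold SPP; rw [Ico_eq1 (by omega), Finset.sum_singleton]

lemma SPP_eq3 (i : ℕ) : SPP B i (i + 3) = sp B (i + 1) + sp B (i + 2) := by
  unfold SPP; rw [Ico_eq2 (by omega), Finset.sum_pair (by omega)]

lemma SPP_eq4 (i : ℕ) : SPP B i (i + 4) = sp B (i + 1) + sp B (i + 2) + sp B (i + 3) := by
  unfold SPP
  rw [Ico_eq3 (by omega), Finset.sum_insert (by simp only [Finset.mem_insert, Finset.mem_singleton]; omega), Finset.sum_pair (show i + 1 + 1 ≠ i + 1 + 2 by omega)]
  have e1 : i + 1 + 1 = i + 2 := by omega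
  have e2 : i + 1 + 2 = i + 3 := by omega
  rw [e1, e2]
  ring

/-! ### structure of collisions at small times -/

include hne hPW hOR in
lemma decomp (h6 : 6 ≤ B.length) {t i j : ℕ} {x y : ℤ} (hc : Collide B t i j x y) :
    ∃ o1 o2 : ℤ, 0 ≤ o1 ∧ 0 ≤ o2 ∧ (6:ℤ) ∣ o1 ∧ (6:ℤ) ∣ o2 ∧
      (t : ℤ) * ((j : ℤ) - (i : ℤ)) = o1 + SG B i j + SPP B i j + o2 := by
  obtain ⟨hij, hj, hx, hy, heq⟩ := hc
  have hi : i < B.length := by omega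
  refine ⟨x - lst B i, hd B j - y, ?_, ?_, ?_, ?_, ?_⟩
  · have := lst_le hPW hi hx; omega
  · have := le_hd hPW hj hy; omega
  · exact blk_mod6 hne hPW hOR h6 hi hx (lst_mem hne hi)
  · exact blk_mod6 hne hPW hOR h6 hj (hd_mem hne hj) hy
  · have ht := tele' (B := B) hij
    omega

include hne hPW hOR in
lemma gap1 (h6 : 6 ≤ B.length) : ∃ i, i + 1 < B.length ∧ gp B i = 1 := by
  have hN := dim_ge hne hPW h6
  obtain ⟨i, j, x, y, hc⟩ := exE hPW (hOR 1 (by omega) (by omega))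
  obtain ⟨o1, o2, ho1, ho2, hdv1, hdv2, heq⟩ := decomp hne hPW hOR h6 hc
  obtain ⟨hij, hj, hx, hy, _⟩ := hc
  have hSG3 := SG_lb3 hne hPW hOR hj (le_of_lt hij)
  have hSPn := SPP_nonneg hne hPW (B := B) (i := i) (le_of_lt hj)
  have hk : j = i + 1 := by omega
  subst hk
  have hSG := SG_eq1 (B := B) i
  have hSPP := SPP_eq1 (B := B) i
  have hpos := gp_pos hPW hne hj
  exact ⟨i, hj, by omega⟩

include hne hPW hOR in
lemma gap_parity_chain (h6 : 6 ≤ B.length) {i : ℕ} (hi : i + 2 < B.length) :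
    (2:ℤ) ∣ gp B i - gp B (i + 1) := by
  have hdv := dvd_dist hPW hOR (show i < i + 2 by omega) hi
    (lst_mem hne (by omega)) (hd_mem hne hi)
  have hcast : ((i + 2 : ℕ) : ℤ) - (i : ℤ) = 2 := by push_cast; ring
  rw [hcast] at hdv
  have htele := tele' (B := B) (show i < i + 2 by omega)
  have hSG := SG_eq2 (B := B) i
  have hSPP := SPP_eq2 (B := B) i
  have hsp6 := sp_mod6 hne hPW hOR h6 (show i + 1 < B.length by omega)
  omega

include hne hPW hOR in
lemma gp_odd (h6 : 6 ≤ B.length) {i : ℕ} (hi : i + 1 < B.length) : (2:ℤ) ∣ gp B i - 1 := by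
  obtain ⟨i0, hi0, hg0⟩ := gap1 hne hPW hOR h6
  have chain : ∀ b a : ℕ, a ≤ b → b + 1 < B.length → (2:ℤ) ∣ gp B a - gp B b := by
    intro b
    induction b with
    | zero =>
      intro a ha _
      have : a = 0 := by omega
      subst this; simp
    | succ b ih =>
      intro a ha hb
      rcases Nat.eq_or_lt_of_le ha with h | h
      · subst h; simp
      · have h1 := ih a (by omega) (by omega)
        have h2 := gap_parity_chain hne hPW hOR h6 (show b + 2 < B.length by omega)
        have h3 : gp B (b + 1) = gp B (b + 1) := rfl
        omega
  rcases le_total i i0 with h | h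
  · have := chain i0 i h hi0; omega
  · have := chain i i0 h hi; omega

include hne hPW hOR in
lemma SG_lb9 (h6 : 6 ≤ B.length) {i j : ℕ} (hj : j < B.length) (hij : i ≤ j) :
    9 * ((j : ℤ) - i) - 20 ≤ SG B i j := by
  have := genLB (Finset.Ico i j) (gp B) {1, 3, 5, 7} 9
    (by intro v hv; fin_cases hv <;> norm_num) ?_ ?_
  · rw [Nat.card_Ico] at this
    have hV : ∑ v ∈ ({1, 3, 5, 7} : Finset ℤ), ((9:ℤ) - v) = 20 := by decide
    rw [hV] at this
    unfold SG
    have hc : ((j - i : ℕ) : ℤ) = (j : ℤ) - i := by omega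
    rw [hc] at this
    omega
  · intro m hm hV
    rw [Finset.mem_Ico] at hm
    have hpos := gp_pos hPW hne (show m + 1 < B.length by omega)
    have hodd := gp_odd hne hPW hOR h6 (show m + 1 < B.length by omega)
    simp only [Finset.mem_insert, Finset.mem_singleton] at hV
    omega
  · intro m hm m' hm' hne'
    rw [Finset.mem_Ico] at hm hm'
    exact gap_ne hne hPW hOR (by omega) (by omega) hne'

include hne hPW hOR in
lemma SG_par (h6 : 6 ≤ B.length) {i j : ℕ} (hij : i ≤ j) (hj : j < B.length) :
    (2:ℤ) ∣ SG B i j - ((j : ℤ) - i) := by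
  have hkey : SG B i j - ((j : ℤ) - i) = ∑ m ∈ Finset.Ico i j, (gp B m - 1) := by
    rw [Finset.sum_sub_distrib, Finset.sum_const, Nat.card_Ico]
    have hc : ((j - i : ℕ) : ℤ) = (j : ℤ) - i := by omega
    unfold SG
    rw [nsmul_eq_mul, hc]
    ring
  rw [hkey]
  apply Finset.dvd_sum
  intro m hm
  rw [Finset.mem_Ico] at hm
  exact gp_odd hne hPW hOR h6 (show m + 1 < B.length by omega)

include hne hPW hOR in
lemma mod3_triple (h6 : 6 ≤ B.length) {a b c : ℕ} (hb : b = a + 1) (hc : c = a + 2)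
    (h : a + 3 < B.length) : (3:ℤ) ∣ gp B a + gp B b + gp B c := by
  subst hb hc
  have hdv := dvd_dist hPW hOR (show a < a + 3 by omega) h
    (lst_mem hne (by omega)) (hd_mem hne h)
  have hcast : ((a + 3 : ℕ) : ℤ) - (a : ℤ) = 3 := by push_cast; ring
  rw [hcast] at hdv
  have htele := tele' (B := B) (show a < a + 3 by omega)
  have hSG := SG_eq3 (B := B) a
  have hSPP := SPP_eq3 (B := B) a
  have hsp1 := sp_mod6 hne hPW hOR h6 (show a + 1 < B.length by omega)
  have hsp2 := sp_mod6 hne hPW hOR h6 (show a + 2 < B.length by omega)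
  omega

include hne hPW hOR in
lemma t2struct (h6 : 6 ≤ B.length) :
    ∃ p, p + 2 < B.length ∧ gp B p + gp B (p + 1) = 4 ∧ sp B (p + 1) = 0 := by
  have hN := dim_ge hne hPW h6
  obtain ⟨i, j, x, y, hc⟩ := exE hPW (hOR 2 (by omega) (by omega))
  obtain ⟨o1, o2, ho1, ho2, hdv1, hdv2, heq⟩ := decomp hne hPW hOR h6 hc
  obtain ⟨hij, hj, hx, hy, _⟩ := hc
  have hSG9 := SG_lb9 hne hPW hOR h6 hj (le_of_lt hij)
  have hpar := SG_par hne hPW hOR h6 (le_of_lt hij) hj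
  have hSPP6 := SPP_mod6 hne hPW hOR h6 (B := B) (i := i) (le_of_lt hj)
  have hSPn := SPP_nonneg hne hPW (B := B) (i := i) (le_of_lt hj)
  have hSG0 := SG_lb0 hne hPW hOR (B := B) (i := i) hj
  have hk : j = i + 2 := by omega
  subst hk
  have hSG := SG_eq2 (B := B) i
  have hSPP := SPP_eq2 (B := B) i
  have hodd1 := gp_odd hne hPW hOR h6 (show i + 1 < B.length by omega)
  have hodd2 := gp_odd hne hPW hOR h6 (show i + 1 + 1 < B.length by omega)
  have hne12 := gap_ne hne hPW hOR (show i + 1 < B.length by omega)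
    (show i + 1 + 1 < B.length by omega) (show i ≠ i + 1 by omega)
  have hpos1 := gp_pos hPW hne (show i + 1 < B.length by omega)
  have hpos2 := gp_pos hPW hne (show i + 1 + 1 < B.length by omega)
  have hsp6 := sp_mod6 hne hPW hOR h6 (show i + 1 < B.length by omega)
  have hspn := sp_nonneg hPW hne (show i + 1 < B.length by omega)
  exact ⟨i, hj, by omega, by omega⟩

include hne hPW in
lemma collide_k2 {a b c t : ℕ} (hb : b = a + 1) (hcc : c = a + 2) (hcs : c < B.length)
    (hsum : gp B a + gp B b = 2 * t) (hsp : sp B b = 0) :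
    Collide B t a c (lst B a) (hd B c) := by
  subst hb hcc
  refine ⟨by omega, hcs, lst_mem hne (by omega), hd_mem hne hcs, ?_⟩
  have htele := tele' (B := B) (show a < a + 2 by omega)
  have hSG := SG_eq2 (B := B) a
  have hSPP := SPP_eq2 (B := B) a
  have hcast : ((a + 2 : ℕ) : ℤ) - (a : ℤ) = 2 := by push_cast; ring
  rw [hcast]
  omega

include hne hPW in
lemma collide_k3 {a b c d t : ℕ} (hb : b = a + 1) (hcc : c = a + 2) (hdd : d = a + 3)
    (hds : d < B.length)
    (hsum : gp B a + gp B b + gp B c = 3 * t) (hsp1 : sp B b = 0) (hsp2 : sp B c = 0) :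
    Collide B t a d (lst B a) (hd B d) := by
  subst hb hcc hdd
  refine ⟨by omega, hds, lst_mem hne (by omega), hd_mem hne hds, ?_⟩
  have htele := tele' (B := B) (show a < a + 3 by omega)
  have hSG := SG_eq3 (B := B) a
  have hSPP := SPP_eq3 (B := B) a
  have hcast : ((a + 3 : ℕ) : ℤ) - (a : ℤ) = 3 := by push_cast; ring
  rw [hcast]
  omega

include hne hPW hOR in
lemma t4struct (h6 : 6 ≤ B.length) :
    ∃ q, q + 2 < B.length ∧ gp B q + gp B (q + 1) = 8 ∧ sp B (q + 1) = 0 := by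
  have hN := dim_ge hne hPW h6
  obtain ⟨i, j, x, y, hc⟩ := exE hPW (hOR 4 (by omega) (by omega))
  obtain ⟨o1, o2, ho1, ho2, hdv1, hdv2, heq⟩ := decomp hne hPW hOR h6 hc
  obtain ⟨hij, hj, hx, hy, hceq⟩ := id hc
  have hSG9 := SG_lb9 hne hPW hOR h6 hj (le_of_lt hij)
  have hpar := SG_par hne hPW hOR h6 (le_of_lt hij) hj
  have hSPP6 := SPP_mod6 hne hPW hOR h6 (B := B) (i := i) (le_of_lt hj)
  have hSPn := SPP_nonneg hne hPW (B := B) (i := i) (le_of_lt hj)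
  have hSG0 := SG_lb0 hne hPW hOR (B := B) (i := i) hj
  have hk : j = i + 2 ∨ j = i + 4 := by omega
  rcases hk with hk | hk
  · subst hk
    have hSG := SG_eq2 (B := B) i
    have hSPP := SPP_eq2 (B := B) i
    have hodd1 := gp_odd hne hPW hOR h6 (show i + 1 < B.length by omega)
    have hodd2 := gp_odd hne hPW hOR h6 (show i + 1 + 1 < B.length by omega)
    have hne12 := gap_ne hne hPW hOR (show i + 1 < B.length by omega)
      (show i + 1 + 1 < B.length by omega) (show i ≠ i + 1 by omega)
    have hpos1 := gp_pos hPW hne (show i + 1 < B.length by omega)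
    have hpos2 := gp_pos hPW hne (show i + 1 + 1 < B.length by omega)
    have hsp6 := sp_mod6 hne hPW hOR h6 (show i + 1 < B.length by omega)
    have hspn := sp_nonneg hPW hne (show i + 1 < B.length by omega)
    exact ⟨i, hj, by omega, by omega⟩
  · subst hk
    exfalso
    have hSG := SG_eq4 (B := B) i
    have hSPP := SPP_eq4 (B := B) i
    have ho1 := gp_odd hne hPW hOR h6 (show i + 1 < B.length by omega)
    have ho2 := gp_odd hne hPW hOR h6 (show (i+1) + 1 < B.length by omega)
    have ho3 := gp_odd hne hPW hOR h6 (show (i+2) + 1 < B.length by omega)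
    have ho4 := gp_odd hne hPW hOR h6 (show (i+3) + 1 < B.length by omega)
    have hp1 := gp_pos hPW hne (show i + 1 < B.length by omega)
    have hp2 := gp_pos hPW hne (show (i+1) + 1 < B.length by omega)
    have hp3 := gp_pos hPW hne (show (i+2) + 1 < B.length by omega)
    have hp4 := gp_pos hPW hne (show (i+3) + 1 < B.length by omega)
    have hd14 := gap_ne hne hPW hOR (show i + 1 < B.length by omega)
      (show (i+3) + 1 < B.length by omega) (show i ≠ i + 3 by omega)
    have hd23 := gap_ne hne hPW hOR (show (i+1) + 1 < B.length by omega)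
      (show (i+2) + 1 < B.length by omega) (show i + 1 ≠ i + 2 by omega)
    have hm3a := mod3_triple hne hPW hOR h6 rfl rfl (show i + 3 < B.length by omega)
    have hm3b := mod3_triple hne hPW hOR h6 (show i + 2 = (i+1) + 1 by omega)
      (show i + 3 = (i+1) + 2 by omega) (show (i+1) + 3 < B.length by omega)
    have hsn1 := sp_nonneg hPW hne (show i + 1 < B.length by omega)
    have hsn2 := sp_nonneg hPW hne (show i + 2 < B.length by omega)
    have hsn3 := sp_nonneg hPW hne (show i + 3 < B.length by omega)
    -- conclude : middle pair sums to 8, middle span is 0, giving a second collision at t = 4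
    have hmid : gp B (i+1) + gp B (i+2) = 2 * 4 := by omega
    have hsp2 : sp B (i+2) = 0 := by omega
    have c2 := collide_k2 hne hPW (show i + 2 = (i+1) + 1 by omega)
      (show i + 3 = (i+1) + 2 by omega) (show i + 3 < B.length by omega) hmid hsp2
    exact exU hPW (hOR 4 (by omega) (by omega)) hc c2 (by omega)

include hne hPW hOR in
lemma final_kill (h6 : 6 ≤ B.length) {a b c : ℕ} (hb : b = a + 1) (hcc : c = a + 2)
    (ha : a + 3 < B.length)
    (h1 : gp B a + gp B b + gp B c = 9) (h2 : gp B b = 3)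
    (hs1 : sp B b = 0) (hs2 : sp B c = 0) : False := by
  subst hb hcc
  have hN := dim_ge hne hPW h6
  have c1 : Collide B 3 (a+1) ((a+1) + 1) (lst B (a+1)) (hd B ((a+1)+1)) := by
    apply collide_gap hne hPW hOR (show (a+1) + 1 < B.length by omega)
    rw [h2]; norm_num
  have c2 := collide_k3 hne hPW (t := 3) (show a + 1 = a + 1 from rfl) rfl rfl
    (show a + 3 < B.length from ha) (by omega) hs1 hs2
  exact exU hPW (hOR 3 (by omega) (by omega)) c1 c2 (by omega)

include hne hPW hOR in
lemma contradiction_main (h6 : 6 ≤ B.length) : False := by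
  obtain ⟨p, hp2, hpsum, hpsp⟩ := t2struct hne hPW hOR h6
  obtain ⟨q, hq2, hqsum, hqsp⟩ := t4struct hne hPW hOR h6
  have hop := gp_odd hne hPW hOR h6 (show p + 1 < B.length by omega)
  have hop1 := gp_odd hne hPW hOR h6 (show (p+1) + 1 < B.length by omega)
  have hoq := gp_odd hne hPW hOR h6 (show q + 1 < B.length by omega)
  have hoq1 := gp_odd hne hPW hOR h6 (show (q+1) + 1 < B.length by omega)
  have hpp := gp_pos hPW hne (show p + 1 < B.length by omega)
  have hpp1 := gp_pos hPW hne (show (p+1) + 1 < B.length by omega)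
  have hqq := gp_pos hPW hne (show q + 1 < B.length by omega)
  have hqq1 := gp_pos hPW hne (show (q+1) + 1 < B.length by omega)
  have hnepp := gap_ne hne hPW hOR (show p + 1 < B.length by omega)
    (show (p+1) + 1 < B.length by omega) (show p ≠ p + 1 by omega)
  have hneqq := gap_ne hne hPW hOR (show q + 1 < B.length by omega)
    (show (q+1) + 1 < B.length by omega) (show q ≠ q + 1 by omega)
  have poseq : ∀ a b : ℕ, a + 1 < B.length → b + 1 < B.length → gp B a = gp B b → a = b := by
    intro a b ha hb hab
    by_contra hcon
    exact gap_ne hne hPW hOR ha hb hcon hab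
  have hcase_p : (gp B p = 1 ∧ gp B (p+1) = 3) ∨ (gp B p = 3 ∧ gp B (p+1) = 1) := by omega
  have hcase_q : (gp B q = 1 ∧ gp B (q+1) = 7) ∨ (gp B q = 7 ∧ gp B (q+1) = 1) ∨
      (gp B q = 3 ∧ gp B (q+1) = 5) ∨ (gp B q = 5 ∧ gp B (q+1) = 3) := by omega
  rcases hcase_p with ⟨hp1, hp3⟩ | ⟨hp3, hp1⟩
  · rcases hcase_q with ⟨h1, h2⟩ | ⟨h1, h2⟩ | ⟨h1, h2⟩ | ⟨h1, h2⟩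
    · -- p = (1,3), q = (1,7)
      have e : p = q := poseq p q (by omega) (by omega) (by omega)
      rw [e] at hp3
      omega
    · -- p = (1,3), q = (7,1)
      have e : p = q + 1 := poseq p (q+1) (by omega) (by omega) (by omega)
      rw [e] at hp3
      have ht := mod3_triple hne hPW hOR h6 (a := q) (b := q+1) (c := q+1+1) rfl (by omega)
        (show q + 3 < B.length by omega)
      omega
    · -- p = (1,3), q = (3,5)
      have e : p + 1 = q := poseq (p+1) q (by omega) (by omega) (by omega)
      exact final_kill hne hPW hOR h6 (a := p) (b := p+1) (c := q+1) rfl (by omega)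
        (by omega) (by omega) hp3 hpsp hqsp
    · -- p = (1,3), q = (5,3)
      have e : p + 1 = q + 1 := poseq (p+1) (q+1) (by omega) (by omega) (by omega)
      have e2 : p = q := by omega
      rw [e2] at hp1
      omega
  · rcases hcase_q with ⟨h1, h2⟩ | ⟨h1, h2⟩ | ⟨h1, h2⟩ | ⟨h1, h2⟩
    · -- p = (3,1), q = (1,7)
      have e : p + 1 = q := poseq (p+1) q (by omega) (by omega) (by omega)
      have ht := mod3_triple hne hPW hOR h6 (a := p) (b := p+1) (c := q+1) rfl (by omega)
        (show p + 3 < B.length by omega)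
      omega
    · -- p = (3,1), q = (7,1)
      have e : p + 1 = q + 1 := poseq (p+1) (q+1) (by omega) (by omega) (by omega)
      have e2 : p = q := by omega
      rw [e2] at hp3
      omega
    · -- p = (3,1), q = (3,5)
      have e : p = q := poseq p q (by omega) (by omega) (by omega)
      rw [e] at hp1
      omega
    · -- p = (3,1), q = (5,3)
      have e : p = q + 1 := poseq p (q+1) (by omega) (by omega) (by omega)
      exact final_kill hne hPW hOR h6 (a := q) (b := q+1) (c := p+1) rfl (by omega)
        (by omega) (by omega) h2 hqsp hpsp

end Ulrich2
end Layer2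

/-- There are no Ulrich partitions with 6 or more blocks. -/
theorem stmt3 (B : List (List ℤ)) (h6 : 6 ≤ B.length) : ¬ IsUlrichGen B := by
  intro hU
  obtain ⟨hne, hsd, hOR⟩ := hU
  have hPW : B.flatten.Pairwise (· > ·) := by
    unfold StrictDec at hsd
    rw [Layer2.evolve0] at hsd
    exact List.isChain_iff_pairwise.mp hsd
  exact Layer2.contradiction_main hne hPW hOR h6
end

section
/- If (A | b_1, b_2 | C) is an Ulrich partition with three blocks where the middle block has exactly two entries, then b_1 - b_2 ∈ {1, 3, 5}. -/
lemma list_sum_count (l : List ℤ) : ∑ a ∈ l.toFinset, l.count a = l.length := by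
  have := Multiset.toFinset_sum_count_eq (l : Multiset ℤ); simpa using this

lemma not_onerep_of_two (l : List ℤ) (x y : ℤ) (hxy : x ≠ y)
    (hx : 2 ≤ l.count x) (hy : 2 ≤ l.count y) : ¬ OneRepeat l := by
  intro h
  have hxm : x ∈ l.toFinset := List.mem_toFinset.mpr (List.count_pos_iff.mp (by omega))
  have hym : y ∈ l.toFinset := List.mem_toFinset.mpr (List.count_pos_iff.mp (by omega))
  have hle : ∀ a ∈ l.toFinset,
      (1 : ℕ) + ((if a = x then 1 else 0) + (if a = y then 1 else 0)) ≤ l.count a := by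
    intro a ha
    have h1 : 0 < l.count a := List.count_pos_iff.mpr (List.mem_toFinset.mp ha)
    by_cases hax : a = x
    · subst hax; rw [if_pos rfl, if_neg hxy]; omega
    · by_cases hay : a = y
      · subst hay; rw [if_neg hax, if_pos rfl]; omega
      · rw [if_neg hax, if_neg hay]; omega
  have hsum := Finset.sum_le_sum hle
  rw [list_sum_count] at hsum
  rw [Finset.sum_add_distrib, Finset.sum_add_distrib, Finset.sum_const, smul_eq_mul, mul_one,
    Finset.sum_ite_eq' l.toFinset x (fun _ => 1), Finset.sum_ite_eq' l.toFinset y (fun _ => 1),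
    if_pos hxm, if_pos hym] at hsum
  unfold OneRepeat at h
  omega

lemma onerep_dup (l : List ℤ) (h : OneRepeat l) : ∃ v, 2 ≤ l.count v := by
  by_contra hc
  push_neg at hc
  have hnd : l.Nodup := List.nodup_iff_count_le_one.mpr (fun a => by have := hc a; omega)
  have := List.toFinset_card_of_nodup hnd
  unfold OneRepeat at h
  omega

lemma count_evolve (A B C : List ℤ) (t v : ℤ) :
    (evolve3 A B C t).count v = A.count (v + t) + B.count v + C.count (v - t) := by
  unfold evolve3
  rw [List.count_append, List.count_append]
  have hA : (A.map (· - t)).count v = A.count (v + t) := by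
    have hinj : Function.Injective (· - t : ℤ → ℤ) := fun a b hab => by dsimp at hab; omega
    have := List.count_map_of_injective (x := v + t) A (· - t) hinj
    simpa using this
  have hC : (C.map (· + t)).count v = C.count (v - t) := by
    have hinj : Function.Injective (· + t : ℤ → ℤ) := fun a b hab => by dsimp at hab; omega
    have := List.count_map_of_injective (x := v - t) C (· + t) hinj
    simpa using this
  rw [hA, hC]

lemma facts {A C : List ℤ} {b1 b2 : ℤ} (hU : IsUlrich3 A [b1, b2] C) :
    (∀ x ∈ A, b1 < x) ∧ (∀ y ∈ C, y < b2) ∧ b2 < b1 ∧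
      (∀ v : ℤ, A.count v ≤ 1) ∧ (∀ v : ℤ, C.count v ≤ 1) := by
  have h := hU.2.2.1
  unfold StrictDec List.Chain' evolve3 at h
  rw [List.isChain_iff_pairwise] at h
  simp only [sub_zero, add_zero, List.map_id'] at h
  rw [List.pairwise_append, List.pairwise_append] at h
  obtain ⟨⟨hA, hB, hAB⟩, hC, hX⟩ := h
  have hb : b2 < b1 := by
    have := List.pairwise_cons.mp hB
    simpa using this.1 b2 (by simp)
  refine ⟨fun x hx => hAB x hx b1 (by simp), fun y hy => hX b2 (by simp) y hy, hb, ?_, ?_⟩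
  · exact List.nodup_iff_count_le_one.mp (hA.imp (fun {a b} hab => ne_of_gt hab))
  · exact List.nodup_iff_count_le_one.mp (hC.imp (fun {a b} hab => ne_of_gt hab))

lemma collide {A C : List ℤ} {b1 b2 : ℤ} (hU : IsUlrich3 A [b1, b2] C) (t : ℕ)
    (h1 : 1 ≤ t) (h2 : t ≤ dim3 A [b1, b2] C) :
    ∃ v : ℤ, ((v + t ∈ A ∧ (v = b1 ∨ v = b2)) ∨ ((v = b1 ∨ v = b2) ∧ v - t ∈ C) ∨
      (v + t ∈ A ∧ v - t ∈ C)) := by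
  obtain ⟨_, _, hb, cA, cC⟩ := facts hU
  obtain ⟨v, hv⟩ := onerep_dup _ (hU.2.2.2 t h1 h2)
  rw [count_evolve] at hv
  refine ⟨v, ?_⟩
  have hA1 := cA (v + t)
  have hC1 := cC (v - t)
  have hB1 : List.count v [b1, b2] ≤ 1 := by
    by_cases h : v = b1
    · subst h; simp [List.count_cons]; omega
    · by_cases h2 : v = b2
      · subst h2; simp [List.count_cons, Ne.symm h]
      · simp [List.count_cons, h, h2, Ne.symm h, Ne.symm h2]
  have trich : (0 < A.count (v + (t:ℤ)) ∧ 0 < List.count v [b1, b2]) ∨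
      (0 < List.count v [b1, b2] ∧ 0 < C.count (v - t)) ∨
      (0 < A.count (v + (t:ℤ)) ∧ 0 < C.count (v - t)) := by omega
  have hmem : 0 < List.count v [b1, b2] → (v = b1 ∨ v = b2) := by
    intro h; have := List.count_pos_iff.mp h; simpa using this
  rcases trich with ⟨u1, u2⟩ | ⟨u1, u2⟩ | ⟨u1, u2⟩
  · exact Or.inl ⟨List.count_pos_iff.mp u1, hmem u2⟩
  · exact Or.inr (Or.inl ⟨hmem u1, List.count_pos_iff.mp u2⟩)
  · exact Or.inr (Or.inr ⟨List.count_pos_iff.mp u1, List.count_pos_iff.mp u2⟩)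

lemma counting {A C : List ℤ} {b1 b2 : ℤ} (hU : IsUlrich3 A [b1, b2] C) :
    (∀ x ∈ A, ∀ y ∈ C, (x - y) % 2 = 0) ∧
    (∀ x ∈ A, ∀ y ∈ C, ∃ t : ℕ, 1 ≤ t ∧ t ≤ dim3 A [b1, b2] C ∧ 2 * (t : ℤ) = x - y) := by
  classical
  obtain ⟨hA, hC, hb, cA, cC⟩ := facts hU
  set N := dim3 A [b1, b2] C with hN
  have ndA : A.Nodup := List.nodup_iff_count_le_one.mpr cA
  have ndC : C.Nodup := List.nodup_iff_count_le_one.mpr cC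
  have hαA : A.toFinset.card = A.length := List.toFinset_card_of_nodup ndA
  have hγC : C.toFinset.card = C.length := List.toFinset_card_of_nodup ndC
  have hcol : ∀ t : ℕ, 1 ≤ t → t ≤ N → ∃ w : ℤ, ((w + t ∈ A ∧ (w = b1 ∨ w = b2)) ∨
      ((w = b1 ∨ w = b2) ∧ w - t ∈ C) ∨ (w + t ∈ A ∧ w - t ∈ C)) :=
    fun t h1 h2 => collide hU t h1 h2
  choose! v hv using hcol
  set g : ℕ → ℤ × ℤ := fun t =>
    (if v t + t ∈ A then v t + t else v t, if v t - t ∈ C then v t - t else v t) with hg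
  set S1 := A.toFinset ×ˢ ({b1, b2} : Finset ℤ) with hS1
  set S2 := ({b1, b2} : Finset ℤ) ×ˢ C.toFinset with hS2
  set S3 := (A.toFinset ×ˢ C.toFinset).filter (fun p => (p.1 - p.2) % 2 = 0) with hS3
  set S := S1 ∪ S2 ∪ S3 with hS
  set T := Finset.Icc 1 N with hT
  have key : ∀ t ∈ T, ((g t).1 ∈ A ∧ ((g t).2 = b1 ∨ (g t).2 = b2) ∧ (g t).1 - (g t).2 = t)
      ∨ ((g t).1 ∈ A ∧ (g t).2 ∈ C ∧ (g t).1 - (g t).2 = 2 * t)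
      ∨ ((((g t).1 = b1 ∨ (g t).1 = b2)) ∧ (g t).2 ∈ C ∧ (g t).1 - (g t).2 = t) := by
    intro t ht
    rw [hT, Finset.mem_Icc] at ht
    have hvt := hv t ht.1 ht.2
    by_cases m1 : v t + (t : ℤ) ∈ A <;> by_cases m2 : v t - (t : ℤ) ∈ C
    · refine Or.inr (Or.inl ?_)
      simp only [hg, if_pos m1, if_pos m2]
      exact ⟨m1, m2, by ring⟩
    · have hB : v t = b1 ∨ v t = b2 := by
        rcases hvt with ⟨_, h⟩ | ⟨h, hc⟩ | ⟨_, hc⟩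
        · exact h
        · exact h
        · exact absurd hc m2
      refine Or.inl ?_
      simp only [hg, if_pos m1, if_neg m2]
      exact ⟨m1, hB, by ring⟩
    · have hB : v t = b1 ∨ v t = b2 := by
        rcases hvt with ⟨h, _⟩ | ⟨h, hc⟩ | ⟨h, _⟩
        · exact absurd h m1
        · exact h
        · exact absurd h m1
      refine Or.inr (Or.inr ?_)
      simp only [hg, if_neg m1, if_pos m2]
      exact ⟨hB, m2, by ring⟩
    · exfalso
      rcases hvt with ⟨h, _⟩ | ⟨_, h⟩ | ⟨h, _⟩
      · exact m1 h
      · exact m2 h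
      · exact m1 h
  have hmaps : ∀ t ∈ T, g t ∈ S := by
    intro t ht
    rcases key t ht with ⟨h1, h2, _⟩ | ⟨h1, h2, h3⟩ | ⟨h1, h2, _⟩
    · refine Finset.mem_union_left _ (Finset.mem_union_left _ ?_)
      rw [hS1, Finset.mem_product]
      exact ⟨List.mem_toFinset.mpr h1, by simp [h2]⟩
    · refine Finset.mem_union_right _ ?_
      rw [hS3, Finset.mem_filter, Finset.mem_product]
      exact ⟨⟨List.mem_toFinset.mpr h1, List.mem_toFinset.mpr h2⟩, by omega⟩
    · refine Finset.mem_union_left _ (Finset.mem_union_right _ ?_)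
      rw [hS2, Finset.mem_product]
      exact ⟨by simp [h1], List.mem_toFinset.mpr h2⟩
  have hinj : ∀ t1 ∈ T, ∀ t2 ∈ T, g t1 = g t2 → t1 = t2 := by
    intro t1 ht1 t2 ht2 he
    rcases key t1 ht1 with ⟨p1, p2, p3⟩ | ⟨p1, p2, p3⟩ | ⟨p1, p2, p3⟩ <;>
      rcases key t2 ht2 with ⟨q1, q2, q3⟩ | ⟨q1, q2, q3⟩ | ⟨q1, q2, q3⟩ <;>
      rw [he] at p1 p2 p3
    · omega
    · have := hC _ q2; rcases p2 with h | h <;> omega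
    · have := hA _ p1; rcases q1 with h | h <;> omega
    · have := hC _ p2; rcases q2 with h | h <;> omega
    · omega
    · have := hA _ p1; rcases q1 with h | h <;> omega
    · have := hA _ q1; rcases p1 with h | h <;> omega
    · have := hA _ q1; rcases p1 with h | h <;> omega
    · omega
  have d12 : Disjoint S1 S2 := by
    rw [Finset.disjoint_left]
    intro p hp1 hp2
    rw [hS1, Finset.mem_product] at hp1
    rw [hS2, Finset.mem_product] at hp2
    have h1 := hA _ (List.mem_toFinset.mp hp1.1)
    have h2 : p.1 = b1 ∨ p.1 = b2 := by
      have := hp2.1; simp at this; exact this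
    rcases h2 with h | h <;> omega
  have d123 : Disjoint (S1 ∪ S2) S3 := by
    rw [Finset.disjoint_left]
    intro p hp1 hp3
    rw [hS3, Finset.mem_filter, Finset.mem_product] at hp3
    have hpA := hA _ (List.mem_toFinset.mp hp3.1.1)
    have hpC := hC _ (List.mem_toFinset.mp hp3.1.2)
    rcases Finset.mem_union.mp hp1 with h | h
    · rw [hS1, Finset.mem_product] at h
      have : p.2 = b1 ∨ p.2 = b2 := by have := h.2; simp at this; exact this
      rcases this with h' | h' <;> omega
    · rw [hS2, Finset.mem_product] at h
      have : p.1 = b1 ∨ p.1 = b2 := by have := h.1; simp at this; exact this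
      rcases this with h' | h' <;> omega
  have cS1 : S1.card = A.length * 2 := by
    rw [hS1, Finset.card_product, hαA, Finset.card_pair (by omega : b1 ≠ b2)]
  have cS2 : S2.card = 2 * C.length := by
    rw [hS2, Finset.card_product, hγC, Finset.card_pair (by omega : b1 ≠ b2)]
  have cS3le : S3.card ≤ A.length * C.length := by
    calc S3.card ≤ (A.toFinset ×ˢ C.toFinset).card := by rw [hS3]; exact Finset.card_filter_le _ _
    _ = A.length * C.length := by rw [Finset.card_product, hαA, hγC]
  have cardS : S.card = A.length * 2 + 2 * C.length + S3.card := by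
    rw [hS, Finset.card_union_of_disjoint d123, Finset.card_union_of_disjoint d12, cS1, cS2]
  have cardT : T.card = N := by rw [hT, Nat.card_Icc]; omega
  have hle : T.card ≤ S.card := Finset.card_le_card_of_injOn g hmaps hinj
  have hNval : N = A.length * 2 + A.length * C.length + 2 * C.length := by
    rw [hN]; simp [dim3]; try ring
  have hS3card : S3.card = A.length * C.length := by omega
  have hS3eq : S3 = A.toFinset ×ˢ C.toFinset := by
    apply Finset.eq_of_subset_of_card_le
    · rw [hS3]; exact Finset.filter_subset _ _
    · rw [Finset.card_product, hαA, hγC, hS3card]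
  have F1 : ∀ x ∈ A, ∀ y ∈ C, (x - y) % 2 = 0 := by
    intro x hx y hy
    have hmem : (x, y) ∈ A.toFinset ×ˢ C.toFinset := by
      rw [Finset.mem_product]; exact ⟨List.mem_toFinset.mpr hx, List.mem_toFinset.mpr hy⟩
    rw [← hS3eq, hS3, Finset.mem_filter] at hmem
    exact hmem.2
  refine ⟨F1, ?_⟩
  intro x hx y hy
  have hcardle : S.card ≤ T.card := by omega
  have hsurj := Finset.surj_on_of_inj_on_of_card_le (s := T) (t := S) (fun a _ => g a)
    (fun a ha => hmaps a ha) (fun a1 a2 h1 h2 e => hinj a1 h1 a2 h2 e) hcardle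
  have hpS : (x, y) ∈ S := by
    refine Finset.mem_union_right _ ?_
    rw [hS3, Finset.mem_filter, Finset.mem_product]
    exact ⟨⟨List.mem_toFinset.mpr hx, List.mem_toFinset.mpr hy⟩, F1 x hx y hy⟩
  obtain ⟨t, ht, hpt⟩ := hsurj (x, y) hpS
  have hpt' : g t = (x, y) := hpt.symm
  have hg1 : (g t).1 = x := by rw [hpt']
  have hg2 : (g t).2 = y := by rw [hpt']
  rcases key t ht with ⟨p1, p2, p3⟩ | ⟨p1, p2, p3⟩ | ⟨p1, p2, p3⟩ <;> rw [hg1] at p1 p3 <;>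
    rw [hg2] at p2 p3
  · exfalso; have := hC _ hy; rcases p2 with h | h <;> omega
  · rw [hT, Finset.mem_Icc] at ht
    exact ⟨t, ht.1, ht.2, by omega⟩
  · exfalso; have := hA _ hx; rcases p1 with h | h <;> omega

lemma caseI {A C : List ℤ} {b1 b2 : ℤ} (hU : IsUlrich3 A [b1, b2] C) (ha : b1 + 1 ∈ A) :
    b1 - b2 = 1 ∨ b1 - b2 = 3 ∨ b1 - b2 = 5 := by
  obtain ⟨hA, hC, hb, cA, cC⟩ := facts hU
  obtain ⟨par, F2⟩ := counting hU
  obtain ⟨c0, hc0⟩ := List.exists_mem_of_ne_nil C hU.2.1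
  have parC : ∀ y ∈ C, (b1 + 1 - y) % 2 = 0 := fun y hy => par _ ha _ hy
  have parA : ∀ x ∈ A, (x - (b1 + 1)) % 2 = 0 := by
    intro x hx
    have h1 := par x hx c0 hc0
    have h2 := parC c0 hc0
    omega
  have hαpos : 1 ≤ A.length := List.length_pos_iff.mpr hU.1
  have hγpos : 1 ≤ C.length := List.length_pos_iff.mpr hU.2.1
  have hN5 : 5 ≤ dim3 A [b1, b2] C := by
    have : 1 * 1 ≤ A.length * C.length := Nat.mul_le_mul hαpos hγpos
    simp only [dim3, List.length_cons, List.length_nil]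
    omega
  -- Step 1 : b1 - b2 is odd
  have hodd : (b1 - b2) % 2 = 1 := by
    rcases Int.emod_two_eq_zero_or_one (b1 - b2) with he | he
    swap; · exact he
    exfalso
    obtain ⟨v, hv⟩ := collide hU 2 (by omega) (by omega)
    push_cast at hv
    rcases hv with ⟨hvA, hvB⟩ | ⟨hvB, hvC⟩ | ⟨hvA, hvC⟩
    · rcases hvB with rfl | rfl
      · have := parA _ hvA; omega
      · have := hA _ hvA; omega
    · rcases hvB with rfl | rfl
      · have := hC _ hvC; omega
      · have := parC _ hvC; omega
    · have h1 := hA _ hvA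
      have h2 := hC _ hvC
      have hd2 : b1 - b2 = 2 := by omega
      have hbC : b2 - 1 ∈ C := by
        have hveq : v - 2 = b2 - 1 := by omega
        rwa [hveq] at hvC
      have h1r := hU.2.2.2 1 (by omega) (by omega)
      push_cast at h1r
      refine not_onerep_of_two _ b1 b2 (by omega) ?_ ?_ h1r
      · rw [count_evolve]
        have m1 : 0 < A.count (b1 + 1) := List.count_pos_iff.mpr ha
        have m2 : 0 < List.count b1 [b1, b2] := List.count_pos_iff.mpr (by simp)
        omega
      · rw [count_evolve]
        have m1 : 0 < C.count (b2 - 1) := List.count_pos_iff.mpr hbC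
        have m2 : 0 < List.count b2 [b1, b2] := List.count_pos_iff.mpr (by simp)
        omega
  -- Step 2 : b1 - b2 < 7
  have hlt : b1 - b2 < 7 := by
    by_contra hge
    push_neg at hge
    -- t = 2 : b2 - 2 ∈ C
    obtain ⟨v, hv⟩ := collide hU 2 (by omega) (by omega)
    push_cast at hv
    have hc2 : b2 - 2 ∈ C := by
      rcases hv with ⟨hvA, hvB⟩ | ⟨hvB, hvC⟩ | ⟨hvA, hvC⟩
      · rcases hvB with rfl | rfl
        · exfalso; have := parA _ hvA; omega
        · exfalso; have := hA _ hvA; omega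
      · rcases hvB with rfl | rfl
        · exfalso; have := hC _ hvC; omega
        · exact hvC
      · exfalso; have h1 := hA _ hvA; have h2 := hC _ hvC; omega
    -- t = 3 : b1 + 3 ∈ A
    obtain ⟨v, hv3⟩ := collide hU 3 (by omega) (by omega)
    push_cast at hv3
    have ha3 : b1 + 3 ∈ A := by
      rcases hv3 with ⟨hvA, hvB⟩ | ⟨hvB, hvC⟩ | ⟨hvA, hvC⟩
      · rcases hvB with rfl | rfl
        · exact hvA
        · exfalso; have := hA _ hvA; omega
      · rcases hvB with rfl | rfl
        · exfalso; have := hC _ hvC; omega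
        · exfalso; have := parC _ hvC; omega
      · exfalso; have h1 := hA _ hvA; have h2 := hC _ hvC; omega
    -- t = 4 : b2 - 4 ∈ C
    obtain ⟨v, hv4⟩ := collide hU 4 (by omega) (by omega)
    push_cast at hv4
    have hc4 : b2 - 4 ∈ C := by
      rcases hv4 with ⟨hvA, hvB⟩ | ⟨hvB, hvC⟩ | ⟨hvA, hvC⟩
      · rcases hvB with rfl | rfl
        · exfalso; have := parA _ hvA; omega
        · exfalso; have := hA _ hvA; omega
      · rcases hvB with rfl | rfl
        · exfalso; have := hC _ hvC; omega
        · exact hvC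
      · exfalso; have h1 := hA _ hvA; have h2 := hC _ hvC; omega
    -- the double collision at t* with 2 t* = (b1+1) - (b2-4)
    obtain ⟨t, ht1, htN, hteq⟩ := F2 _ ha _ hc4
    have honer := hU.2.2.2 t ht1 htN
    refine not_onerep_of_two _ (b1 + 1 - t) (b1 + 3 - t) (by omega) ?_ ?_ honer
    · rw [count_evolve]
      have m1 : 0 < A.count (b1 + 1 - t + t) := by
        have : b1 + 1 - (t : ℤ) + t = b1 + 1 := by ring
        rw [this]; exact List.count_pos_iff.mpr ha
      have m2 : 0 < C.count (b1 + 1 - t - t) := by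
        have : b1 + 1 - (t : ℤ) - t = b2 - 4 := by omega
        rw [this]; exact List.count_pos_iff.mpr hc4
      omega
    · rw [count_evolve]
      have m1 : 0 < A.count (b1 + 3 - t + t) := by
        have : b1 + 3 - (t : ℤ) + t = b1 + 3 := by ring
        rw [this]; exact List.count_pos_iff.mpr ha3
      have m2 : 0 < C.count (b1 + 3 - t - t) := by
        have : b1 + 3 - (t : ℤ) - t = b2 - 2 := by omega
        rw [this]; exact List.count_pos_iff.mpr hc2
      omega
  omega

lemma evolve_symm (A C : List ℤ) (b1 b2 : ℤ) (t : ℤ) :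
    evolve3 ((C.map (fun x => -x)).reverse) [-b2, -b1] ((A.map (fun x => -x)).reverse) t
      = ((evolve3 A [b1, b2] C t).map (fun x => -x)).reverse := by
  have h1 : ∀ (l : List ℤ), ((l.map (fun x => -x)).reverse).map (fun x => x - t)
      = ((l.map (fun x => x + t)).map (fun x => -x)).reverse := by
    intro l
    rw [List.map_reverse, List.map_map, List.map_map]
    have : ((fun x => x - t) ∘ fun x : ℤ => -x) = ((fun x => -x) ∘ fun x : ℤ => x + t) := by
      funext x; simp only [Function.comp_apply]; ring
    rw [this]
  have h2 : ∀ (l : List ℤ), ((l.map (fun x => -x)).reverse).map (fun x => x + t)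
      = ((l.map (fun x => x - t)).map (fun x => -x)).reverse := by
    intro l
    rw [List.map_reverse, List.map_map, List.map_map]
    have : ((fun x => x + t) ∘ fun x : ℤ => -x) = ((fun x => -x) ∘ fun x : ℤ => x - t) := by
      funext x; simp only [Function.comp_apply]; ring
    rw [this]
  show ((C.map (fun x => -x)).reverse).map (· - t) ++ [-b2, -b1]
      ++ ((A.map (fun x => -x)).reverse).map (· + t) = _
  unfold evolve3
  rw [List.map_append, List.map_append, List.reverse_append, List.reverse_append]
  have hmid : (([b1, b2].map (fun x : ℤ => -x)).reverse) = [-b2, -b1] := by simp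
  rw [hmid]
  have hX : ((C.map (fun x => -x)).reverse).map (· - t)
      = ((C.map (· + t)).map (fun x => -x)).reverse := h1 C
  have hZ : ((A.map (fun x => -x)).reverse).map (· + t)
      = ((A.map (· - t)).map (fun x => -x)).reverse := h2 A
  rw [hX, hZ, List.append_assoc]

lemma onerep_symm (l : List ℤ) (h : OneRepeat l) :
    OneRepeat ((l.map (fun x => -x)).reverse) := by
  unfold OneRepeat at *
  rw [List.toFinset_reverse, List.length_reverse, List.length_map]
  have ht : (l.map (fun x => -x)).toFinset = l.toFinset.image (fun x => -x) := by
    ext x; simp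
  rw [ht, Finset.card_image_of_injective _ neg_injective]
  exact h

lemma strictdec_symm (l : List ℤ) (h : StrictDec l) :
    StrictDec ((l.map (fun x => -x)).reverse) := by
  unfold StrictDec List.Chain' at *
  rw [List.isChain_reverse, List.isChain_map]
  exact h.imp (fun {a b} hab => by simp [flip]; omega)

lemma ulrich_symm {A C : List ℤ} {b1 b2 : ℤ} (hU : IsUlrich3 A [b1, b2] C) :
    IsUlrich3 ((C.map (fun x => -x)).reverse) [-b2, -b1] ((A.map (fun x => -x)).reverse) := by
  obtain ⟨hAne, hCne, hsd, hrep⟩ := hU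
  have hdim : dim3 ((C.map (fun x => -x)).reverse) [-b2, -b1] ((A.map (fun x => -x)).reverse)
      = dim3 A [b1, b2] C := by
    simp [dim3]; ring
  refine ⟨by simp [hCne], by simp [hAne], ?_, ?_⟩
  · rw [evolve_symm]; exact strictdec_symm _ hsd
  · intro t h1 h2
    rw [hdim] at h2
    rw [evolve_symm]
    exact onerep_symm _ (hrep t h1 h2)

/-- If `(A | b₁, b₂ | C)` is an Ulrich partition whose middle block has exactly two entries,
then `b₁ - b₂ ∈ {1, 3, 5}`. -/
theorem stmt9 (A C : List ℤ) (b1 b2 : ℤ) (hU : IsUlrich3 A [b1, b2] C) :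
    b1 - b2 = 1 ∨ b1 - b2 = 3 ∨ b1 - b2 = 5 := by
  obtain ⟨hA, hC, hb, cA, cC⟩ := facts hU
  have hαpos : 1 ≤ A.length := List.length_pos_iff.mpr hU.1
  have hγpos : 1 ≤ C.length := List.length_pos_iff.mpr hU.2.1
  have hN1 : 1 ≤ dim3 A [b1, b2] C := by
    simp only [dim3, List.length_cons, List.length_nil]; omega
  obtain ⟨v, hv⟩ := collide hU 1 le_rfl hN1
  push_cast at hv
  rcases hv with ⟨hvA, hvB⟩ | ⟨hvB, hvC⟩ | ⟨hvA, hvC⟩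
  · rcases hvB with rfl | rfl
    · exact caseI hU hvA
    · exfalso; have := hA _ hvA; omega
  · rcases hvB with rfl | rfl
    · exfalso; have := hC _ hvC; omega
    · have hU' := ulrich_symm hU
      have hmem : -v + 1 ∈ (C.map (fun x => -x)).reverse := by
        simp only [List.mem_reverse, List.mem_map]
        exact ⟨v - 1, hvC, by ring⟩
      have := caseI hU' hmem
      omega
  · exfalso
    have h1 := hA _ hvA
    have h2 := hC _ hvC
    omega
end

section
/- The partition (8, 6 | 5, 0 | -2) of type (2,2,1) is Ulrich, and it is the unique Ulrich partition (A | 5, 0 | C) with middle block {5, 0} whose first intersection (at time t = 1) occurs between the A-block and the middle block. -/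
/-- If a list has two distinct values each occurring at least twice, it is not `OneRepeat`. -/
lemma u10_tworeps {l : List ℤ} (h : OneRepeat l) {v w : ℤ} (hvw : v ≠ w)
    (hv : 2 ≤ l.count v) (hw : 2 ≤ l.count w) : False := by
  classical
  have hlen : l.toFinset.card + 1 = l.length := h
  set M : Multiset ℤ := (l : Multiset ℤ) with hM
  have hcv : Multiset.count v M = l.count v := Multiset.coe_count v l
  have hcw : Multiset.count w M = l.count w := Multiset.coe_count w l
  set M' : Multiset ℤ := (M.erase v).erase w with hM'
  have hvM : v ∈ M := by
    rw [← Multiset.count_pos, hcv]; omega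
  have hwMv : w ∈ M.erase v := by
    rw [← Multiset.count_pos, Multiset.count_erase_of_ne hvw.symm, hcw]; omega
  have hcv' : Multiset.count v M' = Multiset.count v M - 1 := by
    rw [hM', Multiset.count_erase_of_ne hvw, Multiset.count_erase_self]
  have hcw' : Multiset.count w M' = Multiset.count w M - 1 := by
    rw [hM', Multiset.count_erase_self, Multiset.count_erase_of_ne hvw.symm]
  have hcard' : Multiset.card M' = Multiset.card M - 2 := by
    rw [hM', Multiset.card_erase_of_mem hwMv, Multiset.card_erase_of_mem hvM,
      Nat.pred_eq_sub_one, Nat.pred_eq_sub_one]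
    omega
  have htf : M'.toFinset = M.toFinset := by
    ext x
    simp only [Multiset.mem_toFinset]
    constructor
    · intro hx
      exact Multiset.mem_of_mem_erase (Multiset.mem_of_mem_erase hx)
    · intro hx
      by_cases hxv : x = v
      · subst hxv
        rw [← Multiset.count_pos, hcv', hcv]; omega
      · by_cases hxw : x = w
        · subst hxw
          rw [← Multiset.count_pos, hcw', hcw]; omega
        · rw [← Multiset.count_pos, hM', Multiset.count_erase_of_ne hxw,
            Multiset.count_erase_of_ne hxv, Multiset.count_pos]
          exact hx
  have h1 : M.toFinset.card ≤ Multiset.card M - 2 := by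
    rw [← htf, ← hcard']; exact Multiset.toFinset_card_le M'
  have h2 : l.toFinset.card = M.toFinset.card := rfl
  have h3 : l.length = Multiset.card M := rfl
  have h4 : 2 ≤ l.length := le_trans hv List.count_le_length
  omega

/-- A `OneRepeat` list is not `Nodup`. -/
lemma u10_notnodup {l : List ℤ} (h : OneRepeat l) : ¬ l.Nodup := by
  intro hnd
  have := List.toFinset_card_of_nodup hnd
  have h' : l.toFinset.card + 1 = l.length := h
  omega

theorem u10_main (A C : List ℤ) (h : IsUlrich3 A [5, 0] C)
    (hex : ∃ a ∈ A, a - 1 = 5 ∨ a - 1 = 0) : A = [8, 6] ∧ C = [-2] := by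
  classical
  obtain ⟨hAne, hCne, hchain, hrep⟩ := h
  set N : ℕ := dim3 A [5, 0] C with hNdef
  -- lengths
  have hα : 1 ≤ A.length := List.length_pos_iff.mpr hAne
  have hγ : 1 ≤ C.length := List.length_pos_iff.mpr hCne
  have hNval : N = A.length * 2 + A.length * C.length + 2 * C.length := rfl
  have hN5 : 5 ≤ N := by
    rw [hNval]; nlinarith
  -- basic order facts
  have hchain' : List.Chain' (· > ·) (A ++ [5, 0] ++ C) := by
    have : evolve3 A [5, 0] C 0 = A ++ [5, 0] ++ C := by
      simp [evolve3]
    rwa [StrictDec, this] at hchain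
  have hpw : List.Pairwise (· > ·) (A ++ [5, 0] ++ C) := by
    exact List.isChain_iff_pairwise.mp hchain'
  rw [List.pairwise_append] at hpw
  obtain ⟨hpw1, hpwC, hcross⟩ := hpw
  rw [List.pairwise_append] at hpw1
  obtain ⟨hpwA, _, hcross2⟩ := hpw1
  have hgt5 : ∀ a ∈ A, (5:ℤ) < a := by
    intro a ha
    exact hcross2 a ha 5 (by simp)
  have hCneg : ∀ c ∈ C, c < (0:ℤ) := by
    intro c hc
    exact hcross 0 (by simp) c hc
  have hAnd : A.Nodup := hpwA.imp (fun h => ne_of_gt h)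
  have hCnd : C.Nodup := hpwC.imp (fun h => ne_of_gt h)
  -- 6 ∈ A
  have h6A : (6:ℤ) ∈ A := by
    obtain ⟨a, ha, hae⟩ := hex
    have := hgt5 a ha
    have ha6 : a = 6 := by omega
    rwa [ha6] at ha
  -- count decomposition of the evolved list
  have hcountdec : ∀ (t v : ℤ), (evolve3 A [5,0] C t).count v =
      (A.map (· - t)).count v + ([(5:ℤ), 0]).count v + (C.map (· + t)).count v := by
    intro t v
    show ((A.map (· - t) ++ [(5:ℤ),0]) ++ C.map (· + t)).count v = _
    rw [List.count_append, List.count_append]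
  have hmapAnd : ∀ t : ℤ, (A.map (· - t)).Nodup := by
    intro t
    refine hAnd.map ?_
    intro x y hxy
    simpa using hxy
  have hmapCnd : ∀ t : ℤ, (C.map (· + t)).Nodup := by
    intro t
    refine hCnd.map ?_
    intro x y hxy
    simpa using hxy
  -- the fundamental event trichotomy at each time t ∈ [1, N]
  have dup3 : ∀ t : ℕ, 1 ≤ t → t ≤ N →
      (∃ a ∈ A, a - (t:ℤ) = 5 ∨ a - (t:ℤ) = 0) ∨
      (∃ a ∈ A, ∃ c ∈ C, a - (t:ℤ) = c + (t:ℤ)) ∨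
      (∃ c ∈ C, c + (t:ℤ) = 5 ∨ c + (t:ℤ) = 0) := by
    intro t h1 h2
    have hor : OneRepeat (evolve3 A [5,0] C (t:ℤ)) := hrep t h1 h2
    have hnn := u10_notnodup hor
    obtain ⟨x, hdup⟩ := List.exists_duplicate_iff_not_nodup.mpr hnn
    have hcnt : 2 ≤ (evolve3 A [5,0] C (t:ℤ)).count x :=
      List.duplicate_iff_two_le_count.mp hdup
    rw [hcountdec] at hcnt
    have hc1 : (A.map (· - (t:ℤ))).count x ≤ 1 :=
      (List.nodup_iff_count_le_one.mp (hmapAnd _)) x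
    have hc3 : (C.map (· + (t:ℤ))).count x ≤ 1 :=
      (List.nodup_iff_count_le_one.mp (hmapCnd _)) x
    have hc2 : ([(5:ℤ), 0]).count x ≤ 1 := by
      have : ([(5:ℤ), 0]).Nodup := by decide
      exact (List.nodup_iff_count_le_one.mp this) x
    have hcases : (1 ≤ (A.map (· - (t:ℤ))).count x ∧ 1 ≤ ([(5:ℤ),0]).count x) ∨
        (1 ≤ (A.map (· - (t:ℤ))).count x ∧ 1 ≤ (C.map (· + (t:ℤ))).count x) ∨
        (1 ≤ ([(5:ℤ),0]).count x ∧ 1 ≤ (C.map (· + (t:ℤ))).count x) := by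
      omega
    have memA : 1 ≤ (A.map (· - (t:ℤ))).count x → ∃ a ∈ A, a - (t:ℤ) = x := by
      intro hx
      have : x ∈ A.map (· - (t:ℤ)) := List.count_pos_iff.mp (by omega)
      simpa using this
    have memB : 1 ≤ ([(5:ℤ),0]).count x → x = 5 ∨ x = 0 := by
      intro hx
      have : x ∈ [(5:ℤ), 0] := List.count_pos_iff.mp (by omega)
      simpa using this
    have memC : 1 ≤ (C.map (· + (t:ℤ))).count x → ∃ c ∈ C, c + (t:ℤ) = x := by
      intro hx
      have : x ∈ C.map (· + (t:ℤ)) := List.count_pos_iff.mp (by omega)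
      simpa using this
    rcases hcases with ⟨hA1, hB1⟩ | ⟨hA1, hC1⟩ | ⟨hB1, hC1⟩
    · obtain ⟨a, ha, hax⟩ := memA hA1
      rcases memB hB1 with rfl | rfl
      · exact Or.inl ⟨a, ha, Or.inl hax⟩
      · exact Or.inl ⟨a, ha, Or.inr hax⟩
    · obtain ⟨a, ha, hax⟩ := memA hA1
      obtain ⟨c, hc, hcx⟩ := memC hC1
      exact Or.inr (Or.inl ⟨a, ha, c, hc, by omega⟩)
    · obtain ⟨c, hc, hcx⟩ := memC hC1
      rcases memB hB1 with rfl | rfl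
      · exact Or.inr (Or.inr ⟨c, hc, Or.inl hcx⟩)
      · exact Or.inr (Or.inr ⟨c, hc, Or.inr hcx⟩)
  -- helper: a collision of two distinct values at one time is impossible
  -- (each piece supplied via membership in blocks)
  have kill : ∀ t : ℕ, 1 ≤ t → t ≤ N → ∀ v w : ℤ, v ≠ w →
      2 ≤ (evolve3 A [5,0] C (t:ℤ)).count v →
      2 ≤ (evolve3 A [5,0] C (t:ℤ)).count w → False := by
    intro t h1 h2 v w hvw hv hw
    exact u10_tworeps (hrep t h1 h2) hvw hv hw
  have memcntA : ∀ (t : ℕ) (a : ℤ), a ∈ A → 1 ≤ (A.map (· - (t:ℤ))).count (a - (t:ℤ)) := by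
    intro t a ha
    apply List.count_pos_iff.mpr
    exact List.mem_map.mpr ⟨a, ha, rfl⟩
  have memcntC : ∀ (t : ℕ) (c : ℤ), c ∈ C → 1 ≤ (C.map (· + (t:ℤ))).count (c + (t:ℤ)) := by
    intro t c hc
    apply List.count_pos_iff.mpr
    exact List.mem_map.mpr ⟨c, hc, rfl⟩
  -- The pigeonhole argument: every cross pair collides at some time in [1, N].
  -- Encode pairs as (u, v, tag).
  set collide : ℤ × ℤ × ℕ → ℕ → Prop :=
    fun p t => (p.2.2 = 0 ∧ p.1 - (t:ℤ) = p.2.1) ∨ (p.2.2 = 1 ∧ p.1 - (t:ℤ) = p.2.1 + (t:ℤ)) ∨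
      (p.2.2 = 2 ∧ p.1 = p.2.1 + (t:ℤ)) with hcollide
  set P : Finset (ℤ × ℤ × ℕ) :=
    ((A.toFinset ×ˢ ({5, 0} : Finset ℤ)).image (fun p => (p.1, p.2, 0))) ∪
    ((A.toFinset ×ˢ C.toFinset).image (fun p => (p.1, p.2, 1))) ∪
    ((({5, 0} : Finset ℤ) ×ˢ C.toFinset).image (fun p => (p.1, p.2, 2))) with hP
  have hinj0 : Function.Injective (fun p : ℤ × ℤ => (p.1, p.2, 0)) := by
    intro p q hpq
    simp only [Prod.mk.injEq] at hpq
    exact Prod.ext hpq.1 hpq.2.1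
  have hinj1 : Function.Injective (fun p : ℤ × ℤ => (p.1, p.2, 1)) := by
    intro p q hpq
    simp only [Prod.mk.injEq] at hpq
    exact Prod.ext hpq.1 hpq.2.1
  have hinj2 : Function.Injective (fun p : ℤ × ℤ => (p.1, p.2, 2)) := by
    intro p q hpq
    simp only [Prod.mk.injEq] at hpq
    exact Prod.ext hpq.1 hpq.2.1
  have hcard50 : ({5, 0} : Finset ℤ).card = 2 := by decide
  have hPcard : P.card = N := by
    rw [hP]
    rw [Finset.card_union_of_disjoint, Finset.card_union_of_disjoint]
    · rw [Finset.card_image_of_injective _ hinj0, Finset.card_image_of_injective _ hinj1,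
        Finset.card_image_of_injective _ hinj2, Finset.card_product, Finset.card_product,
        Finset.card_product, List.toFinset_card_of_nodup hAnd, List.toFinset_card_of_nodup hCnd,
        hcard50, hNval]
    · rw [Finset.disjoint_left]
      rintro ⟨u, v, k⟩ hk1 hk2
      obtain ⟨p, _, hpe⟩ := Finset.mem_image.mp hk1
      obtain ⟨q, _, hqe⟩ := Finset.mem_image.mp hk2
      have h1 : 0 = k := congrArg (fun x : ℤ × ℤ × ℕ => x.2.2) hpe
      have h2 : 1 = k := congrArg (fun x : ℤ × ℤ × ℕ => x.2.2) hqe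
      omega
    · rw [Finset.disjoint_left]
      rintro ⟨u, v, k⟩ hk1 hk2
      obtain ⟨q, _, hqe⟩ := Finset.mem_image.mp hk2
      have h2 : 2 = k := congrArg (fun x : ℤ × ℤ × ℕ => x.2.2) hqe
      rcases Finset.mem_union.mp hk1 with hk1 | hk1
      · obtain ⟨p, _, hpe⟩ := Finset.mem_image.mp hk1
        have h1 : 0 = k := congrArg (fun x : ℤ × ℤ × ℕ => x.2.2) hpe
        omega
      · obtain ⟨p, _, hpe⟩ := Finset.mem_image.mp hk1
        have h1 : 1 = k := congrArg (fun x : ℤ × ℤ × ℕ => x.2.2) hpe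
        omega
  have hexists_pair : ∀ t : ℕ, 1 ≤ t → t ≤ N → ∃ p ∈ P, collide p t := by
    intro t h1 h2
    rcases dup3 t h1 h2 with ⟨a, ha, hab⟩ | ⟨a, ha, c, hc, hac⟩ | ⟨c, hc, hcb⟩
    · rcases hab with hab | hab
      · exact ⟨(a, 5, 0), Finset.mem_union_left _ (Finset.mem_union_left _
          (Finset.mem_image.mpr ⟨(a, 5), Finset.mem_product.mpr
            ⟨List.mem_toFinset.mpr ha, by simp⟩, rfl⟩)), Or.inl ⟨rfl, hab⟩⟩
      · exact ⟨(a, 0, 0), Finset.mem_union_left _ (Finset.mem_union_left _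
          (Finset.mem_image.mpr ⟨(a, 0), Finset.mem_product.mpr
            ⟨List.mem_toFinset.mpr ha, by simp⟩, rfl⟩)), Or.inl ⟨rfl, hab⟩⟩
    · exact ⟨(a, c, 1), Finset.mem_union_left _ (Finset.mem_union_right _
        (Finset.mem_image.mpr ⟨(a, c), Finset.mem_product.mpr
          ⟨List.mem_toFinset.mpr ha, List.mem_toFinset.mpr hc⟩, rfl⟩)),
        Or.inr (Or.inl ⟨rfl, hac⟩)⟩
    · rcases hcb with hcb | hcb
      · exact ⟨(5, c, 2), Finset.mem_union_right _
          (Finset.mem_image.mpr ⟨(5, c), Finset.mem_product.mpr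
            ⟨by simp, List.mem_toFinset.mpr hc⟩, rfl⟩), Or.inr (Or.inr ⟨rfl, hcb.symm⟩)⟩
      · exact ⟨(0, c, 2), Finset.mem_union_right _
          (Finset.mem_image.mpr ⟨(0, c), Finset.mem_product.mpr
            ⟨by simp, List.mem_toFinset.mpr hc⟩, rfl⟩), Or.inr (Or.inr ⟨rfl, hcb.symm⟩)⟩
  have pair_collides : ∀ p ∈ P, ∃ t : ℕ, (1 ≤ t ∧ t ≤ N) ∧ collide p t := by
    by_contra hcon
    push_neg at hcon
    obtain ⟨p₀, hp₀P, hp₀⟩ := hcon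
    set f : ℕ → ℤ × ℤ × ℕ := fun t =>
      if h : ∃ p ∈ P, collide p t then h.choose else (0, 0, 37) with hf
    have hfspec : ∀ t : ℕ, 1 ≤ t → t ≤ N → f t ∈ P ∧ collide (f t) t := by
      intro t h1 h2
      have hex := hexists_pair t h1 h2
      rw [hf]
      simp only [dif_pos hex]
      exact ⟨hex.choose_spec.1, hex.choose_spec.2⟩
    have hmaps : ∀ t ∈ Finset.Icc 1 N, f t ∈ P.erase p₀ := by
      intro t ht
      rw [Finset.mem_Icc] at ht
      obtain ⟨hfP, hfc⟩ := hfspec t ht.1 ht.2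
      refine Finset.mem_erase.mpr ⟨?_, hfP⟩
      intro hfp
      exact hp₀ t ⟨ht.1, ht.2⟩ (hfp ▸ hfc)
    have hinj : Set.InjOn f ↑(Finset.Icc 1 N) := by
      intro t ht t' ht' hft
      simp only [Finset.coe_Icc, Set.mem_Icc] at ht ht'
      obtain ⟨_, hfc⟩ := hfspec t ht.1 ht.2
      obtain ⟨_, hfc'⟩ := hfspec t' ht'.1 ht'.2
      rw [hft] at hfc
      rw [hcollide] at hfc hfc'
      rcases hfc with ⟨h1, h2⟩ | ⟨h1, h2⟩ | ⟨h1, h2⟩ <;>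
        rcases hfc' with ⟨h1', h2'⟩ | ⟨h1', h2'⟩ | ⟨h1', h2'⟩ <;> omega
    have hle := Finset.card_le_card_of_injOn f hmaps hinj
    rw [Nat.card_Icc] at hle
    have herase : (P.erase p₀).card = P.card - 1 := Finset.card_erase_of_mem hp₀P
    omega
  -- consequences of the pigeonhole
  have hboundA : ∀ a ∈ A, a ≤ (N:ℤ) := by
    intro a ha
    have hmem : (a, (0:ℤ), 0) ∈ P := Finset.mem_union_left _ (Finset.mem_union_left _
      (Finset.mem_image.mpr ⟨(a, 0), Finset.mem_product.mpr
        ⟨List.mem_toFinset.mpr ha, by simp⟩, rfl⟩))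
    obtain ⟨t, ⟨h1, h2⟩, hc⟩ := pair_collides _ hmem
    rw [hcollide] at hc
    have h2' : (t:ℤ) ≤ (N:ℤ) := by exact_mod_cast h2
    simp only at hc
    rcases hc with ⟨_, h⟩ | ⟨h, _⟩ | ⟨h, _⟩ <;> omega
  have hboundC : ∀ c ∈ C, 5 - (N:ℤ) ≤ c := by
    intro c hc
    have hmem : ((5:ℤ), c, 2) ∈ P := Finset.mem_union_right _
      (Finset.mem_image.mpr ⟨(5, c), Finset.mem_product.mpr
        ⟨by simp, List.mem_toFinset.mpr hc⟩, rfl⟩)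
    obtain ⟨t, ⟨h1, h2⟩, hcc⟩ := pair_collides _ hmem
    rw [hcollide] at hcc
    have h2' : (t:ℤ) ≤ (N:ℤ) := by exact_mod_cast h2
    simp only at hcc
    rcases hcc with ⟨h, _⟩ | ⟨h, _⟩ | ⟨_, h⟩ <;> omega
  have hAC : ∀ a ∈ A, ∀ c ∈ C, ∃ t : ℕ, (1 ≤ t ∧ t ≤ N) ∧ a - (t:ℤ) = c + (t:ℤ) := by
    intro a ha c hc
    have hmem : (a, c, 1) ∈ P := Finset.mem_union_left _ (Finset.mem_union_right _
      (Finset.mem_image.mpr ⟨(a, c), Finset.mem_product.mpr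
        ⟨List.mem_toFinset.mpr ha, List.mem_toFinset.mpr hc⟩, rfl⟩))
    obtain ⟨t, ⟨h1, h2⟩, hcc⟩ := pair_collides _ hmem
    rw [hcollide] at hcc
    simp only at hcc
    rcases hcc with ⟨h, _⟩ | ⟨_, h⟩ | ⟨h, _⟩
    · omega
    · exact ⟨t, ⟨h1, h2⟩, h⟩
    · omega
  -- parity
  have hevc : ∀ c ∈ C, (2:ℤ) ∣ c := by
    intro c hc
    obtain ⟨t, _, ht⟩ := hAC 6 h6A c hc
    omega
  obtain ⟨c₀, hc₀⟩ : ∃ c, c ∈ C := List.exists_mem_of_ne_nil C hCne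
  have heva : ∀ a ∈ A, (2:ℤ) ∣ a := by
    intro a ha
    obtain ⟨t, _, ht⟩ := hAC a ha c₀ hc₀
    have := hevc c₀ hc₀
    omega
  have hCle : ∀ c ∈ C, c ≤ (-2:ℤ) := by
    intro c hc
    have := hCneg c hc
    have := hevc c hc
    omega
  have hAge : ∀ a ∈ A, (6:ℤ) ≤ a := by
    intro a ha
    have := hgt5 a ha
    have := heva a ha
    omega
  -- t = 2 forces -2 ∈ C
  have hm2 : (-2:ℤ) ∈ C := by
    rcases dup3 2 (by omega) (by omega) with ⟨a, ha, hab⟩ | ⟨a, ha, c, hc, hac⟩ | ⟨c, hc, hcb⟩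
    · have := heva a ha
      have := hgt5 a ha
      push_cast at hab
      omega
    · have := hAge a ha
      have := hCle c hc
      push_cast at hac
      omega
    · have := hCneg c hc
      push_cast at hcb
      have hc2 : c = -2 := by omega
      rwa [hc2] at hc
  -- t = 3 forces 8 ∈ A
  have h8A : (8:ℤ) ∈ A := by
    rcases dup3 3 (by omega) (by omega) with ⟨a, ha, hab⟩ | ⟨a, ha, c, hc, hac⟩ | ⟨c, hc, hcb⟩
    · have := hgt5 a ha
      push_cast at hab
      have ha8 : a = 8 := by omega
      rwa [ha8] at ha
    · have := hAge a ha
      have := hCle c hc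
      push_cast at hac
      omega
    · have := hCneg c hc
      have := hevc c hc
      push_cast at hcb
      omega
  -- extremes
  have hAtfne : A.toFinset.Nonempty := ⟨6, List.mem_toFinset.mpr h6A⟩
  have hCtfne : C.toFinset.Nonempty := ⟨c₀, List.mem_toFinset.mpr hc₀⟩
  set amax : ℤ := A.toFinset.max' hAtfne with hamax
  set cmin : ℤ := C.toFinset.min' hCtfne with hcmin
  have hamem : amax ∈ A := List.mem_toFinset.mp (A.toFinset.max'_mem hAtfne)
  have hcmem : cmin ∈ C := List.mem_toFinset.mp (C.toFinset.min'_mem hCtfne)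
  have hale : ∀ a ∈ A, a ≤ amax := fun a ha => A.toFinset.le_max' a (List.mem_toFinset.mpr ha)
  have hcge : ∀ c ∈ C, cmin ≤ c := fun c hc => C.toFinset.min'_le c (List.mem_toFinset.mpr hc)
  have h8am : (8:ℤ) ≤ amax := hale 8 h8A
  have hcm2 : cmin ≤ (-2:ℤ) := hCle cmin hcmem
  have hevam : (2:ℤ) ∣ amax := heva amax hamem
  have hevcm : (2:ℤ) ∣ cmin := hevc cmin hcmem
  have hamN : amax ≤ (N:ℤ) := hboundA amax hamem
  have hcmN : 5 - (N:ℤ) ≤ cmin := hboundC cmin hcmem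
  -- two distinct A×C pairs with equal difference: contradiction
  have killAC : ∀ a₁ ∈ A, ∀ c₁ ∈ C, ∀ a₂ ∈ A, ∀ c₂ ∈ C,
      a₁ ≠ a₂ → a₁ - c₁ = a₂ - c₂ → False := by
    intro a₁ ha₁ c₁ hc₁ a₂ ha₂ c₂ hc₂ hne hdiff
    obtain ⟨t, ⟨h1, h2⟩, ht⟩ := hAC a₁ ha₁ c₁ hc₁
    have ht2 : a₂ - (t:ℤ) = c₂ + (t:ℤ) := by omega
    refine kill t h1 h2 (a₁ - (t:ℤ)) (a₂ - (t:ℤ)) (by omega) ?_ ?_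
    · rw [hcountdec]
      have m1 := memcntA t a₁ ha₁
      have m2 := memcntC t c₁ hc₁
      rw [← ht] at m2
      omega
    · rw [hcountdec]
      have m1 := memcntA t a₂ ha₂
      have m2 := memcntC t c₂ hc₂
      rw [← ht2] at m2
      omega
  rcases lt_trichotomy amax (5 - cmin) with hlt | heq | hgt
  · -- Case: amax < 5 - cmin.  Then N = 5 - cmin.
    exfalso
    have hNe : (N:ℤ) = 5 - cmin := by
      have hge : 5 - cmin ≤ (N:ℤ) := by omega
      have hle' : (N:ℤ) ≤ 5 - cmin := by
        rcases dup3 N (by omega) (le_refl N) with ⟨a, ha, hab⟩ | ⟨a, ha, c, hc, hac⟩ |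
            ⟨c, hc, hcb⟩
        · have := hale a ha
          omega
        · have := hale a ha
          have := hcge c hc
          omega
        · have := hcge c hc
          omega
      omega
    -- event at N - 2 forces cmin + 2 ∈ C
    have hN7 : 7 ≤ N := by omega
    have hcast : ((N - 2 : ℕ) : ℤ) = (N:ℤ) - 2 := by omega
    have hm : cmin + 2 ∈ C := by
      rcases dup3 (N - 2) (by omega) (by omega) with ⟨a, ha, hab⟩ | ⟨a, ha, c, hc, hac⟩ |
          ⟨c, hc, hcb⟩
      · have := hale a ha
        have := heva a ha
        rw [hcast] at hab
        omega
      · have := hale a ha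
        have := hcge c hc
        rw [hcast] at hac
        omega
      · have := hcge c hc
        rw [hcast] at hcb
        have hcv : c = cmin + 2 := by omega
        rwa [hcv] at hc
    exact killAC 6 h6A cmin hcmem 8 h8A (cmin + 2) hm (by omega) (by ring)
  · -- Case: amax = 5 - cmin: two coincidences at time t = amax.
    exfalso
    obtain ⟨t, ⟨h1, h2⟩, hc⟩ : ∃ t : ℕ, (1 ≤ t ∧ t ≤ N) ∧ amax - (t:ℤ) = 0 := by
      have hmem : (amax, (0:ℤ), 0) ∈ P := Finset.mem_union_left _ (Finset.mem_union_left _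
        (Finset.mem_image.mpr ⟨(amax, 0), Finset.mem_product.mpr
          ⟨List.mem_toFinset.mpr hamem, by simp⟩, rfl⟩))
      obtain ⟨t, ⟨h1, h2⟩, hcc⟩ := pair_collides _ hmem
      rw [hcollide] at hcc
      simp only at hcc
      rcases hcc with ⟨_, h⟩ | ⟨h, _⟩ | ⟨h, _⟩
      · exact ⟨t, ⟨h1, h2⟩, h⟩
      · omega
      · omega
    have hc5 : cmin + (t:ℤ) = 5 := by omega
    refine kill t h1 h2 0 5 (by omega) ?_ ?_
    · rw [hcountdec]
      have m1 := memcntA t amax hamem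
      rw [hc] at m1
      have m2 : ([(5:ℤ), 0]).count 0 = 1 := by decide
      omega
    · rw [hcountdec]
      have m1 := memcntC t cmin hcmem
      rw [hc5] at m1
      have m2 : ([(5:ℤ), 0]).count 5 = 1 := by decide
      omega
  · -- Case: amax > 5 - cmin.  Then N = amax.
    have hNe : (N:ℤ) = amax := by
      have hle' : (N:ℤ) ≤ amax := by
        rcases dup3 N (by omega) (le_refl N) with ⟨a, ha, hab⟩ | ⟨a, ha, c, hc, hac⟩ |
            ⟨c, hc, hcb⟩
        · have := hale a ha
          omega
        · have := hale a ha
          have := hcge c hc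
          omega
        · have := hcge c hc
          omega
      omega
    -- event at N - 1 forces 6 - amax ∈ C
    have hcast : ((N - 1 : ℕ) : ℤ) = (N:ℤ) - 1 := by omega
    have hm6 : (6:ℤ) - amax ∈ C := by
      rcases dup3 (N - 1) (by omega) (by omega) with ⟨a, ha, hab⟩ | ⟨a, ha, c, hc, hac⟩ |
          ⟨c, hc, hcb⟩
      · have := hale a ha
        have := heva a ha
        rw [hcast] at hab
        omega
      · have := hale a ha
        have := hcge c hc
        have := hevc c hc
        rw [hcast] at hac
        omega
      · have := hevc c hc
        rw [hcast] at hcb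
        have hcv : c = 6 - amax := by omega
        rwa [hcv] at hc
    by_cases h8 : amax = 8
    · -- conclude A = [8, 6] and C = [-2]
      constructor
      · -- A = [8, 6]
        have hmem68 : ∀ a ∈ A, a = 6 ∨ a = 8 := by
          intro a ha
          have := hAge a ha
          have := hale a ha
          have := heva a ha
          omega
        have htf : A.toFinset = {8, 6} := by
          apply Finset.Subset.antisymm
          · intro x hx
            rcases hmem68 x (List.mem_toFinset.mp hx) with h | h <;> simp [h]
          · intro x hx
            simp only [Finset.mem_insert, Finset.mem_singleton] at hx
            rcases hx with rfl | rfl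
            · exact List.mem_toFinset.mpr h8A
            · exact List.mem_toFinset.mpr h6A
        have hlen2 : A.length = 2 := by
          rw [← List.toFinset_card_of_nodup hAnd, htf]
          decide
        obtain ⟨x, y, hxy⟩ := List.length_eq_two.mp hlen2
        subst hxy
        have hx68 := hmem68 x (by simp)
        have hy68 := hmem68 y (by simp)
        have hgtxy : x > y := by
          have := hpwA
          simp only [List.pairwise_cons, List.mem_singleton] at this
          exact this.1 y rfl
        have hx : x = 8 := by omega
        have hy : y = 6 := by omega
        rw [hx, hy]
      · -- C = [-2]
        have hmemm2 : ∀ c ∈ C, c = (-2:ℤ) := by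
          intro c hc
          have := hCle c hc
          have := hboundC c hc
          have := hevc c hc
          omega
        have htf : C.toFinset = {-2} := by
          apply Finset.Subset.antisymm
          · intro x hx
            simp [hmemm2 x (List.mem_toFinset.mp hx)]
          · intro x hx
            simp only [Finset.mem_singleton] at hx
            subst hx
            exact List.mem_toFinset.mpr hm2
        have hlen1 : C.length = 1 := by
          rw [← List.toFinset_card_of_nodup hCnd, htf]
          decide
        obtain ⟨x, hx⟩ := List.length_eq_one_iff.mp hlen1
        subst hx
        have := hmemm2 x (by simp)
        rw [this]
    · -- amax ≠ 8: contradiction via pairs (amax, -2) and (8, 6 - amax)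
      exfalso
      exact killAC amax hamem (-2) hm2 8 h8A (6 - amax) hm6 h8 (by ring)

/-- The partition `(8, 6 | 5, 0 | -2)` of type `(2,2,1)` is Ulrich, and it is the unique
Ulrich partition `(A | 5, 0 | C)` whose time-1 intersection occurs between the `A`-block and
the middle block. -/
theorem stmt10 :
    IsUlrich3 [8, 6] [5, 0] [-2] ∧
      ∀ A C : List ℤ, IsUlrich3 A [5, 0] C →
        (∃ a ∈ A, a - 1 = 5 ∨ a - 1 = 0) → A = [8, 6] ∧ C = [-2] := by
  constructor
  · refine ⟨by simp, by simp, by norm_num [StrictDec, evolve3, List.Chain', List.isChain_cons_cons, List.isChain_singleton], ?_⟩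
    intro t h1 h2
    have h2' : t ≤ 8 := h2
    interval_cases t <;> simp only [OneRepeat, evolve3] <;> decide
  · intro A C h hex
    exact u10_main A C h hex
end

section
/- For k ≥ 1, let (2 | 1, 0 | C_k) be the partition obtained from (2 | 1, 0 | ∅) by greedily adding k c-entries (each new c is added at the earliest time with no scheduled intersection, placed to collide with the leftmost entry among A and B at that time). This partition is Ulrich if and only if k = (4^{m+1} - 1)/3 for some m ≥ 0. -/
/-- The `j`-th entry (`j ≥ 1`) of the sequence of `c`-values produced by the greedy algorithm
applied to `(2 | 1, 0 | ∅)`: after the `m`-th Ulrich stage (of `(4^m - 1)/3` entries), the next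
block of entries is `-2·4^m - 2ℓ` for `ℓ = 1, ..., 4^m`.  Here `m = log₄(3j)`. -/
def cval (j : ℕ) : ℤ :=
  -2 * 4 ^ (Nat.log 4 (3 * j)) - 2 * ((j - (4 ^ (Nat.log 4 (3 * j)) - 1) / 3 : ℕ) : ℤ)

/-- The `C`-block obtained from `(2 | 1, 0 | ∅)` by greedily adding `k` `c`-entries. -/
def Ck (k : ℕ) : List ℤ := (List.range k).map (fun i => cval (i + 1))

namespace S13


def D : ℕ → ℕ
  | 0 => 0
  | m+1 => 4 * D m + 1

lemma D_eq : ∀ m, 3 * D m + 1 = 4 ^ m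
  | 0 => by simp [D]
  | m+1 => by
      have h := D_eq m
      have h2 : (4:ℕ) ^ (m+1) = 4 ^ m * 4 := pow_succ 4 m
      simp only [D]; omega

lemma pow4_succ (m : ℕ) : (4:ℕ) ^ (m+1) = 4 * 4 ^ m := by
  rw [pow_succ]; ring

lemma pow4_pos (m : ℕ) : 1 ≤ (4:ℕ) ^ m := Nat.one_le_pow _ _ (by norm_num)

lemma pow4_mono {a b : ℕ} (h : a ≤ b) : (4:ℕ) ^ a ≤ 4 ^ b :=
  Nat.pow_le_pow_right (by norm_num) h

lemma div_D (m : ℕ) : (4 ^ m - 1) / 3 = D m := by have := D_eq m; omega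

def Spec (j m ℓ : ℕ) : Prop := 1 ≤ ℓ ∧ ℓ ≤ 4 ^ m ∧ 3 * j + 1 = 4 ^ m + 3 * ℓ

lemma spec_self {j : ℕ} (hj : 1 ≤ j) :
    Spec j (Nat.log 4 (3 * j)) (j - D (Nat.log 4 (3 * j))) := by
  set m := Nat.log 4 (3 * j) with hm
  have h1 : 4 ^ m ≤ 3 * j := Nat.pow_log_le_self 4 (by omega)
  have h2 : 3 * j < 4 ^ (m + 1) := Nat.lt_pow_succ_log_self (by norm_num) _
  have hd := D_eq m
  have hd' := D_eq (m + 1)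
  have hD : D (m+1) = 4 * D m + 1 := rfl
  refine ⟨by omega, by omega, by omega⟩

lemma spec_log {j m ℓ : ℕ} (h : Spec j m ℓ) : Nat.log 4 (3 * j) = m := by
  obtain ⟨h1, h2, h3⟩ := h
  have := pow4_succ m
  exact Nat.log_eq_of_pow_le_of_lt_pow (by omega) (by omega)

lemma spec_cval {j m ℓ : ℕ} (h : Spec j m ℓ) : cval j = -2 * (4:ℤ) ^ m - 2 * (ℓ : ℤ) := by
  have hl := spec_log h
  obtain ⟨h1, h2, h3⟩ := h
  have hd := D_eq m
  have hℓ : j - (4 ^ m - 1) / 3 = ℓ := by rw [div_D]; omega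
  unfold cval
  rw [hl, hℓ]

lemma spec_unique {j m ℓ m' ℓ' : ℕ} (h : Spec j m ℓ) (h' : Spec j m' ℓ') :
    m = m' ∧ ℓ = ℓ' := by
  have := spec_log h
  have := spec_log h'
  have hm : m = m' := by omega
  subst hm
  obtain ⟨_, _, h3⟩ := h; obtain ⟨_, _, h3'⟩ := h'
  omega

lemma core {m ℓ m' ℓ' : ℕ} (h1 : 1 ≤ ℓ) (h2 : ℓ ≤ 4^m) (h1' : 1 ≤ ℓ') (h2' : ℓ' ≤ 4^m')
    (he : 4^m + ℓ = 4^m' + ℓ') : m = m' ∧ ℓ = ℓ' := by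
  rcases lt_trichotomy m m' with h | h | h
  · have := pow4_mono (Nat.succ_le_of_lt h); have := pow4_succ m; omega
  · subst h; omega
  · have := pow4_mono (Nat.succ_le_of_lt h); have := pow4_succ m'; omega

lemma spec_inj {j m ℓ j' m' ℓ' : ℕ} (h : Spec j m ℓ) (h' : Spec j' m' ℓ')
    (he : 4^m + ℓ = 4^m' + ℓ') : j = j' := by
  obtain ⟨a1, a2, a3⟩ := h; obtain ⟨b1, b2, b3⟩ := h'
  obtain ⟨hm, hℓ⟩ := core a1 a2 b1 b2 he
  subst hm; omega

lemma spec_mono {j m ℓ j' m' ℓ' : ℕ} (h : Spec j m ℓ) (h' : Spec j' m' ℓ')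
    (hj : j ≤ j') : m ≤ m' := by
  by_contra hc
  push_neg at hc
  have := pow4_mono (Nat.succ_le_of_lt hc)
  have := pow4_succ m'
  obtain ⟨a1, a2, a3⟩ := h; obtain ⟨b1, b2, b3⟩ := h'
  omega

-- A-time ≠ B-times
lemma A_ne_B {j m ℓ j' m' ℓ' : ℕ} (h : Spec j m ℓ) (h' : Spec j' m' ℓ') (e : ℕ)
    (he : e ≤ 1) : 4^m + ℓ + 1 ≠ 2 * 4^m' + 2 * ℓ' + e := by
  obtain ⟨a1, a2, a3⟩ := h; obtain ⟨b1, b2, b3⟩ := h'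
  rcases le_or_gt m m' with h | h
  · have := pow4_mono h; omega
  · have := pow4_mono (Nat.succ_le_of_lt h); have := pow4_succ m'; omega

lemma cval_strictAnti {j j' : ℕ} (hj : 1 ≤ j) (hlt : j < j') : cval j' < cval j := by
  obtain h := spec_self hj
  obtain h' := spec_self (show 1 ≤ j' by omega)
  rw [spec_cval h, spec_cval h']
  set m := Nat.log 4 (3*j); set ℓ := j - D m
  set m' := Nat.log 4 (3*j'); set ℓ' := j' - D m'
  have hm : m ≤ m' := spec_mono h h' (le_of_lt hlt)
  obtain ⟨a1, a2, a3⟩ := h; obtain ⟨b1, b2, b3⟩ := h'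
  have key : 2 * 4^m + 2*ℓ < 2 * 4^m' + 2*ℓ' := by
    rcases eq_or_lt_of_le hm with h | h
    · rw [← h] at b3 ⊢; omega
    · have := pow4_mono (Nat.succ_le_of_lt h); have := pow4_succ m; omega
  have c1 : ((4:ℤ)^m) = ((4^m : ℕ) : ℤ) := by push_cast; ring
  have c2 : ((4:ℤ)^m') = ((4^m' : ℕ) : ℤ) := by push_cast; ring
  rw [c1, c2]; omega

lemma cval_le {j : ℕ} (hj : 1 ≤ j) : cval j ≤ -4 := by
  obtain h := spec_self hj
  rw [spec_cval h]
  have := pow4_pos (Nat.log 4 (3*j))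
  obtain ⟨a1, _, _⟩ := h
  have c1 : ((4:ℤ)^(Nat.log 4 (3*j))) = ((4^(Nat.log 4 (3*j)) : ℕ) : ℤ) := by push_cast; ring
  rw [c1]; omega

-- list basics
lemma evolve_eq (k : ℕ) (t : ℤ) :
    evolve3 [2] [1, 0] (Ck k) t = (2 - t) :: 1 :: 0 :: (Ck k).map (· + t) := by
  simp [evolve3]

lemma dim_eq (k : ℕ) : dim3 [2] [1, 0] (Ck k) = 3 * k + 2 := by
  simp [dim3, Ck]; ring

lemma mem_Ck_map {k : ℕ} {t x : ℤ} :
    x ∈ (Ck k).map (· + t) ↔ ∃ j, 1 ≤ j ∧ j ≤ k ∧ cval j + t = x := by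
  simp only [Ck, List.map_map, List.mem_map, List.mem_range, Function.comp]
  constructor
  · rintro ⟨i, hi, he⟩; exact ⟨i + 1, by omega, by omega, he⟩
  · rintro ⟨j, h1, h2, he⟩
    exact ⟨j - 1, by omega, by rw [Nat.sub_add_cancel h1]; exact he⟩

lemma nodup_Lt (k : ℕ) (t : ℤ) : ((Ck k).map (· + t)).Nodup := by
  rw [Ck, List.map_map]
  refine List.Nodup.map ?_ List.nodup_range
  intro a b h
  simp only [Function.comp] at h
  have h' : cval (a + 1) = cval (b + 1) := by omega
  by_contra hne
  rcases Nat.lt_or_ge a b with hl | hl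
  · have := cval_strictAnti (show 1 ≤ a + 1 by omega) (show a + 1 < b + 1 by omega); omega
  · have hl' : b < a := by omega
    have := cval_strictAnti (show 1 ≤ b + 1 by omega) (show b + 1 < a + 1 by omega); omega

lemma oneRepeat_perm {l l' : List ℤ} (h : l.Perm l') (h' : OneRepeat l') : OneRepeat l := by
  unfold OneRepeat at *
  rw [List.toFinset_eq_of_perm _ _ h, h.length_eq]
  exact h'

lemma oneRepeat_cons {x : ℤ} {l : List ℤ} (hx : x ∈ l) (hl : l.Nodup) : OneRepeat (x :: l) := by
  unfold OneRepeat
  rw [List.toFinset_cons, Finset.insert_eq_self.2 (List.mem_toFinset.2 hx),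
    List.toFinset_card_of_nodup hl]
  simp

lemma not_oneRepeat_of_nodup {l : List ℤ} (h : l.Nodup) : ¬ OneRepeat l := by
  unfold OneRepeat
  rw [List.toFinset_card_of_nodup h]
  omega

-- events
def EA (k t : ℕ) : Prop := ∃ j m ℓ, 1 ≤ j ∧ j ≤ k ∧ Spec j m ℓ ∧ t = 4^m + ℓ + 1
def E0 (k t : ℕ) : Prop := ∃ j m ℓ, 1 ≤ j ∧ j ≤ k ∧ Spec j m ℓ ∧ t = 2*4^m + 2*ℓ
def E1 (k t : ℕ) : Prop := ∃ j m ℓ, 1 ≤ j ∧ j ≤ k ∧ Spec j m ℓ ∧ t = 2*4^m + 2*ℓ + 1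

lemma cast_pow4 (m : ℕ) : ((4:ℤ)^m) = ((4^m : ℕ) : ℤ) := by push_cast; ring

lemma memA_iff {k t : ℕ} : ((2 : ℤ) - t) ∈ (Ck k).map (· + (t:ℤ)) ↔ EA k t := by
  rw [mem_Ck_map]
  constructor
  · rintro ⟨j, h1, h2, he⟩
    obtain hs := spec_self h1
    rw [spec_cval hs, cast_pow4] at he
    exact ⟨j, _, _, h1, h2, hs, by omega⟩
  · rintro ⟨j, m, ℓ, h1, h2, hs, ht⟩
    refine ⟨j, h1, h2, ?_⟩
    rw [spec_cval hs, cast_pow4]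
    omega

lemma mem1_iff {k t : ℕ} : (1 : ℤ) ∈ (Ck k).map (· + (t:ℤ)) ↔ E1 k t := by
  rw [mem_Ck_map]
  constructor
  · rintro ⟨j, h1, h2, he⟩
    obtain hs := spec_self h1
    rw [spec_cval hs, cast_pow4] at he
    exact ⟨j, _, _, h1, h2, hs, by omega⟩
  · rintro ⟨j, m, ℓ, h1, h2, hs, ht⟩
    refine ⟨j, h1, h2, ?_⟩
    rw [spec_cval hs, cast_pow4]
    omega

lemma mem0_iff {k t : ℕ} : (0 : ℤ) ∈ (Ck k).map (· + (t:ℤ)) ↔ E0 k t := by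
  rw [mem_Ck_map]
  constructor
  · rintro ⟨j, h1, h2, he⟩
    obtain hs := spec_self h1
    rw [spec_cval hs, cast_pow4] at he
    exact ⟨j, _, _, h1, h2, hs, by omega⟩
  · rintro ⟨j, m, ℓ, h1, h2, hs, ht⟩
    refine ⟨j, h1, h2, ?_⟩
    rw [spec_cval hs, cast_pow4]
    omega

-- exclusions
lemma EA_not_E0 {k t : ℕ} (h : EA k t) : ¬ E0 k t := by
  rintro ⟨j', m', ℓ', _, _, hs', ht'⟩
  obtain ⟨j, m, ℓ, _, _, hs, ht⟩ := h
  exact A_ne_B hs hs' 0 (by omega) (by omega)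

lemma EA_not_E1 {k t : ℕ} (h : EA k t) : ¬ E1 k t := by
  rintro ⟨j', m', ℓ', _, _, hs', ht'⟩
  obtain ⟨j, m, ℓ, _, _, hs, ht⟩ := h
  exact A_ne_B hs hs' 1 (by omega) (by omega)

lemma E0_not_E1 {k t : ℕ} (h : E0 k t) : ¬ E1 k t := by
  rintro ⟨j', m', ℓ', _, _, hs', ht'⟩
  obtain ⟨j, m, ℓ, _, _, hs, ht⟩ := h
  omega

lemma E0_ge {k t : ℕ} (h : E0 k t) : 4 ≤ t := by
  obtain ⟨j, m, ℓ, _, _, ⟨h1, _, _⟩, ht⟩ := h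
  have := pow4_pos m; omega

lemma E1_ge {k t : ℕ} (h : E1 k t) : 5 ≤ t := by
  obtain ⟨j, m, ℓ, _, _, ⟨h1, _, _⟩, ht⟩ := h
  have := pow4_pos m; omega

lemma EA_ge {k t : ℕ} (h : EA k t) : 3 ≤ t := by
  obtain ⟨j, m, ℓ, _, _, ⟨h1, _, _⟩, ht⟩ := h
  have := pow4_pos m; omega

lemma not_mem_small {k t : ℕ} {x : ℤ} (hx : -1 ≤ x) (ht : t ≤ 2) :
    x ∉ (Ck k).map (· + (t:ℤ)) := by
  intro h
  rw [mem_Ck_map] at h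
  obtain ⟨j, h1, _, he⟩ := h
  have := cval_le h1
  omega

lemma oneRepeat_t {k t : ℕ} (h1 : 1 ≤ t)
    (hex : t ≤ 2 ∨ EA k t ∨ E0 k t ∨ E1 k t) :
    OneRepeat (evolve3 [2] [1, 0] (Ck k) (t : ℤ)) := by
  rw [evolve_eq]
  have hnd := nodup_Lt k (t : ℤ)
  rcases hex with ht2 | hA | h0 | h1'
  · -- t = 1 or t = 2
    have ht12 : t = 1 ∨ t = 2 := by omega
    rcases ht12 with rfl | rfl
    · have e1 : (2 : ℤ) - ((1:ℕ):ℤ) = 1 := by norm_num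
      rw [e1]
      apply oneRepeat_cons List.mem_cons_self
      rw [List.nodup_cons, List.nodup_cons]
      refine ⟨?_, ?_, hnd⟩
      · simp only [List.mem_cons]
        push_neg
        exact ⟨by norm_num, not_mem_small (k := k) (t := 1) (by norm_num) (by norm_num)⟩
      · exact not_mem_small (k := k) (t := 1) (by norm_num) (by norm_num)
    · have e1 : (2 : ℤ) - ((2:ℕ):ℤ) = 0 := by norm_num
      rw [e1]
      refine oneRepeat_perm (List.Perm.cons 0 (List.Perm.swap 0 1 _)) ?_
      apply oneRepeat_cons List.mem_cons_self
      rw [List.nodup_cons, List.nodup_cons]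
      refine ⟨?_, ?_, hnd⟩
      · simp only [List.mem_cons]
        push_neg
        exact ⟨by norm_num, not_mem_small (k := k) (t := 2) (by norm_num) (by norm_num)⟩
      · exact not_mem_small (k := k) (t := 2) (by norm_num) (by norm_num)
  · -- A event: 2 - t ∈ L
    have hm : (2 : ℤ) - t ∈ (1 : ℤ) :: (0:ℤ) :: (Ck k).map (· + (t:ℤ)) :=
      List.mem_cons_of_mem _ (List.mem_cons_of_mem _ (memA_iff.2 hA))
    apply oneRepeat_cons hm
    rw [List.nodup_cons, List.nodup_cons]
    refine ⟨?_, ?_, hnd⟩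
    · simp only [List.mem_cons]
      push_neg
      exact ⟨by norm_num, fun h => EA_not_E1 hA (mem1_iff.1 h)⟩
    · exact fun h => EA_not_E0 hA (mem0_iff.1 h)
  · -- 0 event
    have ht4 := E0_ge h0
    have p1 : (((2:ℤ) - t) :: 1 :: 0 :: (Ck k).map (· + (t:ℤ))).Perm
        (((2:ℤ) - t) :: 0 :: 1 :: (Ck k).map (· + (t:ℤ))) :=
      List.Perm.cons _ (List.Perm.swap 0 1 _)
    have p2 : (((2:ℤ) - t) :: 0 :: 1 :: (Ck k).map (· + (t:ℤ))).Perm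
        ((0:ℤ) :: ((2:ℤ) - t) :: 1 :: (Ck k).map (· + (t:ℤ))) :=
      List.Perm.swap (0:ℤ) (2 - (t:ℤ)) _
    refine oneRepeat_perm (p1.trans p2) ?_
    have hm : (0 : ℤ) ∈ ((2:ℤ) - t) :: (1:ℤ) :: (Ck k).map (· + (t:ℤ)) :=
      List.mem_cons_of_mem _ (List.mem_cons_of_mem _ (mem0_iff.2 h0))
    apply oneRepeat_cons hm
    rw [List.nodup_cons, List.nodup_cons]
    refine ⟨?_, ?_, hnd⟩
    · simp only [List.mem_cons]
      push_neg
      exact ⟨by omega, fun h => EA_not_E0 (memA_iff.1 h) h0⟩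
    · exact fun h => E0_not_E1 h0 (mem1_iff.1 h)
  · -- 1 event
    have ht5 := E1_ge h1'
    have p1 : (((2:ℤ) - t) :: 1 :: 0 :: (Ck k).map (· + (t:ℤ))).Perm
        ((1:ℤ) :: ((2:ℤ) - t) :: 0 :: (Ck k).map (· + (t:ℤ))) :=
      List.Perm.swap (1:ℤ) (2 - (t:ℤ)) _
    refine oneRepeat_perm p1 ?_
    have hm : (1 : ℤ) ∈ ((2:ℤ) - t) :: (0:ℤ) :: (Ck k).map (· + (t:ℤ)) :=
      List.mem_cons_of_mem _ (List.mem_cons_of_mem _ (mem1_iff.2 h1'))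
    apply oneRepeat_cons hm
    rw [List.nodup_cons, List.nodup_cons]
    refine ⟨?_, ?_, hnd⟩
    · simp only [List.mem_cons]
      push_neg
      exact ⟨by omega, fun h => EA_not_E1 (memA_iff.1 h) h1'⟩
    · exact fun h => E0_not_E1 (mem0_iff.1 h) h1'

lemma nodup_t {k t : ℕ} (ht : 3 ≤ t) (hA : ¬ EA k t) (h0 : ¬ E0 k t) (h1 : ¬ E1 k t) :
    (evolve3 [2] [1, 0] (Ck k) (t : ℤ)).Nodup := by
  rw [evolve_eq]
  rw [List.nodup_cons, List.nodup_cons, List.nodup_cons]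
  refine ⟨?_, ?_, ?_, nodup_Lt k _⟩
  · simp only [List.mem_cons]
    push_neg
    refine ⟨by omega, by omega, fun h => hA (memA_iff.1 h)⟩
  · simp only [List.mem_cons]
    push_neg
    exact ⟨by norm_num, fun h => h1 (mem1_iff.1 h)⟩
  · exact fun h => h0 (mem0_iff.1 h)

lemma D_mono {a b : ℕ} (h : a ≤ b) : D a ≤ D b := by
  have := D_eq a; have := D_eq b; have := pow4_mono h; omega

lemma exists_event {M k t : ℕ} (hk : 3 * k + 1 = 4 ^ (M + 1)) (h3 : 3 ≤ t)
    (ht : t ≤ 3 * k + 2) : EA k t ∨ E0 k t ∨ E1 k t := by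
  set m := Nat.log 4 (t - 2) with hm
  have hp : 4 ^ m ≤ t - 2 := Nat.pow_log_le_self 4 (by omega)
  have hq : t - 2 < 4 ^ (m + 1) := Nat.lt_pow_succ_log_self (by norm_num) _
  have hmM : m ≤ M := by
    by_contra hc
    push_neg at hc
    have := pow4_mono (Nat.succ_le_of_lt hc)
    omega
  have hDk : k = D (M + 1) := by have := D_eq (M + 1); omega
  have hDm := D_eq m
  have hDm1 := D_eq (m + 1)
  have hps := pow4_succ m
  have hjle : D (m + 1) ≤ k := hDk ▸ D_mono (by omega)
  have hD1 : D (m + 1) = 4 * D m + 1 := rfl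
  rcases le_or_gt t (2 * 4 ^ m + 1) with hcase | hcase
  · -- A event
    refine Or.inl ⟨D m + (t - 1 - 4 ^ m), m, t - 1 - 4 ^ m, by omega, by omega, ⟨by omega, by omega, by omega⟩, by omega⟩
  · rcases Nat.even_or_odd t with ⟨s, hs⟩ | ⟨s, hs⟩
    · -- E0 with ℓ = s - 4^m
      refine Or.inr (Or.inl ⟨D m + (s - 4 ^ m), m, s - 4 ^ m, by omega, by omega, ⟨by omega, by omega, by omega⟩, by omega⟩)
    · -- E1 with ℓ = s - 4^m
      refine Or.inr (Or.inr ⟨D m + (s - 4 ^ m), m, s - 4 ^ m, by omega, by omega, ⟨by omega, by omega, by omega⟩, by omega⟩)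

lemma gap {k M ℓk : ℕ} (hk : 1 ≤ k) (hs : Spec k M ℓk) (hlt : ℓk < 4 ^ M) :
    ∃ t, 3 ≤ t ∧ t ≤ 3 * k + 2 ∧ ¬ EA k t ∧ ¬ E0 k t ∧ ¬ E1 k t := by
  obtain ⟨hk1, hk2, hk3⟩ := hs
  have hpM := pow4_pos M
  refine ⟨4 ^ M + ℓk + 2, by omega, by omega, ?_, ?_, ?_⟩
  · rintro ⟨j, m, ℓ, hj1, hj2, hsp, ht⟩
    have hm : m ≤ M := spec_mono hsp ⟨hk1, hk2, hk3⟩ hj2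
    obtain ⟨a1, a2, a3⟩ := hsp
    rcases eq_or_lt_of_le hm with rfl | hmm
    · omega
    · have := pow4_mono (Nat.succ_le_of_lt hmm); have := pow4_succ m; omega
  · rintro ⟨j, m, ℓ, hj1, hj2, hsp, ht⟩
    have hm : m ≤ M := spec_mono hsp ⟨hk1, hk2, hk3⟩ hj2
    obtain ⟨a1, a2, a3⟩ := hsp
    rcases eq_or_lt_of_le hm with rfl | hmm
    · omega
    · have := pow4_mono (Nat.succ_le_of_lt hmm); have := pow4_succ m; omega
  · rintro ⟨j, m, ℓ, hj1, hj2, hsp, ht⟩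
    have hm : m ≤ M := spec_mono hsp ⟨hk1, hk2, hk3⟩ hj2
    obtain ⟨a1, a2, a3⟩ := hsp
    rcases eq_or_lt_of_le hm with rfl | hmm
    · omega
    · have := pow4_mono (Nat.succ_le_of_lt hmm); have := pow4_succ m; omega

lemma strictDec_zero (k : ℕ) : StrictDec (evolve3 [2] [1, 0] (Ck k) 0) := by
  rw [evolve_eq]
  unfold StrictDec
  rw [List.Chain', List.isChain_iff_pairwise]
  have hmem : ∀ x ∈ (Ck k).map (· + (0:ℤ)), x ≤ -4 := by
    intro x hx
    rw [mem_Ck_map] at hx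
    obtain ⟨j, h1, _, he⟩ := hx
    have := cval_le h1
    omega
  refine List.Pairwise.cons ?_ (List.Pairwise.cons ?_ (List.Pairwise.cons ?_ ?_))
  · intro b hb
    simp only [List.mem_cons] at hb
    rcases hb with rfl | rfl | hb
    · norm_num
    · norm_num
    · have := hmem b hb; omega
  · intro b hb
    simp only [List.mem_cons] at hb
    rcases hb with rfl | hb
    · norm_num
    · have := hmem b hb; omega
  · intro b hb
    have := hmem b hb; omega
  · rw [Ck, List.map_map]
    rw [List.pairwise_map]
    refine (List.pairwise_lt_range (n := k)) |>.imp ?_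
    intro a b hab
    simp only [Function.comp]
    have := cval_strictAnti (show 1 ≤ a + 1 by omega) (show a + 1 < b + 1 by omega)
    omega


end S13

/-- The partition `(2 | 1, 0 | C_k)` obtained by greedily adding `k` `c`-entries is Ulrich
if and only if `k = (4^(m+1) - 1)/3` for some `m ≥ 0`. -/
theorem stmt13 (k : ℕ) (hk : 1 ≤ k) :
    IsUlrich3 [2] [1, 0] (Ck k) ↔ ∃ m : ℕ, 3 * k = 4 ^ (m + 1) - 1 := by
  constructor
  · rintro ⟨-, -, -, hall⟩
    by_contra hc
    push_neg at hc
    -- k is not full: get Spec k M ℓk with ℓk < 4^M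
    obtain hs := S13.spec_self hk
    set M := Nat.log 4 (3 * k) with hM
    set ℓk := k - S13.D M with hℓ
    have hlt : ℓk < 4 ^ M := by
      rcases Nat.lt_or_ge ℓk (4 ^ M) with h | h
      · exact h
      · exfalso
        obtain ⟨a1, a2, a3⟩ := hs
        have heq : ℓk = 4 ^ M := by omega
        have : 3 * k = 4 ^ (M + 1) - 1 := by
          have := S13.pow4_succ M; omega
        exact hc M this
    obtain ⟨t, ht3, htle, hA, h0, h1⟩ := S13.gap hk hs hlt
    have := hall t (by omega) (by rw [S13.dim_eq]; omega)
    exact S13.not_oneRepeat_of_nodup (S13.nodup_t ht3 hA h0 h1) this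
  · rintro ⟨M, hM⟩
    have hpos : 1 ≤ (4:ℕ) ^ (M + 1) := S13.pow4_pos _
    have hk1 : 3 * k + 1 = 4 ^ (M + 1) := by omega
    refine ⟨by simp, ?_, S13.strictDec_zero k, ?_⟩
    · simp [Ck]
      omega
    · intro t ht1 ht2
      rw [S13.dim_eq] at ht2
      rcases Nat.lt_or_ge t 3 with h | h
      · exact S13.oneRepeat_t ht1 (Or.inl (by omega))
      · exact S13.oneRepeat_t ht1 (Or.inr (S13.exists_event hk1 h ht2))
end

section
/- For every m ≥ 0 with k = (4^{m+1}-1)/3, the Ulrich partition (2 | 1, 0 | C_k) of type (1,2,k) has dimension 4^{m+1} + 1, and its set of intersection times is exactly {1, 2, ..., 4^{m+1}+1}. -/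
/- ---------------- auxiliary lemmas ---------------- -/

lemma three_dvd_pow_sub_one (b : ℕ) : 4 ^ b % 3 = 1 := by
  induction b with
  | zero => rfl
  | succ n ih => rw [pow_succ, Nat.mul_mod, ih]

lemma three_mul_sB (b : ℕ) : 3 * ((4 ^ b - 1) / 3) = 4 ^ b - 1 := by
  have h := three_dvd_pow_sub_one b
  have h1 : 1 ≤ 4 ^ b := Nat.one_le_pow _ _ (by norm_num)
  omega

lemma nodup_iff_card (l : List ℤ) : l.Nodup ↔ l.toFinset.card = l.length :=
  ⟨List.toFinset_card_of_nodup, fun h => Multiset.toFinset_card_eq_card_iff_nodup.mp h⟩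

lemma cval_block (b r : ℕ) (hr1 : 1 ≤ r) (hr2 : r ≤ 4 ^ b) :
    cval ((4 ^ b - 1) / 3 + r) = -(2 * 4 ^ b) - 2 * r := by
  set s := (4 ^ b - 1) / 3 with hs
  have h3s : 3 * s = 4 ^ b - 1 := three_mul_sB b
  have h1 : 1 ≤ 4 ^ b := Nat.one_le_pow _ _ (by norm_num)
  have h3j : 3 * (s + r) = 4 ^ b - 1 + 3 * r := by omega
  have hlog : Nat.log 4 (3 * (s + r)) = b := by
    apply Nat.log_eq_of_pow_le_of_lt_pow
    · omega
    · have : (4:ℕ) ^ (b+1) = 4 * 4 ^ b := by ring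
      omega
  unfold cval
  rw [hlog]
  have hsub : s + r - (4 ^ b - 1) / 3 = r := by omega
  rw [hsub]
  push_cast
  ring

/-- decomposition of any `j ≥ 1` into block `b` and offset `r`. -/
lemma cval_decomp (j : ℕ) (hj : 1 ≤ j) :
    ∃ b r : ℕ, 1 ≤ r ∧ r ≤ 4 ^ b ∧ j = (4 ^ b - 1) / 3 + r ∧
      cval j = -(2 * 4 ^ b) - 2 * r := by
  set b := Nat.log 4 (3 * j) with hb
  have hle : 4 ^ b ≤ 3 * j := Nat.pow_log_le_self 4 (by omega)
  have hlt : 3 * j < 4 ^ (b + 1) := Nat.lt_pow_succ_log_self (by norm_num) _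
  have h3s : 3 * ((4 ^ b - 1) / 3) = 4 ^ b - 1 := three_mul_sB b
  have h1 : 1 ≤ 4 ^ b := Nat.one_le_pow _ _ (by norm_num)
  have hp : (4:ℕ) ^ (b+1) = 4 * 4 ^ b := by ring
  refine ⟨b, j - (4 ^ b - 1) / 3, by omega, by omega, by omega, ?_⟩
  have := cval_block b (j - (4 ^ b - 1) / 3) (by omega) (by omega)
  rw [show (4 ^ b - 1) / 3 + (j - (4 ^ b - 1) / 3) = j by omega] at this
  exact this

lemma mem_Ck {m k : ℕ} (hk : 3 * k = 4 ^ (m + 1) - 1) (v : ℤ) :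
    v ∈ Ck k ↔ ∃ b r : ℕ, b ≤ m ∧ 1 ≤ r ∧ r ≤ 4 ^ b ∧ v = -(2 * 4 ^ b) - 2 * r := by
  have h1 : 1 ≤ 4 ^ (m+1) := Nat.one_le_pow _ _ (by norm_num)
  constructor
  · rintro hv
    simp only [Ck, List.mem_map, List.mem_range] at hv
    obtain ⟨i, hi, rfl⟩ := hv
    obtain ⟨b, r, hr1, hr2, hjd, hcv⟩ := cval_decomp (i + 1) (by omega)
    refine ⟨b, r, ?_, hr1, hr2, hcv⟩
    -- b ≤ m since 4^b ≤ 3*(i+1) ≤ 3k < 4^(m+1)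
    have h3s : 3 * ((4 ^ b - 1) / 3) = 4 ^ b - 1 := three_mul_sB b
    have hb1 : 1 ≤ 4 ^ b := Nat.one_le_pow _ _ (by norm_num)
    have hle : 4 ^ b ≤ 3 * (i + 1) := by omega
    have hlt : 4 ^ b < 4 ^ (m + 1) := by omega
    have := (Nat.pow_lt_pow_iff_right (a := 4) (by norm_num)).mp hlt
    omega
  · rintro ⟨b, r, hbm, hr1, hr2, rfl⟩
    have hcb := cval_block b r hr1 hr2
    have h3s : 3 * ((4 ^ b - 1) / 3) = 4 ^ b - 1 := three_mul_sB b
    have hb1 : 1 ≤ 4 ^ b := Nat.one_le_pow _ _ (by norm_num)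
    have hjk : (4 ^ b - 1) / 3 + r ≤ k := by
      have hmono : (4:ℕ) ^ (b+1) ≤ 4 ^ (m+1) := Nat.pow_le_pow_right (by norm_num) (by omega)
      have hp : (4:ℕ) ^ (b+1) = 4 * 4 ^ b := by ring
      omega
    simp only [Ck, List.mem_map, List.mem_range]
    exact ⟨(4 ^ b - 1) / 3 + r - 1, by omega,
      by rw [show (4 ^ b - 1) / 3 + r - 1 + 1 = (4 ^ b - 1) / 3 + r by omega]; exact hcb⟩

lemma cval_anti {j j' : ℕ} (hj : 1 ≤ j) (hjj : j < j') : cval j' < cval j := by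
  obtain ⟨b, r, hr1, hr2, hjd, hcv⟩ := cval_decomp j hj
  obtain ⟨b', r', hr1', hr2', hjd', hcv'⟩ := cval_decomp j' (by omega)
  rw [hcv, hcv']
  have h3s : 3 * ((4 ^ b - 1) / 3) = 4 ^ b - 1 := three_mul_sB b
  have h3s' : 3 * ((4 ^ b' - 1) / 3) = 4 ^ b' - 1 := three_mul_sB b'
  have hb1 : 1 ≤ 4 ^ b := Nat.one_le_pow _ _ (by norm_num)
  have hb1' : 1 ≤ 4 ^ b' := Nat.one_le_pow _ _ (by norm_num)
  rcases lt_trichotomy b b' with h | h | h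
  · -- cval j ≥ -4^(b+1) ≥ -4^b' > cval j'
    have h4 : (4:ℤ) ^ (b+1) ≤ 4 ^ b' := pow_le_pow_right₀ (by norm_num) (by omega)
    have hp : (4:ℤ) ^ (b+1) = 4 * 4 ^ b := by ring
    have hrc : (r:ℤ) ≤ 4 ^ b := by exact_mod_cast hr2
    have hrc' : (1:ℤ) ≤ r' := by exact_mod_cast hr1'
    nlinarith [ (by positivity : (0:ℤ) < 4 ^ b') ]
  · subst h
    have : r < r' := by omega
    have : (r:ℤ) < r' := by exact_mod_cast this
    linarith
  · -- b' < b contradicts j < j'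
    exfalso
    have hmono : (4:ℕ) ^ (b'+1) ≤ 4 ^ b := Nat.pow_le_pow_right (by norm_num) (by omega)
    have hp : (4:ℕ) ^ (b'+1) = 4 * 4 ^ b' := by ring
    omega

lemma Ck_pairwise (k : ℕ) : (Ck k).Pairwise (· > ·) := by
  unfold Ck
  rw [List.pairwise_map]
  exact (List.pairwise_lt_range : (List.range k).Pairwise (· < ·)).imp (fun {i j} h => cval_anti (by omega) (by omega))

lemma Ck_nodup (k : ℕ) : (Ck k).Nodup := (Ck_pairwise k).imp ne_of_gt

lemma Ck_length (k : ℕ) : (Ck k).length = k := by simp [Ck]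

lemma Ck_neg {m k : ℕ} (hk : 3 * k = 4 ^ (m + 1) - 1) {v : ℤ} (hv : v ∈ Ck k) : v < 0 := by
  obtain ⟨b, r, _, hr1, _, rfl⟩ := (mem_Ck hk v).mp hv
  have : (0:ℤ) < 4 ^ b := by positivity
  have : (1:ℤ) ≤ r := by exact_mod_cast hr1
  linarith

/- ---------------- time classification ---------------- -/

def T2c (m t : ℕ) : Prop := ∃ b r : ℕ, b ≤ m ∧ 1 ≤ r ∧ r ≤ 4 ^ b ∧ t = 4 ^ b + r + 1
def T0c (m t : ℕ) : Prop := ∃ b r : ℕ, b ≤ m ∧ 1 ≤ r ∧ r ≤ 4 ^ b ∧ t = 2 * 4 ^ b + 2 * r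
def T1c (m t : ℕ) : Prop := ∃ b r : ℕ, b ≤ m ∧ 1 ≤ r ∧ r ≤ 4 ^ b ∧ t = 2 * 4 ^ b + 2 * r + 1

lemma T2c_bounds {m t : ℕ} (h : T2c m t) : 3 ≤ t ∧ t ≤ 2 * 4 ^ m + 1 := by
  obtain ⟨b, r, hbm, hr1, hr2, rfl⟩ := h
  have hb1 : 1 ≤ 4 ^ b := Nat.one_le_pow _ _ (by norm_num)
  have : (4:ℕ) ^ b ≤ 4 ^ m := Nat.pow_le_pow_right (by norm_num) hbm
  omega

lemma T0c_bounds {m t : ℕ} (h : T0c m t) : 4 ≤ t ∧ t ≤ 4 ^ (m + 1) ∧ t % 2 = 0 := by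
  obtain ⟨b, r, hbm, hr1, hr2, rfl⟩ := h
  have hb1 : 1 ≤ 4 ^ b := Nat.one_le_pow _ _ (by norm_num)
  have : (4:ℕ) ^ b ≤ 4 ^ m := Nat.pow_le_pow_right (by norm_num) hbm
  have : (4:ℕ) ^ (m+1) = 4 * 4 ^ m := by ring
  omega

lemma T1c_bounds {m t : ℕ} (h : T1c m t) : 5 ≤ t ∧ t ≤ 4 ^ (m + 1) + 1 ∧ t % 2 = 1 := by
  obtain ⟨b, r, hbm, hr1, hr2, rfl⟩ := h
  have hb1 : 1 ≤ 4 ^ b := Nat.one_le_pow _ _ (by norm_num)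
  have : (4:ℕ) ^ b ≤ 4 ^ m := Nat.pow_le_pow_right (by norm_num) hbm
  have : (4:ℕ) ^ (m+1) = 4 * 4 ^ m := by ring
  omega

lemma not_T2c_T0c {m t : ℕ} (h : T2c m t) (h' : T0c m t) : False := by
  obtain ⟨b, r, hbm, hr1, hr2, he⟩ := h
  obtain ⟨b', r', hbm', hr1', hr2', he'⟩ := h'
  rcases le_or_gt b b' with hbb | hbb
  · have : (4:ℕ) ^ b ≤ 4 ^ b' := Nat.pow_le_pow_right (by norm_num) hbb
    omega
  · have h4 : (4:ℕ) ^ (b'+1) ≤ 4 ^ b := Nat.pow_le_pow_right (by norm_num) (by omega)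
    have : (4:ℕ) ^ (b'+1) = 4 * 4 ^ b' := by ring
    have hb1 : 1 ≤ 4 ^ b' := Nat.one_le_pow _ _ (by norm_num)
    omega

lemma not_T2c_T1c {m t : ℕ} (h : T2c m t) (h' : T1c m t) : False := by
  obtain ⟨b, r, hbm, hr1, hr2, he⟩ := h
  obtain ⟨b', r', hbm', hr1', hr2', he'⟩ := h'
  rcases le_or_gt b b' with hbb | hbb
  · have : (4:ℕ) ^ b ≤ 4 ^ b' := Nat.pow_le_pow_right (by norm_num) hbb
    omega
  · have h4 : (4:ℕ) ^ (b'+1) ≤ 4 ^ b := Nat.pow_le_pow_right (by norm_num) (by omega)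
    have : (4:ℕ) ^ (b'+1) = 4 * 4 ^ b' := by ring
    have hb1 : 1 ≤ 4 ^ b' := Nat.one_le_pow _ _ (by norm_num)
    omega

lemma not_T0c_T1c {m t : ℕ} (h : T0c m t) (h' : T1c m t) : False := by
  have := T0c_bounds h
  have := T1c_bounds h'
  omega

lemma cover {m t : ℕ} (h3 : 3 ≤ t) (hN : t ≤ 4 ^ (m + 1) + 1) :
    T2c m t ∨ T0c m t ∨ T1c m t := by
  set b := Nat.log 4 (t - 2) with hb
  have hle : 4 ^ b ≤ t - 2 := Nat.pow_log_le_self 4 (by omega)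
  have hlt : t - 2 < 4 ^ (b + 1) := Nat.lt_pow_succ_log_self (by norm_num) _
  have hbm : b ≤ m := by
    have h4 : 4 ^ b < 4 ^ (m + 1) := by omega
    have := (Nat.pow_lt_pow_iff_right (a := 4) (by norm_num)).mp h4
    omega
  have hp : (4:ℕ) ^ (b+1) = 4 * 4 ^ b := by ring
  have hb1 : 1 ≤ 4 ^ b := Nat.one_le_pow _ _ (by norm_num)
  rcases le_or_gt t (2 * 4 ^ b + 1) with hc | hc
  · exact Or.inl ⟨b, t - 4 ^ b - 1, hbm, by omega, by omega, by omega⟩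
  · rcases Nat.even_or_odd t with he | he
    · obtain ⟨u, hu⟩ := he
      exact Or.inr <| Or.inl ⟨b, u - 4 ^ b, hbm, by omega, by omega, by omega⟩
    · obtain ⟨u, hu⟩ := he
      exact Or.inr <| Or.inr ⟨b, u - 4 ^ b, hbm, by omega, by omega, by omega⟩

/- ---------------- card helpers ---------------- -/

lemma card_case_a {F : Finset ℤ} {a : ℤ} (h1F : (1:ℤ) ∉ F) (h0F : (0:ℤ) ∉ F)
    (ha : a ∈ insert (1:ℤ) (insert 0 F)) :
    (insert a (insert (1:ℤ) (insert 0 F))).card = F.card + 2 := by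
  rw [Finset.insert_eq_self.2 ha, Finset.card_insert_of_notMem (by simp [h1F]),
    Finset.card_insert_of_notMem h0F]

lemma card_case_0 {F : Finset ℤ} {a : ℤ} (h1F : (1:ℤ) ∉ F) (h0F : (0:ℤ) ∈ F)
    (ha1 : a ≠ 1) (ha0 : a ≠ 0) (haF : a ∉ F) :
    (insert a (insert (1:ℤ) (insert 0 F))).card = F.card + 2 := by
  rw [Finset.insert_eq_self.2 h0F, Finset.card_insert_of_notMem (by simp [ha1, h1F, haF]),
    Finset.card_insert_of_notMem h1F]

lemma card_case_1 {F : Finset ℤ} {a : ℤ} (h1F : (1:ℤ) ∈ F) (h0F : (0:ℤ) ∉ F)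
    (ha1 : a ≠ 1) (ha0 : a ≠ 0) (haF : a ∉ F) :
    (insert a (insert (1:ℤ) (insert 0 F))).card = F.card + 2 := by
  have h1' : (1:ℤ) ∈ insert (0:ℤ) F := by simp [h1F]
  rw [Finset.insert_eq_self.2 h1', Finset.card_insert_of_notMem (by simp [ha0, haF]),
    Finset.card_insert_of_notMem h0F]

lemma card_case_none {F : Finset ℤ} {a : ℤ} (h1F : (1:ℤ) ∉ F) (h0F : (0:ℤ) ∉ F)
    (ha1 : a ≠ 1) (ha0 : a ≠ 0) (haF : a ∉ F) :
    (insert a (insert (1:ℤ) (insert 0 F))).card = F.card + 3 := by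
  rw [Finset.card_insert_of_notMem (by simp [ha1, ha0, haF]),
    Finset.card_insert_of_notMem (by simp [h1F]),
    Finset.card_insert_of_notMem h0F]

/- ---------------- the evolved list ---------------- -/

lemma evolve_eq (C : List ℤ) (t : ℤ) :
    evolve3 [2] [1, 0] C t = (2 - t) :: 1 :: 0 :: C.map (· + t) := by
  simp [evolve3]

section main
variable {m k : ℕ} (hk : 3 * k = 4 ^ (m + 1) - 1) (t : ℕ)

lemma mem_shift_zero (hk : 3 * k = 4 ^ (m + 1) - 1) (t : ℕ) :
    (0:ℤ) ∈ (Ck k).map (· + (t:ℤ)) ↔ T0c m t := by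
  simp only [List.mem_map]
  constructor
  · rintro ⟨v, hv, he⟩
    obtain ⟨b, r, hbm, hr1, hr2, rfl⟩ := (mem_Ck hk v).mp hv
    refine ⟨b, r, hbm, hr1, hr2, ?_⟩
    have : (t:ℤ) = 2 * 4 ^ b + 2 * r := by linarith [he]
    exact_mod_cast this
  · rintro ⟨b, r, hbm, hr1, hr2, he⟩
    refine ⟨-(2 * 4 ^ b) - 2 * r, (mem_Ck hk _).mpr ⟨b, r, hbm, hr1, hr2, rfl⟩, ?_⟩
    have : (t:ℤ) = 2 * 4 ^ b + 2 * r := by exact_mod_cast he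
    linarith

lemma mem_shift_one (hk : 3 * k = 4 ^ (m + 1) - 1) (t : ℕ) :
    (1:ℤ) ∈ (Ck k).map (· + (t:ℤ)) ↔ T1c m t := by
  simp only [List.mem_map]
  constructor
  · rintro ⟨v, hv, he⟩
    obtain ⟨b, r, hbm, hr1, hr2, rfl⟩ := (mem_Ck hk v).mp hv
    refine ⟨b, r, hbm, hr1, hr2, ?_⟩
    have : (t:ℤ) = 2 * 4 ^ b + 2 * r + 1 := by linarith [he]
    exact_mod_cast this
  · rintro ⟨b, r, hbm, hr1, hr2, he⟩
    refine ⟨-(2 * 4 ^ b) - 2 * r, (mem_Ck hk _).mpr ⟨b, r, hbm, hr1, hr2, rfl⟩, ?_⟩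
    have : (t:ℤ) = 2 * 4 ^ b + 2 * r + 1 := by exact_mod_cast he
    linarith

lemma mem_shift_two (hk : 3 * k = 4 ^ (m + 1) - 1) (t : ℕ) :
    (2 - (t:ℤ)) ∈ (Ck k).map (· + (t:ℤ)) ↔ T2c m t := by
  simp only [List.mem_map]
  constructor
  · rintro ⟨v, hv, he⟩
    obtain ⟨b, r, hbm, hr1, hr2, rfl⟩ := (mem_Ck hk v).mp hv
    refine ⟨b, r, hbm, hr1, hr2, ?_⟩
    have : (t:ℤ) = 4 ^ b + r + 1 := by linarith [he]
    exact_mod_cast this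
  · rintro ⟨b, r, hbm, hr1, hr2, he⟩
    refine ⟨-(2 * 4 ^ b) - 2 * r, (mem_Ck hk _).mpr ⟨b, r, hbm, hr1, hr2, rfl⟩, ?_⟩
    have : (t:ℤ) = 4 ^ b + r + 1 := by exact_mod_cast he
    linarith

end main

/-- Main card computation. -/
lemma card_main {m k : ℕ} (hk : 3 * k = 4 ^ (m + 1) - 1) (t : ℕ) (ht : 1 ≤ t) :
    (evolve3 [2] [1, 0] (Ck k) (t:ℤ)).toFinset.card
      = if t ≤ 4 ^ (m + 1) + 1 then k + 2 else k + 3 := by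
  have hFcard : ((Ck k).map (· + (t:ℤ))).toFinset.card = k := by
    rw [List.toFinset_card_of_nodup]
    · simp [Ck]
    · exact (Ck_nodup k).map (fun a b h => by linarith [h] )
  rw [evolve_eq]
  simp only [List.toFinset_cons]
  set F := ((Ck k).map (· + (t:ℤ))).toFinset with hF
  have hmem0 : (0:ℤ) ∈ F ↔ T0c m t := by
    rw [hF, List.mem_toFinset]; exact mem_shift_zero hk t
  have hmem1 : (1:ℤ) ∈ F ↔ T1c m t := by
    rw [hF, List.mem_toFinset]; exact mem_shift_one hk t
  have hmem2 : (2 - (t:ℤ)) ∈ F ↔ T2c m t := by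
    rw [hF, List.mem_toFinset]; exact mem_shift_two hk t
  by_cases hN : t ≤ 4 ^ (m + 1) + 1
  · rw [if_pos hN]
    rcases eq_or_lt_of_le ht with h1 | h1
    · -- t = 1
      have ht1 : t = 1 := h1.symm
      subst ht1
      have h0F : (0:ℤ) ∉ F := fun h => by have := T0c_bounds (hmem0.mp h); omega
      have h1F : (1:ℤ) ∉ F := fun h => by have := T1c_bounds (hmem1.mp h); omega
      rw [card_case_a h1F h0F (by norm_num), hFcard]
    rcases eq_or_lt_of_le (show 2 ≤ t from h1) with h2 | h2
    · -- t = 2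
      have ht2 : t = 2 := h2.symm
      subst ht2
      have h0F : (0:ℤ) ∉ F := fun h => by have := T0c_bounds (hmem0.mp h); omega
      have h1F : (1:ℤ) ∉ F := fun h => by have := T1c_bounds (hmem1.mp h); omega
      rw [card_case_a h1F h0F (by norm_num), hFcard]
    · -- t ≥ 3
      have h3 : 3 ≤ t := h2
      have ht2Z : (2:ℤ) - t ≠ 1 := by
        have : (3:ℤ) ≤ t := by exact_mod_cast h3
        omega
      have ht0Z : (2:ℤ) - t ≠ 0 := by
        have : (3:ℤ) ≤ t := by exact_mod_cast h3
        omega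
      rcases cover h3 hN with hc | hc | hc
      · have h0F : (0:ℤ) ∉ F := fun h => not_T2c_T0c hc (hmem0.mp h)
        have h1F : (1:ℤ) ∉ F := fun h => not_T2c_T1c hc (hmem1.mp h)
        have h2F : (2 - (t:ℤ)) ∈ F := hmem2.mpr hc
        rw [card_case_a h1F h0F (by simp [h2F]), hFcard]
      · have h0F : (0:ℤ) ∈ F := hmem0.mpr hc
        have h1F : (1:ℤ) ∉ F := fun h => not_T0c_T1c hc (hmem1.mp h)
        have h2F : (2 - (t:ℤ)) ∉ F := fun h => not_T2c_T0c (hmem2.mp h) hc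
        rw [card_case_0 h1F h0F ht2Z ht0Z h2F, hFcard]
      · have h1F : (1:ℤ) ∈ F := hmem1.mpr hc
        have h0F : (0:ℤ) ∉ F := fun h => not_T0c_T1c (hmem0.mp h) hc
        have h2F : (2 - (t:ℤ)) ∉ F := fun h => not_T2c_T1c (hmem2.mp h) hc
        rw [card_case_1 h1F h0F ht2Z ht0Z h2F, hFcard]
  · rw [if_neg hN]
    push_neg at hN
    have h0F : (0:ℤ) ∉ F := fun h => by have := T0c_bounds (hmem0.mp h); omega
    have h1F : (1:ℤ) ∉ F := fun h => by have := T1c_bounds (hmem1.mp h); omega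
    have h2F : (2 - (t:ℤ)) ∉ F := fun h => by have := T2c_bounds (hmem2.mp h); omega
    have h1p : 1 ≤ 4 ^ (m+1) := Nat.one_le_pow _ _ (by norm_num)
    have ht4 : 4 ≤ t := by omega
    have htZ : (4:ℤ) ≤ t := by exact_mod_cast ht4
    rw [card_case_none h1F h0F (by omega) (by omega) h2F, hFcard]

lemma evolve_length {k : ℕ} (t : ℤ) :
    (evolve3 [2] [1, 0] (Ck k) t).length = k + 3 := by
  rw [evolve_eq]
  simp [Ck]

/-- For `k = (4^(m+1) - 1)/3`, the Ulrich partition `(2 | 1, 0 | C_k)` of type `(1, 2, k)` has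
dimension `4^(m+1) + 1`, and its set of intersection times is exactly `{1, ..., 4^(m+1)+1}`. -/
theorem stmt14 (m k : ℕ) (hk : 3 * k = 4 ^ (m + 1) - 1) :
    dim3 [2] [1, 0] (Ck k) = 4 ^ (m + 1) + 1 ∧
    IsUlrich3 [2] [1, 0] (Ck k) ∧
    ∀ t : ℕ, 1 ≤ t →
      (¬ (evolve3 [2] [1, 0] (Ck k) (t : ℤ)).Nodup ↔ t ≤ 4 ^ (m + 1) + 1) := by
  have h1 : 1 ≤ 4 ^ (m+1) := Nat.one_le_pow _ _ (by norm_num)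
  have h4 : 4 ≤ 4 ^ (m+1) := by
    calc (4:ℕ) = 4 ^ 1 := (pow_one 4).symm
    _ ≤ 4 ^ (m+1) := Nat.pow_le_pow_right (by norm_num) (by omega)
  have hdim : dim3 [2] [1, 0] (Ck k) = 4 ^ (m + 1) + 1 := by
    simp only [dim3, List.length_cons, List.length_nil, Ck_length]
    omega
  refine ⟨hdim, ⟨by simp, ?_, ?_, ?_⟩, ?_⟩
  · -- Ck k ≠ []
    intro h
    have := Ck_length k
    rw [h] at this
    simp at this
    omega
  · -- StrictDec
    unfold StrictDec
    have : evolve3 [2] [1, 0] (Ck k) 0 = 2 :: 1 :: 0 :: Ck k := by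
      simp [evolve3]
    rw [this]
    apply List.Pairwise.isChain
    have hneg : ∀ v ∈ Ck k, v < 0 := fun v hv => Ck_neg hk hv
    refine List.pairwise_cons.mpr ⟨?_, List.pairwise_cons.mpr ⟨?_, List.pairwise_cons.mpr
      ⟨fun v hv => hneg v hv, Ck_pairwise k⟩⟩⟩
    · intro v hv
      simp only [List.mem_cons] at hv
      rcases hv with h | h | h
      · norm_num [h]
      · norm_num [h]
      · have := hneg v h; linarith
    · intro v hv
      simp only [List.mem_cons] at hv
      rcases hv with h | h
      · norm_num [h]
      · have := hneg v h; linarith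
  · -- OneRepeat
    intro t ht htN
    rw [hdim] at htN
    unfold OneRepeat
    rw [card_main hk t ht, if_pos htN, evolve_length]
  · -- Nodup iff
    intro t ht
    rw [nodup_iff_card, card_main hk t ht, evolve_length]
    split_ifs with hN <;> omega
end
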